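/- arXiv:1401.4634 — 11 statements merged into one kernel-verified Lean document; each statement's English description precedes it below -/
import Mathlib

section
/- For the end-replication system S^end_k = (Σ, s, T^end_k) with |s| ≥ k ≥ 1, every string in the system has the same alpha-representation as s; consequently cap(S^end_k) ≤ log₂ δ(s). -/
open Filter

noncomputable def cap {A : Type*} (S : Set (List A)) : ℝ :=
  Filter.limsup
    (fun n : ℕ => Real.logb 2 (({x ∈ S | x.length = n} : Set (List A)).ncard) / n)
    Filter.atTop

def Sys {A : Type*} (step : List A → List A → Prop) (s : List A) : Set (List A) :=
  {y | Relation.ReflTransGen step s y}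

def EndStep {A : Type*} (k : ℕ) (x y : List A) : Prop :=
  ∃ u v w : List A, v.length = k ∧ x = u ++ v ++ w ∧ y = u ++ v ++ w ++ v

theorem stmt0 {A : Type*} [Fintype A] [DecidableEq A] (k : ℕ) (hk : 1 ≤ k)
    (s : List A) (hs : k ≤ s.length) :
    (∀ x ∈ Sys (EndStep k) s, x.toFinset = s.toFinset) ∧
      cap (Sys (EndStep k) s) ≤ Real.logb 2 (s.toFinset.card) := by
  have hpart1 : ∀ x ∈ Sys (EndStep k) s, x.toFinset = s.toFinset := by
    intro x hx
    induction hx with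
    | refl => rfl
    | tail hab hstep ih =>
      obtain ⟨u, v, w, hv, hb, hc⟩ := hstep
      subst hb; subst hc
      simp only [List.toFinset_append] at ih ⊢
      rw [← ih]
      ext a; simp; tauto
  refine ⟨hpart1, ?_⟩
  set δ : ℕ := s.toFinset.card with hδ
  have hsne : s ≠ [] := by
    intro h; subst h; simp at hs; omega
  have hδ1 : 1 ≤ δ := by
    refine Finset.card_pos.mpr ⟨s.head hsne, ?_⟩
    simpa using List.head_mem hsne
  have hlogδ : 0 ≤ Real.logb 2 δ :=
    Real.logb_nonneg (by norm_num) (by exact_mod_cast hδ1)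
  -- counting bound
  have hcount : ∀ n : ℕ,
      ({x ∈ Sys (EndStep k) s | x.length = n} : Set (List A)).ncard ≤ δ ^ n := by
    intro n
    set T : Set (List A) := {x ∈ Sys (EndStep k) s | x.length = n} with hT
    have hmemT : ∀ x : T, ∀ i : Fin n, (x : List A).get (Fin.cast x.2.2.symm i)
        ∈ s.toFinset := by
      intro x i
      rw [← hpart1 _ x.2.1, List.mem_toFinset]
      exact List.get_mem _ _
    let f : T → (Fin n → (s.toFinset : Finset A)) := fun x i =>
      ⟨(x : List A).get (Fin.cast x.2.2.symm i), hmemT x i⟩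
    have hf : Function.Injective f := by
      intro x y hxy
      apply Subtype.ext
      apply List.ext_get (by rw [x.2.2, y.2.2])
      intro i h1 h2
      have := congrFun hxy ⟨i, by rw [← x.2.2]; exact h1⟩
      simpa [f, Fin.cast] using congrArg Subtype.val this
    calc T.ncard = Nat.card T := rfl
      _ ≤ Nat.card (Fin n → (s.toFinset : Finset A)) :=
          Nat.card_le_card_of_injective f hf
      _ = δ ^ n := by
          rw [Nat.card_eq_fintype_card, Fintype.card_fun, Fintype.card_coe,
            Fintype.card_fin]
  -- pointwise bound
  have hbound : ∀ n : ℕ,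
      Real.logb 2 (({x ∈ Sys (EndStep k) s | x.length = n} : Set (List A)).ncard) / n
        ≤ Real.logb 2 δ := by
    intro n
    rcases Nat.eq_zero_or_pos n with rfl | hn
    · simp [hlogδ]
    set N : ℕ := ({x ∈ Sys (EndStep k) s | x.length = n} : Set (List A)).ncard with hN
    have hnum : Real.logb 2 N ≤ n * Real.logb 2 δ := by
      rcases Nat.eq_zero_or_pos N with h0 | hNpos
      · rw [h0]; simp; positivity
      · calc Real.logb 2 N ≤ Real.logb 2 ((δ : ℝ) ^ n) := by
              apply Real.logb_le_logb_of_le (by norm_num) (by exact_mod_cast hNpos)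
              exact_mod_cast hcount n
          _ = n * Real.logb 2 δ := Real.logb_pow 2 _ n
    rw [div_le_iff₀ (by exact_mod_cast hn)]
    linarith [hnum]
  have hnonneg : ∀ n : ℕ, (0 : ℝ) ≤
      Real.logb 2 (({x ∈ Sys (EndStep k) s | x.length = n} : Set (List A)).ncard) / n := by
    intro n
    apply div_nonneg _ (by positivity)
    set N : ℕ := ({x ∈ Sys (EndStep k) s | x.length = n} : Set (List A)).ncard
    rcases Nat.eq_zero_or_pos N with h0 | hNpos
    · rw [h0]; simp
    · exact Real.logb_nonneg (by norm_num) (by exact_mod_cast hNpos)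
  exact Filter.limsup_le_of_le
    (Filter.isCoboundedUnder_le_of_le atTop hnonneg)
    (Filter.Eventually.of_forall hbound)
end

section
/- Let Σ be a finite alphabet, k ≥ 1, and s ∈ Σ* with |s| ≥ k. Then for the end-replication system S^end_k = (Σ, s, T^end_k), cap(S^end_k) = log₂ δ(s). -/
open Filter

namespace EndRep

open List

variable {A : Type*} {k : ℕ} {s : List A}

lemma mem_step {x v : List A} (hx : x ∈ Sys (EndStep k) s) (hv : v <:+: x)
    (hvk : v.length = k) : x ++ v ∈ Sys (EndStep k) s := by
  obtain ⟨u, w, h⟩ := hv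
  exact Relation.ReflTransGen.tail hx ⟨u, v, w, hvk, h.symm, by rw [h]⟩

lemma prefix_of_mem {x : List A} (hx : x ∈ Sys (EndStep k) s) : s <+: x := by
  induction hx with
  | refl => exact List.prefix_rfl
  | tail h st ih =>
    obtain ⟨u, v, w, _, hb, hc⟩ := st
    refine ih.trans ?_
    rw [hc, ← hb]
    exact List.prefix_append _ _

lemma letters_of_mem {x : List A} (hx : x ∈ Sys (EndStep k) s) :
    ∀ c ∈ x, c ∈ s := by
  induction hx with
  | refl => exact fun c hc => hc
  | tail h st ih =>
    obtain ⟨u, v, w, _, hb, hc⟩ := st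
    intro c hc'
    rw [hc] at hc'
    apply ih
    rw [hb]
    simp only [List.mem_append] at hc' ⊢
    tauto

lemma window {x : List A} {a : A} (ha : a ∈ x) (hk : 1 ≤ k) (hkx : k ≤ x.length) :
    ∃ c d : List A, (c ++ a :: d).length = k ∧ (c ++ a :: d) <:+: x := by
  obtain ⟨x₁, x₂, rfl⟩ := List.append_of_mem ha
  simp only [List.length_append, List.length_cons] at hkx
  by_cases h : k - 1 ≤ x₂.length
  · refine ⟨[], x₂.take (k-1), ?_, ?_⟩
    · simp [min_eq_left h]; omega
    · refine List.IsInfix.trans ?_ (List.suffix_append x₁ (a :: x₂)).isInfix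
      simp only [List.nil_append]
      exact ⟨[], x₂.drop (k-1), by simp⟩
  · refine ⟨x₁.drop (x₁.length - (k - 1 - x₂.length)), x₂, ?_, ?_⟩
    · simp only [List.length_append, List.length_drop, List.length_cons]
      omega
    · rw [← List.drop_append_of_le_length (by omega)]
      exact (List.drop_suffix _ _).isInfix

/-- Invariant: `y` reachable, extends `x`, has a length-`k` suffix ending in `a^j`
and a length-`k` infix starting with `a^j`. -/
def Inv (k : ℕ) (s x : List A) (a : A) (j : ℕ) : Prop :=
  ∃ y ∈ Sys (EndStep k) s, x <+: y ∧ ∃ p q : List A,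
    p.length = k - j ∧ q.length = k - j ∧
    (p ++ List.replicate j a) <:+ y ∧ (List.replicate j a ++ q) <:+: y

lemma inv_one {x : List A} {a : A} (hx : x ∈ Sys (EndStep k) s) (hk : 1 ≤ k)
    (hs : k ≤ s.length) (ha : a ∈ s) : Inv k s x a 1 := by
  have hax : a ∈ x := (prefix_of_mem hx).subset ha
  have hkx : k ≤ x.length := hs.trans (prefix_of_mem hx).length_le
  obtain ⟨c, d, hlen, hinf⟩ := window hax hk hkx
  have hlen' : c.length + (d.length + 1) = k := by
    simpa using hlen
  have hy0 : x ++ (c ++ a :: d) ++ (c ++ a :: d) ∈ Sys (EndStep k) s :=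
    mem_step (mem_step hx hinf hlen)
      (hinf.trans (prefix_append x (c ++ a :: d)).isInfix) hlen
  have hww : ((c ++ a :: d) ++ (c ++ a :: d)) <:+ x ++ (c ++ a :: d) ++ (c ++ a :: d) :=
    ⟨x, (append_assoc x _ _).symm⟩
  have hend : ((d ++ c) ++ [a]) <:+: (c ++ a :: d) ++ (c ++ a :: d) :=
    ⟨c ++ [a], d, by simp⟩
  have hendlen : ((d ++ c) ++ [a]).length = k := by
    simp only [length_append, length_cons, length_nil]; omega
  refine ⟨(x ++ (c ++ a :: d) ++ (c ++ a :: d)) ++ ((d ++ c) ++ [a]),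
    mem_step hy0 (hend.trans hww.isInfix) hendlen,
    ((prefix_append x _).trans (prefix_append _ _)).trans (prefix_append _ _),
    d ++ c, d ++ c, ?_, ?_, ?_, ?_⟩
  · simp only [length_append]; omega
  · simp only [length_append]; omega
  · simpa using suffix_append (x ++ (c ++ a :: d) ++ (c ++ a :: d)) ((d ++ c) ++ [a])
  · have h1 : (List.replicate 1 a ++ (d ++ c)) <:+: (c ++ a :: d) ++ (c ++ a :: d) :=
      ⟨c, a :: d, by simp⟩
    exact h1.trans ((hww.isInfix).trans (prefix_append _ _).isInfix)

lemma inv_step {x : List A} {a : A} {j : ℕ} (hj1 : 1 ≤ j) (hjk : j < k)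
    (h : Inv k s x a j) : Inv k s x a (min (2*j) k) := by
  obtain ⟨y, hy, hxy, p, q, hp, hq, hsuf, hinf⟩ := h
  set j₂ := min (2*j) k with hj₂
  have hj₂k : j₂ ≤ k := min_le_right _ _
  have hjj₂ : j ≤ j₂ := by omega
  have hinflen : (List.replicate j a ++ q).length = k := by
    simp [hq]; omega
  set y₁ := y ++ (List.replicate j a ++ q) with hy₁
  have hy₁mem : y₁ ∈ Sys (EndStep k) s := mem_step hy hinf hinflen
  obtain ⟨z, hz⟩ := hsuf
  have hbig : (p ++ List.replicate (2*j) a ++ q) <:+ y₁ := by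
    refine ⟨z, ?_⟩
    have h2j : List.replicate (2*j) a = List.replicate j a ++ List.replicate j a := by
      rw [← List.replicate_add, two_mul]
    rw [hy₁, ← hz, h2j]
    simp only [append_assoc]
  -- new ending window
  set p₂ := (p ++ List.replicate (2*j - j₂) a).drop j with hp₂
  have hsplit : p ++ List.replicate (2*j) a
      = (p ++ List.replicate (2*j - j₂) a) ++ List.replicate j₂ a := by
    rw [append_assoc, ← List.replicate_add]
    congr 2
    omega
  have hplen : (p ++ List.replicate (2*j - j₂) a).length = k + j - j₂ := by
    simp [hp]; omega
  have hw₂ : (p₂ ++ List.replicate j₂ a) = (p ++ List.replicate (2*j) a).drop j := by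
    rw [hsplit, List.drop_append_of_le_length (by omega)]
  have hp₂len : p₂.length = k - j₂ := by
    simp [hp₂, hp]; omega
  have hw₂len : (p₂ ++ List.replicate j₂ a).length = k := by
    simp [hp₂len]; omega
  have hw₂inf : (p₂ ++ List.replicate j₂ a) <:+: y₁ := by
    rw [hw₂]
    refine ((List.drop_suffix _ _).isInfix).trans ?_
    refine IsInfix.trans ?_ hbig.isInfix
    exact (prefix_append _ _).isInfix
  set y₂ := y₁ ++ (p₂ ++ List.replicate j₂ a) with hy₂
  have hy₂mem : y₂ ∈ Sys (EndStep k) s := mem_step hy₁mem hw₂inf hw₂len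
  -- new starting window
  set q₂ := q.take (k - j₂) with hq₂
  have hq₂len : q₂.length = k - j₂ := by
    simp [hq₂, hq]; omega
  have hw₁ : List.replicate j₂ a ++ q₂ = (List.replicate (2*j) a ++ q).take k := by
    rw [List.take_append, List.take_replicate, List.length_replicate]
    congr 2
    · omega
    · rw [hq₂]; congr 1; omega
  have hw₁inf : (List.replicate j₂ a ++ q₂) <:+: y₂ := by
    rw [hw₁]
    refine ((List.take_prefix _ _).isInfix).trans ?_
    refine IsInfix.trans ?_ ((prefix_append y₁ _).isInfix)
    refine IsInfix.trans ?_ hbig.isInfix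
    exact ⟨p, [], by simp⟩
  exact ⟨y₂, hy₂mem, hxy.trans ((prefix_append y _).trans (prefix_append _ _)),
    p₂, q₂, hp₂len, hq₂len, suffix_append _ _, hw₁inf⟩

lemma run {x : List A} {a : A} (hx : x ∈ Sys (EndStep k) s) (hk : 1 ≤ k)
    (hs : k ≤ s.length) (ha : a ∈ s) :
    ∃ y ∈ Sys (EndStep k) s, x <+: y ∧ List.replicate k a <:+ y := by
  have key : ∀ d j, 1 ≤ j → j ≤ k → k ≤ j + d → Inv k s x a j → Inv k s x a k := by
    intro d
    induction d with
    | zero =>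
      intro j h1 h2 h3 h
      have : j = k := by omega
      rwa [this] at h
    | succ d ih =>
      intro j h1 h2 h3 h
      by_cases hjk : j = k
      · rwa [hjk] at h
      · have := inv_step h1 (by omega) h
        exact ih (min (2*j) k) (by omega) (by omega) (by omega) this
  have := key k 1 le_rfl hk (by omega) (inv_one hx hk hs ha)
  obtain ⟨y, hy, hxy, p, q, hp, hq, hsuf, _⟩ := this
  have hpnil : p = [] := by
    rw [← List.length_eq_zero_iff, hp]; omega
  rw [hpnil, List.nil_append] at hsuf
  exact ⟨y, hy, hxy, hsuf⟩

lemma build (hk : 1 ≤ k) (hs : k ≤ s.length) :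
    ∀ t : List A, t.length = k → (∀ c ∈ t, c ∈ s) →
      ∀ x ∈ Sys (EndStep k) s, ∃ y ∈ Sys (EndStep k) s, x <+: y ∧ t <:+ y := by
  have key : ∀ d j, 1 ≤ j → ∀ (t : List A) (a : A), t.length = k →
      (∀ c ∈ t, c ∈ s) → List.replicate j a <:+ t → k ≤ j + d →
      ∀ x ∈ Sys (EndStep k) s, ∃ y ∈ Sys (EndStep k) s, x <+: y ∧ t <:+ y := by
    intro d
    induction d with
    | zero =>
      intro j hj t a htk hts hsuf hkd x hx
      have hjk : j = k := by
        have := hsuf.length_le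
        simp only [List.length_replicate, htk] at this
        omega
      have hteq : t = List.replicate j a := (hsuf.eq_of_length (by simp [htk, hjk])).symm
      have ha : a ∈ s := hts a (by rw [hteq]; exact List.mem_replicate.mpr ⟨by omega, rfl⟩)
      obtain ⟨y, hy, hxy, hry⟩ := run hx hk hs ha
      exact ⟨y, hy, hxy, by rwa [hteq, hjk]⟩
    | succ d ih =>
      intro j hj t a htk hts hsuf hkd x hx
      by_cases hjk : k ≤ j
      · -- same as base case
        have hjk' : j = k := by
          have := hsuf.length_le
          simp only [List.length_replicate, htk] at this
          omega
        have hteq : t = List.replicate j a := (hsuf.eq_of_length (by simp [htk, hjk'])).symm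
        have ha : a ∈ s := hts a (by rw [hteq]; exact List.mem_replicate.mpr ⟨by omega, rfl⟩)
        obtain ⟨y, hy, hxy, hry⟩ := run hx hk hs ha
        exact ⟨y, hy, hxy, by rwa [hteq, hjk']⟩
      · push_neg at hjk
        have ha_t : a ∈ t := hsuf.mem (List.mem_replicate.mpr ⟨by omega, rfl⟩)
        obtain ⟨t₀, ht₀⟩ := hsuf
        have ht₀len : t₀.length = k - j := by
          have := congrArg List.length ht₀
          simp only [List.length_append, List.length_replicate, htk] at this
          omega
        have ht₀pos : 1 ≤ t₀.length := by omega
        have ht_ne : t ≠ [] := by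
          intro h; rw [h] at htk; simp at htk; omega
        -- v := t.drop 1 ++ [a]
        set v := t.drop 1 ++ [a] with hv
        have hvlen : v.length = k := by
          simp [hv, htk]; omega
        have hvsub : ∀ c ∈ v, c ∈ s := by
          intro c hc
          simp only [hv, List.mem_append, List.mem_singleton] at hc
          rcases hc with hc | rfl
          · exact hts c (List.drop_subset _ _ hc)
          · exact hts c ha_t
        have hvsuf : List.replicate (j+1) a <:+ v := by
          refine ⟨t₀.drop 1, ?_⟩
          rw [List.replicate_succ', hv, ← ht₀,
            List.drop_append_of_le_length (by omega), append_assoc]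
        obtain ⟨y₁, hy₁, hxy₁, hvy₁⟩ := ih (j+1) (by omega) v a hvlen hvsub hvsuf (by omega) x hx
        set b := t.head ht_ne with hb
        have hbs : b ∈ s := hts b (List.head_mem ht_ne)
        obtain ⟨y₂, hy₂, hy₁y₂, hrb⟩ := run hy₁ hk hs hbs
        -- t is an infix of (replicate k b ++ v)
        have htinf : t <:+: List.replicate k b ++ v := by
          refine ⟨List.replicate (k-1) b, [a], ?_⟩
          have hrk : List.replicate k b = List.replicate (k-1) b ++ [b] := by
            rw [← List.replicate_succ']
            congr 1
            omega
          rw [hrk, hv]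
          have : b :: t.drop 1 = t := by
            rw [List.drop_one, hb]
            exact List.cons_head_tail ht_ne
          rw [append_assoc, ← this]
          simp
        have hvinf : v <:+: y₂ := hvy₁.isInfix.trans hy₁y₂.isInfix
        have hy₃ : y₂ ++ v ∈ Sys (EndStep k) s := mem_step hy₂ hvinf hvlen
        have htinf₃ : t <:+: y₂ ++ v := by
          obtain ⟨z, hz⟩ := hrb
          refine htinf.trans ?_
          rw [← hz, append_assoc]
          exact ((suffix_append z _).isInfix)
        refine ⟨(y₂ ++ v) ++ t, mem_step hy₃ htinf₃ htk, ?_, suffix_append _ _⟩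
        exact ((hxy₁.trans hy₁y₂).trans (prefix_append _ _)).trans (prefix_append _ _)
  intro t htk hts x hx
  have ht_ne : t ≠ [] := by
    intro h; rw [h] at htk; simp at htk; omega
  have hsuf : List.replicate 1 (t.getLast ht_ne) <:+ t :=
    ⟨t.dropLast, by simpa using List.dropLast_append_getLast ht_ne⟩
  exact key (k-1) 1 le_rfl t (t.getLast ht_ne) htk hts hsuf (by omega) x hx

/-- there is a reachable word containing every admissible `k`-block as an infix -/
lemma all_infix [Fintype A] (hk : 1 ≤ k) (hs : k ≤ s.length) :
    ∃ x₀ ∈ Sys (EndStep k) s,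
      ∀ t : List A, t.length = k → (∀ c ∈ t, c ∈ s) → t <:+: x₀ := by
  classical
  have chain : ∀ l : List (List A), (∀ t ∈ l, t.length = k ∧ ∀ c ∈ t, c ∈ s) →
      ∃ y ∈ Sys (EndStep k) s, ∀ t ∈ l, t <:+: y := by
    intro l
    induction l with
    | nil => exact fun _ => ⟨s, Relation.ReflTransGen.refl, by simp⟩
    | cons t l ih =>
      intro hl
      obtain ⟨y, hy, hyl⟩ := ih (fun t ht => hl t (List.mem_cons_of_mem _ ht))
      obtain ⟨htk, hts⟩ := hl t (List.mem_cons_self)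
      obtain ⟨y', hy', hyy', hty'⟩ := build hk hs t htk hts y hy
      refine ⟨y', hy', ?_⟩
      intro u hu
      rcases List.mem_cons.mp hu with rfl | hu
      · exact hty'.isInfix
      · exact (hyl u hu).trans hyy'.isInfix
  -- the set of admissible blocks is finite
  have hfin : {t : List A | t.length = k ∧ ∀ c ∈ t, c ∈ s}.Finite := by
    refine Set.Finite.subset (Set.finite_range (fun v : List.Vector A k => v.toList)) ?_
    rintro t ⟨htk, -⟩
    exact ⟨⟨t, htk⟩, rfl⟩
  obtain ⟨y, hy, hyl⟩ := chain hfin.toFinset.toList (by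
    intro t ht
    rw [Finset.mem_toList, Set.Finite.mem_toFinset] at ht
    exact ht)
  refine ⟨y, hy, ?_⟩
  intro t htk hts
  exact hyl t (by rw [Finset.mem_toList, Set.Finite.mem_toFinset]; exact ⟨htk, hts⟩)

lemma reach_join {x₀ : List A} :
    ∀ (l : List (List A)) (x : List A), x ∈ Sys (EndStep k) s → x₀ <+: x →
      (∀ t ∈ l, t.length = k ∧ t <:+: x₀) → x ++ l.flatten ∈ Sys (EndStep k) s := by
  intro l
  induction l with
  | nil => intro x hx _ _; simpa using hx
  | cons t l ih =>
    intro x hx hpre hl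
    obtain ⟨htk, htinf⟩ := hl t (List.mem_cons_self)
    have h1 : x ++ t ∈ Sys (EndStep k) s :=
      mem_step hx (htinf.trans hpre.isInfix) htk
    have h2 := ih (x ++ t) h1 (hpre.trans (prefix_append _ _))
      (fun u hu => hl u (List.mem_cons_of_mem _ hu))
    simpa [append_assoc] using h2

lemma join_inj : ∀ l₁ l₂ : List (List A), (∀ t ∈ l₁, t.length = k) →
    (∀ t ∈ l₂, t.length = k) → l₁.length = l₂.length →
    l₁.flatten = l₂.flatten → l₁ = l₂ := by
  intro l₁
  induction l₁ with
  | nil =>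
    intro l₂ _ _ hlen _
    cases l₂ with
    | nil => rfl
    | cons t l₂ => simp at hlen
  | cons t l₁ ih =>
    intro l₂ h1 h2 hlen hjoin
    cases l₂ with
    | nil => simp at hlen
    | cons u l₂ =>
      simp only [List.flatten_cons] at hjoin
      have hlent : t.length = u.length := by
        rw [h1 t (List.mem_cons_self), h2 u (List.mem_cons_self)]
      obtain ⟨rfl, hj⟩ := List.append_inj hjoin hlent
      have := ih l₂ (fun v hv => h1 v (List.mem_cons_of_mem _ hv))
        (fun v hv => h2 v (List.mem_cons_of_mem _ hv)) (by simpa using hlen) hj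
      rw [this]

lemma finite_slice [Fintype A] (n : ℕ) :
    {x ∈ Sys (EndStep k) s | x.length = n}.Finite := by
  refine Set.Finite.subset (Set.finite_range (fun v : List.Vector A n => v.toList)) ?_
  rintro x ⟨-, hx⟩
  exact ⟨⟨x, hx⟩, rfl⟩

lemma count_upper [Fintype A] [DecidableEq A] (n : ℕ) :
    {x ∈ Sys (EndStep k) s | x.length = n}.ncard ≤ s.toFinset.card ^ n := by
  classical
  set f : List.Vector {a // a ∈ s.toFinset} n → List A :=
    fun v => v.toList.map Subtype.val with hf
  have hinj : Function.Injective f :=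
    (List.map_injective_iff.mpr Subtype.val_injective).comp List.Vector.toList_injective
  have hsub : {x ∈ Sys (EndStep k) s | x.length = n} ⊆ Set.range f := by
    rintro x ⟨hx, hxn⟩
    have hmem : ∀ c ∈ x, c ∈ s.toFinset := fun c hc =>
      List.mem_toFinset.mpr (letters_of_mem hx c hc)
    refine ⟨⟨x.pmap (fun c h => (⟨c, h⟩ : {a // a ∈ s.toFinset})) hmem, by
      simpa using hxn⟩, ?_⟩
    show List.map Subtype.val _ = x
    rw [show List.Vector.toList ⟨pmap (fun c h => (⟨c, h⟩ : {a // a ∈ s.toFinset})) x hmem, by simpa using hxn⟩ = pmap (fun c h => (⟨c, h⟩ : {a // a ∈ s.toFinset})) x hmem from rfl, List.map_pmap]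
    exact (List.pmap_eq_map (f := id) (l := x) hmem).trans (List.map_id x)
  calc {x ∈ Sys (EndStep k) s | x.length = n}.ncard
      ≤ (Set.range f).ncard := Set.ncard_le_ncard hsub (Set.finite_range f)
    _ = Nat.card (List.Vector {a // a ∈ s.toFinset} n) := by
        rw [← Nat.card_coe_set_eq, Nat.card_range_of_injective hinj]
    _ = s.toFinset.card ^ n := by
        rw [Nat.card_eq_fintype_card, card_vector, Fintype.card_coe]


lemma count_lower [Fintype A] [DecidableEq A] {x₀ : List A}
    (hx₀ : x₀ ∈ Sys (EndStep k) s)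
    (hall : ∀ t : List A, t.length = k → (∀ c ∈ t, c ∈ s) → t <:+: x₀) (m : ℕ) :
    (s.toFinset.card ^ k) ^ m ≤
      {x ∈ Sys (EndStep k) s | x.length = x₀.length + m * k}.ncard := by
  classical
  set g : List.Vector {a // a ∈ s.toFinset} k → List A :=
    fun u => u.toList.map Subtype.val with hg
  have hglen : ∀ u, (g u).length = k := fun u => by simp [hg]
  have hgsub : ∀ u, ∀ c ∈ g u, c ∈ s := by
    rintro u c hc
    simp only [hg, List.mem_map] at hc
    obtain ⟨⟨c', hc'⟩, -, rfl⟩ := hc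
    exact List.mem_toFinset.mp hc'
  have hginj : Function.Injective g :=
    (List.map_injective_iff.mpr Subtype.val_injective).comp List.Vector.toList_injective
  set Φ : List.Vector (List.Vector {a // a ∈ s.toFinset} k) m → List A :=
    fun v => x₀ ++ (v.toList.map g).flatten with hΦ
  have hblocks : ∀ v : List.Vector (List.Vector {a // a ∈ s.toFinset} k) m,
      ∀ t ∈ v.toList.map g, t.length = k ∧ t <:+: x₀ := by
    intro v t ht
    obtain ⟨u, -, rfl⟩ := List.mem_map.mp ht
    exact ⟨hglen u, hall (g u) (hglen u) (hgsub u)⟩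
  have hrange : Set.range Φ ⊆ {x ∈ Sys (EndStep k) s | x.length = x₀.length + m * k} := by
    rintro - ⟨v, rfl⟩
    constructor
    · exact reach_join (v.toList.map g) x₀ hx₀ List.prefix_rfl (hblocks v)
    · have hrep : (v.toList.map g).map List.length = List.replicate m k := by
        have h1 : ∀ b ∈ (v.toList.map g).map List.length, b = k := by
          intro b hb
          obtain ⟨t, ht, rfl⟩ := List.mem_map.mp hb
          exact (hblocks v t ht).1
        have h2 := List.eq_replicate_of_mem h1
        rwa [List.length_map, List.length_map, List.Vector.toList_length] at h2
      simp only [hΦ, List.length_append, List.length_flatten, hrep,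
        List.sum_replicate, smul_eq_mul]
  have hinj : Function.Injective Φ := by
    intro v₁ v₂ h
    simp only [hΦ] at h
    have hflat := List.append_cancel_left h
    have hmapeq : v₁.toList.map g = v₂.toList.map g :=
      join_inj _ _ (fun t ht => (hblocks v₁ t ht).1) (fun t ht => (hblocks v₂ t ht).1)
        (by simp) hflat
    have : v₁.toList = v₂.toList := (List.map_injective_iff.mpr hginj) hmapeq
    exact List.Vector.toList_injective this
  calc (s.toFinset.card ^ k) ^ m
      = Nat.card (List.Vector (List.Vector {a // a ∈ s.toFinset} k) m) := by
        rw [Nat.card_eq_fintype_card, card_vector, card_vector, Fintype.card_coe]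
    _ = (Set.range Φ).ncard := by
        rw [← Nat.card_coe_set_eq, Nat.card_range_of_injective hinj]
    _ ≤ _ := Set.ncard_le_ncard hrange (finite_slice _)

end EndRep

open EndRep in
theorem stmt1 {A : Type*} [Fintype A] [DecidableEq A] (k : ℕ) (hk : 1 ≤ k)
    (s : List A) (hs : k ≤ s.length) :
    cap (Sys (EndStep k) s) = Real.logb 2 (s.toFinset.card) := by
  classical
  have hsne : s ≠ [] := by
    intro h; rw [h] at hs; simp at hs; omega
  set δ := s.toFinset.card with hδ
  have hδ1 : 1 ≤ δ :=
    Finset.card_pos.mpr ⟨s.head hsne, List.mem_toFinset.mpr (List.head_mem hsne)⟩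
  have hδR : (1:ℝ) ≤ (δ:ℝ) := by exact_mod_cast hδ1
  have hlogδ : 0 ≤ Real.logb 2 δ := Real.logb_nonneg one_lt_two hδR
  set N : ℕ → ℕ := fun n => ({x ∈ Sys (EndStep k) s | x.length = n}).ncard with hN
  set f : ℕ → ℝ := fun n => Real.logb 2 (N n) / n with hf
  have hrepr : cap (Sys (EndStep k) s) = Filter.limsup f Filter.atTop := rfl
  rw [hrepr]
  -- pointwise upper bound
  have hupper : ∀ n, f n ≤ Real.logb 2 δ := by
    intro n
    have hNn : N n ≤ δ ^ n := count_upper n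
    have h1 : Real.logb 2 (N n) ≤ n * Real.logb 2 δ := by
      rcases Nat.eq_zero_or_pos (N n) with h | h
      · rw [h]
        simp only [Nat.cast_zero, Real.logb_zero]
        positivity
      · calc Real.logb 2 (N n) ≤ Real.logb 2 ((δ:ℝ) ^ n) := by
              apply Real.logb_le_logb_of_le one_lt_two (by exact_mod_cast h)
              exact_mod_cast hNn
          _ = n * Real.logb 2 δ := Real.logb_pow 2 _ n
    rcases Nat.eq_zero_or_pos n with rfl | hn
    · simpa [hf] using hlogδ
    · rw [hf]
      have hnpos : (0:ℝ) < n := by exact_mod_cast hn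
      rw [div_le_iff₀ hnpos]
      linarith
  have hnonneg : ∀ n, 0 ≤ f n := by
    intro n
    apply div_nonneg _ (Nat.cast_nonneg n)
    rcases Nat.eq_zero_or_pos (N n) with h | h
    · simp [h]
    · exact Real.logb_nonneg one_lt_two (by exact_mod_cast h)
  have hbddabove : Filter.IsBoundedUnder (· ≤ ·) Filter.atTop f :=
    Filter.isBoundedUnder_of ⟨Real.logb 2 δ, hupper⟩
  have hbddbelow : Filter.IsBoundedUnder (· ≥ ·) Filter.atTop f :=
    Filter.isBoundedUnder_of ⟨0, hnonneg⟩
  have hcobdd : Filter.IsCoboundedUnder (· ≤ ·) Filter.atTop f :=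
    hbddbelow.isCoboundedUnder_le
  have hle : Filter.limsup f Filter.atTop ≤ Real.logb 2 δ :=
    Filter.limsup_le_of_le hcobdd (Filter.Eventually.of_forall hupper)
  -- lower bound
  obtain ⟨x₀, hx₀, hall⟩ := all_infix hk hs
  set L := x₀.length with hL
  have hL1 : 1 ≤ L := le_trans (le_trans hk hs) (prefix_of_mem hx₀).length_le
  have hfreq_aux : ∀ m : ℕ,
      (↑(m*k) * Real.logb 2 δ) / (↑(L + m*k) : ℝ) ≤ f (L + m*k) := by
    intro m
    have hNm : (δ ^ k) ^ m ≤ N (L + m*k) := count_lower hx₀ hall m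
    have hcast : (((δ ^ k) ^ m : ℕ) : ℝ) = (δ:ℝ) ^ (m*k) := by
      push_cast
      rw [← pow_mul, mul_comm k m]
    have hlog : (↑(m*k) : ℝ) * Real.logb 2 δ ≤ Real.logb 2 (N (L+m*k)) := by
      have h2 : Real.logb 2 (((δ ^ k) ^ m : ℕ) : ℝ) ≤ Real.logb 2 (N (L+m*k)) := by
        apply Real.logb_le_logb_of_le one_lt_two
        · rw [hcast]; positivity
        · exact_mod_cast hNm
      rwa [hcast, Real.logb_pow] at h2
    rw [hf]
    exact div_le_div_of_nonneg_right hlog (by positivity)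
  have hdenom : Filter.Tendsto (fun m : ℕ => ((L + m*k : ℕ) : ℝ)) Filter.atTop Filter.atTop := by
    apply Filter.Tendsto.comp tendsto_natCast_atTop_atTop
    apply Filter.tendsto_atTop_mono (fun m => ?_) Filter.tendsto_id
    calc (id m : ℕ) = m * 1 := by simp
      _ ≤ m * k := Nat.mul_le_mul_left m hk
      _ ≤ L + m * k := Nat.le_add_left _ _
  have htendsto : Filter.Tendsto
      (fun m : ℕ => (↑(m*k) * Real.logb 2 δ) / (↑(L + m*k) : ℝ))
      Filter.atTop (nhds (Real.logb 2 δ)) := by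
    have h0 : Filter.Tendsto
        (fun m : ℕ => ((L:ℝ) * Real.logb 2 δ) / (↑(L + m*k) : ℝ))
        Filter.atTop (nhds 0) :=
      Filter.Tendsto.div_atTop tendsto_const_nhds hdenom
    have heq : ∀ m : ℕ, (↑(m*k) * Real.logb 2 δ) / (↑(L + m*k) : ℝ)
        = Real.logb 2 δ - ((L:ℝ) * Real.logb 2 δ) / (↑(L + m*k) : ℝ) := by
      intro m
      have hpos : (0:ℝ) < ((L + m*k : ℕ) : ℝ) := by
        exact_mod_cast Nat.lt_of_lt_of_le Nat.zero_lt_one (by omega)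
      field_simp
      push_cast
      ring
    have h1 := Filter.Tendsto.congr (fun m => (heq m).symm) (tendsto_const_nhds.sub h0)
    simpa using h1
  have hge : Real.logb 2 δ ≤ Filter.limsup f Filter.atTop := by
    apply le_of_forall_sub_le
    intro ε hε
    apply Filter.le_limsup_of_frequently_le ?_ hbddabove
    rw [Filter.frequently_atTop]
    intro n₀
    have hev := htendsto.eventually
      (eventually_ge_nhds (show Real.logb 2 δ - ε < Real.logb 2 δ by linarith))
    obtain ⟨M, hM⟩ := Filter.eventually_atTop.mp hev
    refine ⟨L + (max M n₀) * k, ?_, ?_⟩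
    · calc n₀ ≤ max M n₀ := le_max_right _ _
        _ ≤ (max M n₀) * k := Nat.le_mul_of_pos_right _ (by omega)
        _ ≤ L + (max M n₀) * k := Nat.le_add_left _ _
    · exact le_trans (hM _ (le_max_left _ _)) (hfreq_aux (max M n₀))
  exact le_antisymm hle hge
end

section
/- Let x ∈ Σ* with |x| ≥ k and let w ∈ Σ^k satisfy R(w) ⊆ R(x). Then there is a string y obtainable from x by at most 2k applications of end-replication rules T^end_{i,k} such that w is a suffix of y. -/
open Filter

namespace Stmt2Aux

def Reach {A : Type*} (k n : ℕ) (x y : List A) : Prop :=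
  ∃ f : ℕ → List A, f 0 = x ∧ f n = y ∧ ∀ i < n, EndStep k (f i) (f (i + 1))

lemma Reach.zero {A : Type*} (k : ℕ) (x : List A) : Reach k 0 x x :=
  ⟨fun _ => x, rfl, rfl, fun i h => absurd h (Nat.not_lt_zero i)⟩

lemma Reach.succ {A : Type*} {k n : ℕ} {x y z : List A}
    (h : Reach k n x y) (hs : EndStep k y z) : Reach k (n + 1) x z := by
  obtain ⟨f, h0, hn, hf⟩ := h
  refine ⟨fun i => if i ≤ n then f i else z, by simp [h0], by simp, ?_⟩
  intro i hi
  rcases lt_or_eq_of_le (Nat.lt_succ_iff.mp hi) with h' | h'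
  · have h1 : i ≤ n := le_of_lt h'
    have h2 : i + 1 ≤ n := h'
    simp only [if_pos h1, if_pos h2]
    exact hf i h'
  · subst h'
    simp only [if_pos (le_refl i), if_neg (by omega : ¬ i + 1 ≤ i)]
    rw [hn]; exact hs

lemma endStep_append {A : Type*} {k : ℕ} {v y : List A}
    (hlen : v.length = k) (hinf : v <:+: y) : EndStep k y (y ++ v) := by
  obtain ⟨s, t, h⟩ := hinf
  exact ⟨s, v, t, hlen, h.symm, by rw [← h]⟩

lemma endStep_end {A : Type*} {k : ℕ} (hk : 1 ≤ k) {z : List A} (a : A) (rest : List A)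
    (hz : k - 1 ≤ z.length) :
    EndStep k (z ++ a :: rest)
      ((z ++ a :: rest) ++ (z.drop (z.length - (k - 1)) ++ [a])) := by
  apply endStep_append
  · simp only [List.length_append, List.length_drop, List.length_singleton]
    omega
  · refine ⟨z.take (z.length - (k - 1)), rest, ?_⟩
    simp only [List.append_assoc, List.singleton_append]
    rw [← List.append_assoc, List.take_append_drop]

lemma pair {A : Type*} {k n : ℕ} (hk : 1 ≤ k) {x z rest : List A} (a : A)
    (hre : Reach k n x (z ++ a :: rest)) (hrest : k ≤ rest.length + 1) :
    ∃ q : List A, q.length = k ∧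
      Reach k (n + 2) x
        ((z ++ a :: rest) ++ q ++
          ((z ++ a :: rest).drop ((z ++ a :: rest).length - (k - 1)) ++ [a])) := by
  set y := z ++ a :: rest with hy
  have hk1 : k - 1 + 1 = k := by omega
  have hvtake : (a :: rest).take k = a :: rest.take (k - 1) := by
    rw [← hk1, List.take_succ_cons, hk1]
  set v : List A := a :: rest.take (k - 1) with hv
  have hvlen : v.length = k := by
    simp only [hv, List.length_cons, List.length_take]
    omega
  have hvinf : v <:+: y := by
    refine ⟨z, (a :: rest).drop k, ?_⟩
    rw [← hvtake, List.append_assoc, List.take_append_drop]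
  have h1 : EndStep k y (y ++ v) := endStep_append hvlen hvinf
  have hzlen : k - 1 ≤ y.length := by
    simp only [hy, List.length_append, List.length_cons]; omega
  have h2 : EndStep k (y ++ v) ((y ++ v) ++ (y.drop (y.length - (k - 1)) ++ [a])) := by
    have := endStep_end hk (z := y) a (rest.take (k - 1)) hzlen
    simpa [hv] using this
  exact ⟨v, hvlen, (hre.succ h1).succ h2⟩

lemma suffix_append_single {A : Type*} {s d : List A} (h : s <:+ d) (a : A) :
    s ++ [a] <:+ d ++ [a] := by
  obtain ⟨p, hp⟩ := h
  exact ⟨p, by rw [← List.append_assoc, hp]⟩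

lemma invar {A : Type*} {k : ℕ} (hk : 1 ≤ k) {x w : List A}
    (hx : k ≤ x.length) (hw : w.length = k) (hRw : ∀ a ∈ w, a ∈ x) :
    ∀ j, 1 ≤ j → j ≤ k →
      ∃ y r, Reach k (2 * j) x y ∧ y = x ++ r ∧ k ≤ r.length ∧ w.take j <:+ y := by
  intro j hj1
  induction j with
  | zero => omega
  | succ j ih =>
    intro hjk
    rcases Nat.eq_or_lt_of_le hj1 with hbase | hstep
    · -- base case j + 1 = 1, i.e. j = 0
      have hj0 : j = 0 := by omega
      subst hj0
      have h0w : 0 < w.length := by omega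
      set a : A := w.get ⟨0, h0w⟩ with hadef
      have ha0 : w.take 1 = [a] := by
        show w.take (0 + 1) = [a]
        rw [← List.take_concat_get h0w, List.concat_eq_append, List.take_zero,
          List.nil_append, hadef, List.get_eq_getElem]
      have haw : a ∈ w := List.get_mem _ _
      have hax : a ∈ x := hRw a haw
      obtain ⟨s, t, hst⟩ := List.append_of_mem hax
      by_cases hca : k ≤ t.length + 1
      · -- a factor of length k starting at a exists inside x
        have hre0 : Reach k 0 x (s ++ a :: t) := hst ▸ Reach.zero k x
        obtain ⟨q, hqlen, hre⟩ := pair hk a hre0 hca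
        rw [← hst] at hre
        refine ⟨x ++ q ++ (x.drop (x.length - (k - 1)) ++ [a]),
          q ++ (x.drop (x.length - (k - 1)) ++ [a]), by simpa using hre, ?_, ?_, ?_⟩
        · simp [List.append_assoc]
        · simp only [List.length_append, List.length_drop, List.length_singleton, hqlen]
          omega
        · rw [ha0]
          have h1 : [a] <:+ x.drop (x.length - (k - 1)) ++ [a] := ⟨_, rfl⟩
          exact h1.trans ⟨x ++ q, rfl⟩
      · -- a occurs only near the end of x : first copy the k-suffix of x
        push_neg at hca
        set v : List A := x.drop (x.length - k) with hv
        have hvlen : v.length = k := by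
          rw [hv, List.length_drop]; omega
        have h1 : EndStep k x (x ++ v) :=
          endStep_append hvlen ⟨x.take (x.length - k), [],
            by rw [List.append_nil, hv, List.take_append_drop]⟩
        have hat : a :: t <:+ x := ⟨s, hst.symm⟩
        have hvsuf : v <:+ x := List.drop_suffix _ _
        have hatv : a :: t <:+ v :=
          List.suffix_of_suffix_length_le hat hvsuf
            (by simp only [List.length_cons, hvlen]; omega)
        have hav : a ∈ v := hatv.subset (List.mem_cons_self (a := a) (l := t))
        obtain ⟨s', t', hv'⟩ := List.append_of_mem hav
        have hxv : x ++ v = (x ++ s') ++ a :: t' := by rw [hv', List.append_assoc]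
        have hzlen : k - 1 ≤ (x ++ s').length := by
          simp only [List.length_append]; omega
        have h2 := endStep_end hk (z := x ++ s') a t' hzlen
        have hre : Reach k 2 x
            (((x ++ s') ++ a :: t') ++
              ((x ++ s').drop ((x ++ s').length - (k - 1)) ++ [a])) := by
          have r1 : Reach k 1 x (x ++ v) := (Reach.zero k x).succ h1
          rw [hxv] at r1
          exact r1.succ h2
        have hs't' : s'.length + t'.length + 1 = k := by
          have hlv := congrArg List.length hv'
          simp only [hvlen, List.length_append, List.length_cons] at hlv
          omega
        refine ⟨((x ++ s') ++ a :: t') ++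
            ((x ++ s').drop ((x ++ s').length - (k - 1)) ++ [a]),
          s' ++ a :: (t' ++ ((x ++ s').drop ((x ++ s').length - (k - 1)) ++ [a])),
          by simpa using hre, ?_, ?_, ?_⟩
        · simp [List.append_assoc]
        · simp only [List.length_append, List.length_cons, List.length_drop,
            List.length_singleton]
          omega
        · rw [ha0]
          have hsuf1 : [a] <:+ (x ++ s').drop ((x ++ s').length - (k - 1)) ++ [a] :=
            ⟨_, rfl⟩
          exact hsuf1.trans ⟨(x ++ s') ++ a :: t', rfl⟩
    · -- inductive step : 1 ≤ j, j + 1 ≤ k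
      obtain ⟨y, r, hre, hyx, hrlen, hsuf⟩ := ih (by omega) (by omega)
      have hjk : j < k := by omega
      have hjw : j < w.length := by omega
      set a : A := w.get ⟨j, hjw⟩ with hadef
      have hax : a ∈ x := hRw a (List.get_mem _ _)
      obtain ⟨s, t, hst⟩ := List.append_of_mem hax
      have hy' : y = s ++ a :: (t ++ r) := by
        rw [hyx, hst]; simp [List.append_assoc]
      have hrest : k ≤ (t ++ r).length + 1 := by
        simp only [List.length_append]; omega
      have hre' : Reach k (2 * j) x (s ++ a :: (t ++ r)) := hy' ▸ hre
      obtain ⟨q, hqlen, hre2⟩ := pair hk a hre' hrest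
      rw [← hy'] at hre2
      set d : List A := y.drop (y.length - (k - 1)) with hd
      have hylen : k ≤ y.length := by
        rw [hyx]; simp only [List.length_append]; omega
      have hdlen : d.length = k - 1 := by
        rw [hd, List.length_drop]; omega
      have hdsuf : d <:+ y := List.drop_suffix _ _
      have hwj : w.take j <:+ d := by
        apply List.suffix_of_suffix_length_le hsuf hdsuf
        simp only [List.length_take, hdlen]
        omega
      have htake : w.take (j + 1) = w.take j ++ [a] := by
        rw [← List.take_concat_get hjw, List.concat_eq_append, hadef,
          List.get_eq_getElem]
      have hre3 : Reach k (2 * (j + 1)) x (y ++ q ++ (d ++ [a])) := by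
        have h22 : 2 * j + 2 = 2 * (j + 1) := by omega
        rw [← h22]
        exact hre2
      refine ⟨y ++ q ++ (d ++ [a]), r ++ (q ++ (d ++ [a])), hre3, ?_, ?_, ?_⟩
      · rw [hyx]; simp [List.append_assoc]
      · simp only [List.length_append, List.length_singleton, hqlen]; omega
      · rw [htake]
        exact (suffix_append_single hwj a).trans ⟨y ++ q, rfl⟩

end Stmt2Aux

theorem stmt2 {A : Type*} [Fintype A] [DecidableEq A] (k : ℕ)
    (x w : List A) (hx : k ≤ x.length) (hw : w.length = k)
    (hRw : w.toFinset ⊆ x.toFinset) :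
    ∃ y : List A, w <:+ y ∧
      ∃ m ≤ 2 * k, ∃ f : ℕ → List A, f 0 = x ∧ f m = y ∧
        ∀ i < m, EndStep k (f i) (f (i + 1)) := by
  rcases Nat.eq_zero_or_pos k with hk0 | hk
  · subst hk0
    have hwnil : w = [] := List.length_eq_zero_iff.mp hw
    exact ⟨x, hwnil ▸ List.nil_suffix, 0, by omega, fun _ => x, rfl, rfl,
      fun i h => absurd h (Nat.not_lt_zero i)⟩
  · have hRw' : ∀ a ∈ w, a ∈ x := fun a ha =>
      List.mem_toFinset.mp (hRw (List.mem_toFinset.mpr ha))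
    obtain ⟨y, r, hre, hyx, hrlen, hsuf⟩ :=
      Stmt2Aux.invar hk hx hw hRw' k hk (le_refl k)
    obtain ⟨f, h0, hm, hf⟩ := hre
    refine ⟨y, ?_, 2 * k, le_refl _, f, h0, hm, hf⟩
    rwa [← hw, List.take_length] at hsuf
end

section
/- Let Σ be a finite alphabet, k ≥ 1 and s ∈ Σ* with |s| ≥ k. For the tandem-replication system S^tan_k = (Σ, s, T^tan_k), cap(S^tan_k) = 0. -/
open Filter

def TanStep {A : Type*} (k : ℕ) (x y : List A) : Prop :=
  ∃ u v w : List A, v.length = k ∧ x = u ++ v ++ w ∧ y = u ++ v ++ v ++ w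

namespace TZ
variable {A : Type*}

def dup (k i : ℕ) (x : List A) : List A := x.take (i+k) ++ x.drop i

lemma dup_length {k i : ℕ} {x : List A} (h : i + k ≤ x.length) :
    (dup k i x).length = x.length + k := by
  simp [dup]; omega

lemma dup_spec {k : ℕ} (u v w : List A) (hv : v.length = k) :
    dup k u.length (u ++ (v ++ w)) = u ++ (v ++ (v ++ w)) := by
  have h1 : (u ++ (v ++ w)).take (u.length + k) = u ++ v := by
    rw [List.take_append]
    simp [List.take_of_length_le, hv, List.take_append]
  have h2 : (u ++ (v ++ w)).drop u.length = v ++ w := by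
    simp
  rw [dup, h1, h2, List.append_assoc]

lemma dup_comm {k j i : ℕ} {x : List A} (hji : j < i) (hik : i + k ≤ x.length) :
    dup k j (dup k i x) = dup k (i+k) (dup k j x) := by
  unfold dup
  rw [List.take_append, List.drop_append,
      List.take_append, List.drop_append]
  simp only [List.take_take, List.length_take, List.drop_drop]
  have e1 : j + k - min (i+k) x.length = 0 := by omega
  have e2 : j - min (i+k) x.length = 0 := by omega
  have e3 : min (j+k) (i+k) = j + k := by omega
  have e4 : i + k + k - min (j+k) x.length = i + k - j := by omega
  have e5 : min (i+k+k) (j+k) = j + k := by omega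
  have e6 : (x.take (j+k)).drop (i+k) = [] := by
    apply List.drop_eq_nil_of_le; simp; omega
  rw [e1, e2, e3, e4, e5, e6]
  simp only [List.take_zero, List.drop_zero, List.append_nil, List.nil_append]
  have e7 : (x.take (i+k)).drop j = (x.drop j).take (i + k - j) := List.drop_take ..
  have e9 : j + (i + k - (j + k) ⊓ x.length) = i := by omega
  simp only [Nat.add_zero, e7, e9, List.append_assoc]

end TZ

namespace TZ
variable {A : Type*}
lemma dup_absorb {k i i' : ℕ} {x : List A} (h1 : i ≤ i') (h2 : i' ≤ i + k)
    (hik : i + k ≤ x.length) :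
    dup k i' (dup k i x) = dup k i (dup k i x) := by
  unfold dup
  rw [List.take_append, List.drop_append,
      List.take_append, List.drop_append]
  simp only [List.take_take, List.length_take, List.drop_drop]
  have e1 : (i' + k) ⊓ (i + k) = i + k := by omega
  have e2 : i' + k - (i + k) ⊓ x.length = i' - i := by omega
  have e3 : i + (i' - (i + k) ⊓ x.length) = i := by omega
  have e4 : i + k - (i + k) ⊓ x.length = 0 := by omega
  have e5 : i + (i - (i + k) ⊓ x.length) = i := by omega
  have e6 : (x.take (i+k)).drop i' = ((x.drop i).drop (i' - i)).take (i + k - i') := by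
    have h : i + (i' - i) = i' := by omega
    rw [List.drop_take, List.drop_drop, h]
  have e7 : (x.take (i+k)).drop i = (x.drop i).take k := by
    have h : i + k - i = k := by omega
    rw [List.drop_take, h]
  have e8 : (x.drop i).take (i'-i) ++ ((x.drop i).drop (i' - i)).take (i + k - i')
      = (x.drop i).take k := by
    rw [← List.take_add]
    congr 1
    omega
  rw [e1, e2, e3, e4, e5, e6, e7]
  simp only [List.take_zero, List.nil_append, List.append_nil, List.append_assoc,
    ← List.append_assoc ((x.drop i).take (i'-i)), e8, Nat.min_self]
end TZ

namespace TZ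
variable {A : Type*}

lemma dupPow_length {k q : ℕ} {x : List A} (h : q + k ≤ x.length) (e : ℕ) :
    ((dup k q)^[e] x).length = x.length + e * k := by
  induction e with
  | zero => simp
  | succ e ih =>
    rw [Function.iterate_succ_apply', dup_length (by omega), ih]
    ring

/-- L1'': commute a dup at a smaller position past an iterated dup. -/
lemma dup_comm_iter {k i q : ℕ} {x : List A} (hiq : i < q) (hq : q + k ≤ x.length) (e : ℕ) :
    dup k i ((dup k q)^[e] x) = (dup k (q+k))^[e] (dup k i x) := by
  induction e with
  | zero => simp
  | succ e ih =>
    rw [Function.iterate_succ_apply', Function.iterate_succ_apply',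
      dup_comm hiq (by rw [dupPow_length hq]; omega), ih]

/-- L2'': absorb a dup inside the periodic run created by iterated dups. -/
lemma dup_absorb_iter {k q : ℕ} {x : List A} (hk : 1 ≤ k) (hq : q + k ≤ x.length) :
    ∀ e, 1 ≤ e → ∀ i, q ≤ i → i ≤ q + e * k →
    dup k i ((dup k q)^[e] x) = (dup k q)^[e+1] x := by
  intro e
  induction e with
  | zero => omega
  | succ e ih =>
    intro _ i h1 h2
    have hmul : (e+1) * k = e * k + k := by ring
    by_cases hc : i ≤ q + k
    · rw [Function.iterate_succ_apply', dup_absorb h1 hc (by rw [dupPow_length hq]; omega),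
        ← Function.iterate_succ_apply' (dup k q) e x,
        ← Function.iterate_succ_apply' (dup k q) (e+1) x]
    · -- i > q + k, so e ≥ 1 and we use dup_comm backwards
      push_neg at hc
      have he : 1 ≤ e := by
        by_contra h
        push_neg at h
        interval_cases e <;> omega
      have h3 : q < i - k := by omega
      have h4 : (i - k) + k ≤ ((dup k q)^[e] x).length := by
        rw [dupPow_length hq]; omega
      have step : dup k i (dup k q ((dup k q)^[e] x)) = dup k q (dup k (i-k) ((dup k q)^[e] x)) := by
        have hcm := dup_comm (k := k) (j := q) (i := i - k) (x := (dup k q)^[e] x) h3 h4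
        have h5 : i - k + k = i := by omega
        rw [hcm, h5]
      rw [Function.iterate_succ_apply', step, ih he (i-k) (by omega) (by omega),
        ← Function.iterate_succ_apply' (dup k q) (e+1) x]
end TZ

namespace TZ
variable {A : Type*}

def esum (l : List (ℕ × ℕ)) : ℕ := (l.map Prod.snd).sum

@[simp] lemma esum_nil : esum ([] : List (ℕ×ℕ)) = 0 := rfl
@[simp] lemma esum_cons (q e : ℕ) (t : List (ℕ×ℕ)) : esum ((q,e) :: t) = e + esum t := rfl

def apps (k : ℕ) (l : List (ℕ × ℕ)) (x : List A) : List A :=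
  l.foldr (fun p y => (dup k p.1)^[p.2] y) x

@[simp] lemma apps_nil (k : ℕ) (x : List A) : apps k [] x = x := rfl
@[simp] lemma apps_cons (k q e : ℕ) (t : List (ℕ×ℕ)) (x : List A) :
    apps k ((q,e) :: t) x = (dup k q)^[e] (apps k t x) := rfl

def reach (k : ℕ) : List (ℕ × ℕ) → ℕ
  | [] => 0
  | (q,e) :: _ => q + e * k

def canon (k L : ℕ) : List (ℕ × ℕ) → Prop
  | [] => True
  | (q,e) :: t => 1 ≤ e ∧ q + k ≤ L + k * esum t ∧ (t ≠ [] → reach k t < q) ∧ canon k L t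

lemma apps_length {k : ℕ} {s : List A} (hk : 1 ≤ k) :
    ∀ t : List (ℕ×ℕ), canon k s.length t → (apps k t s).length = s.length + k * esum t := by
  intro t
  induction t with
  | nil => simp
  | cons h t ih =>
    obtain ⟨q, e⟩ := h
    rintro ⟨he, hq, -, hc⟩
    rw [apps_cons, dupPow_length (by rw [ih hc]; omega), ih hc, esum_cons]
    ring

/-- The key insertion lemma. -/
lemma ins {k : ℕ} {s : List A} (hk : 1 ≤ k) :
    ∀ t : List (ℕ×ℕ), canon k s.length t → ∀ i, i + k ≤ s.length + k * esum t →
    ∃ t' : List (ℕ×ℕ), canon k s.length t' ∧ esum t' = esum t + 1 ∧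
      apps k t' s = dup k i (apps k t s) ∧
      reach k t' ≤ max (i + k) (reach k t + k) := by
  intro t
  induction t with
  | nil =>
    intro _ i hi
    refine ⟨[(i,1)], ⟨le_refl 1, by simpa using hi, by simp, trivial⟩, rfl, by simp [apps], ?_⟩
    simp [reach]
  | cons h t₂ ih =>
    obtain ⟨q, e⟩ := h
    rintro ⟨he, hq, hhead, hc₂⟩ i hi
    have hY : (apps k t₂ s).length = s.length + k * esum t₂ := apps_length hk t₂ hc₂
    have hqY : q + k ≤ (apps k t₂ s).length := by omega
    have hmul : (e+1) * k = e * k + k := by ring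
    by_cases hlt : i < q
    · -- i < q : commute past this run, recurse into t₂
      obtain ⟨t₂', hc', hes', happ', hre'⟩ := ih hc₂ i (by omega)
      refine ⟨(q + k, e) :: t₂', ⟨he, ?_, ?_, hc'⟩, ?_, ?_, ?_⟩
      · rw [hes', Nat.mul_add, Nat.mul_one]; omega
      · intro hne
        have hrt₂ : reach k t₂ < q := by
          rcases t₂ with _ | ⟨⟨q', e'⟩, t₃⟩
          · simp [reach]; omega
          · exact hhead (by simp)
        omega
      · simp [hes']; ring
      · rw [apps_cons, happ', apps_cons, dup_comm_iter hlt hqY]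
      · simp only [reach]; omega
    push_neg at hlt
    by_cases habs : i ≤ q + e * k
    · -- absorb into the head run
      refine ⟨(q, e+1) :: t₂, ⟨by omega, hq, hhead, hc₂⟩, by simp; omega, ?_, ?_⟩
      · rw [apps_cons, apps_cons, dup_absorb_iter hk hqY e he i hlt habs]
      · simp only [reach]; omega
    · -- new run strictly beyond the head run
      push_neg at habs
      refine ⟨(i, 1) :: (q,e) :: t₂, ⟨le_refl 1, by simpa using hi, fun _ => ?_, he, hq, hhead, hc₂⟩,
        by simp; omega, by simp [apps], ?_⟩
      · simpa [reach] using habs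
      · simp only [reach]; omega
end TZ

namespace TZ
variable {A : Type*}

lemma tanStep_dup {k : ℕ} {x y : List A} (h : TanStep k x y) :
    ∃ i, i + k ≤ x.length ∧ y = dup k i x := by
  obtain ⟨u, v, w, hv, hx, hy⟩ := h
  refine ⟨u.length, ?_, ?_⟩
  · subst hx; simp; omega
  · rw [hx, hy, List.append_assoc, List.append_assoc, List.append_assoc,
      dup_spec u v w hv]

lemma sys_canon {k : ℕ} {s : List A} (hk : 1 ≤ k) {x : List A}
    (hx : x ∈ Sys (TanStep k) s) :
    ∃ t, canon k s.length t ∧ x = apps k t s := by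
  induction hx with
  | refl => exact ⟨[], trivial, rfl⟩
  | tail hb hstep ih =>
    obtain ⟨t, hc, rfl⟩ := ih
    obtain ⟨i, hi, rfl⟩ := tanStep_dup hstep
    rw [apps_length hk t hc] at hi
    obtain ⟨t', hc', -, happ', -⟩ := ins hk t hc i hi
    exact ⟨t', hc', happ'.symm⟩

end TZ

namespace TZ
variable {A : Type*}

def toPE (k : ℕ) : List (ℕ × ℕ) → List (ℕ × ℕ)
  | [] => []
  | (q,e) :: t => (q - k * esum t, e) :: toPE k t

lemma le_of_canon {k L : ℕ} :
    ∀ (t : List (ℕ×ℕ)) (q e : ℕ), canon k L ((q,e) :: t) → k * esum t ≤ q := by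
  intro t
  induction t with
  | nil => intro q e _; simp
  | cons h r ih =>
    obtain ⟨q', e'⟩ := h
    rintro q e ⟨-, -, hr, hc⟩
    have h1 := hr (by simp)
    simp only [reach] at h1
    have h2 := ih q' e' hc
    have h3 : k * esum ((q',e') :: r) = k * e' + k * esum r := by
      rw [esum_cons, Nat.mul_add]
    have h4 : e' * k = k * e' := Nat.mul_comm ..
    omega

lemma toPE_lt {k L : ℕ} :
    ∀ (t : List (ℕ×ℕ)) (q e : ℕ), canon k L ((q,e) :: t) →
      ∀ pe ∈ toPE k t, pe.1 < q - k * esum t := by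
  intro t
  induction t with
  | nil => intro q e _; simp [toPE]
  | cons h r ih =>
    obtain ⟨q', e'⟩ := h
    rintro q e hc pe hpe
    obtain ⟨-, -, hr, hc'⟩ := hc
    have h1 := hr (by simp)
    simp only [reach] at h1
    have h2 := le_of_canon r q' e' hc'
    have h3 : k * esum ((q',e') :: r) = k * e' + k * esum r := by
      rw [esum_cons, Nat.mul_add]
    have h4 : e' * k = k * e' := Nat.mul_comm ..
    have hhd : q' - k * esum r < q - k * esum ((q',e') :: r) := by omega
    rcases hpe with _ | hpe
    · exact hhd
    · rename_i hpe'
      have := ih q' e' hc' pe hpe'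
      omega

lemma toPE_pairwise {k L : ℕ} :
    ∀ (t : List (ℕ×ℕ)), canon k L t → (toPE k t).Pairwise (fun a b => b.1 < a.1) := by
  intro t
  induction t with
  | nil => simp [toPE]
  | cons h r ih =>
    obtain ⟨q, e⟩ := h
    intro hc
    rw [toPE]
    refine List.Pairwise.cons ?_ (ih hc.2.2.2)
    intro pe hpe
    exact toPE_lt r q e hc pe hpe

lemma toPE_fst {k L : ℕ} (hk : 1 ≤ k) :
    ∀ (t : List (ℕ×ℕ)), canon k L t → ∀ pe ∈ toPE k t, pe.1 < L := by
  intro t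
  induction t with
  | nil => simp [toPE]
  | cons h r ih =>
    obtain ⟨q, e⟩ := h
    rintro hc pe hpe
    have hq := hc.2.1
    rcases hpe with _ | hpe
    · have h2 := le_of_canon (k := k) (L := L) r q e hc
      simp only
      omega
    · rename_i hpe'
      exact ih hc.2.2.2 pe hpe'

lemma toPE_snd {k L : ℕ} :
    ∀ (t : List (ℕ×ℕ)), canon k L t → ∀ pe ∈ toPE k t, 1 ≤ pe.2 ∧ pe.2 ≤ esum t := by
  intro t
  induction t with
  | nil => simp [toPE]
  | cons h r ih =>
    obtain ⟨q, e⟩ := h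
    rintro ⟨he, -, -, hc⟩ pe hpe
    rcases hpe with _ | hpe
    · exact ⟨he, by simp⟩
    · rename_i hpe'
      have := ih hc pe hpe'
      simp only [esum_cons]
      omega

lemma toPE_inj {k L : ℕ} :
    ∀ (t₁ t₂ : List (ℕ×ℕ)), canon k L t₁ → canon k L t₂ →
      toPE k t₁ = toPE k t₂ → t₁ = t₂ := by
  intro t₁
  induction t₁ with
  | nil =>
    intro t₂ _ _ h
    rcases t₂ with _ | ⟨⟨q,e⟩, r⟩
    · rfl
    · simp [toPE] at h
  | cons h r₁ ih =>
    obtain ⟨q₁, e₁⟩ := h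
    intro t₂ hc₁ hc₂ h
    rcases t₂ with _ | ⟨⟨q₂,e₂⟩, r₂⟩
    · simp [toPE] at h
    · simp only [toPE, List.cons.injEq, Prod.mk.injEq] at h
      obtain ⟨⟨hp, he⟩, ht⟩ := h
      have hr : r₁ = r₂ := ih r₂ hc₁.2.2.2 hc₂.2.2.2 ht
      subst hr he
      have h1 := le_of_canon (k := k) (L := L) r₁ q₁ e₁ hc₁
      have h2 := le_of_canon (k := k) (L := L) r₁ q₂ e₁ hc₂
      have : q₁ = q₂ := by omega
      rw [this]

end TZ

namespace TZ

def fNat (l : List (ℕ × ℕ)) (p : ℕ) : ℕ :=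
  ((l.find? (fun pe => pe.1 == p)).map Prod.snd).getD 0

@[simp] lemma fNat_nil (p : ℕ) : fNat [] p = 0 := rfl

lemma fNat_head (p e : ℕ) (r : List (ℕ×ℕ)) : fNat ((p,e) :: r) p = e := by
  simp [fNat, List.find?_cons_of_pos]

lemma fNat_tail {p p' : ℕ} (e : ℕ) (r : List (ℕ×ℕ)) (h : p ≠ p') :
    fNat ((p,e) :: r) p' = fNat r p' := by
  simp only [fNat]
  rw [List.find?_cons_of_neg]
  simpa using h

lemma fNat_zero {l : List (ℕ×ℕ)} {p : ℕ} (h : ∀ pe ∈ l, pe.1 ≠ p) : fNat l p = 0 := by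
  simp only [fNat]
  rw [List.find?_eq_none.mpr (by simpa using h)]
  rfl

lemma graph_inj (L : ℕ) :
    ∀ l₁ l₂ : List (ℕ×ℕ),
      l₁.Pairwise (fun a b => b.1 < a.1) → l₂.Pairwise (fun a b => b.1 < a.1) →
      (∀ pe ∈ l₁, 1 ≤ pe.2 ∧ pe.1 < L) → (∀ pe ∈ l₂, 1 ≤ pe.2 ∧ pe.1 < L) →
      (∀ p, p < L → fNat l₁ p = fNat l₂ p) → l₁ = l₂ := by
  intro l₁
  induction l₁ with
  | nil =>
    intro l₂ _ _ _ hb₂ hf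
    rcases l₂ with _ | ⟨⟨p,e⟩, r⟩
    · rfl
    · exfalso
      obtain ⟨he, hp⟩ := hb₂ (p,e) (by simp)
      have := hf p hp
      rw [fNat_head] at this
      simp at this
      omega
  | cons hd r₁ ih =>
    obtain ⟨p₁, e₁⟩ := hd
    intro l₂ hs₁ hs₂ hb₁ hb₂ hf
    rcases l₂ with _ | ⟨⟨p₂,e₂⟩, r₂⟩
    · exfalso
      obtain ⟨he, hp⟩ := hb₁ (p₁,e₁) (by simp)
      have := hf p₁ hp
      rw [fNat_head] at this
      simp at this
      omega
    · -- both cons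
      have hp₁ := (hb₁ (p₁,e₁) (by simp)).2
      have hp₂ := (hb₂ (p₂,e₂) (by simp)).2
      have hmax₁ : ∀ pe ∈ r₁, pe.1 < p₁ := by
        intro pe hpe; exact (List.pairwise_cons.mp hs₁).1 pe hpe
      have hmax₂ : ∀ pe ∈ r₂, pe.1 < p₂ := by
        intro pe hpe; exact (List.pairwise_cons.mp hs₂).1 pe hpe
      have hpp : p₁ = p₂ := by
        by_contra hne
        rcases Nat.lt_or_ge p₁ p₂ with hlt | hge
        · have h1 := hf p₂ hp₂
          rw [fNat_head, fNat_tail e₁ r₁ (by omega),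
            fNat_zero (fun pe hpe => by have := hmax₁ pe hpe; omega)] at h1
          have := (hb₂ (p₂,e₂) (by simp)).1
          omega
        · have hlt : p₂ < p₁ := by omega
          have h1 := hf p₁ hp₁
          rw [fNat_head, fNat_tail e₂ r₂ (by omega),
            fNat_zero (fun pe hpe => by have := hmax₂ pe hpe; omega)] at h1
          have := (hb₁ (p₁,e₁) (by simp)).1
          omega
      subst hpp
      have hee : e₁ = e₂ := by
        have := hf p₁ hp₁
        rwa [fNat_head, fNat_head] at this
      subst hee
      have hr : r₁ = r₂ := by
        refine ih r₂ (List.pairwise_cons.mp hs₁).2 (List.pairwise_cons.mp hs₂).2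
          (fun pe hpe => hb₁ pe (by simp [hpe])) (fun pe hpe => hb₂ pe (by simp [hpe])) ?_
        intro p hp
        by_cases hpeq : p = p₁
        · subst hpeq
          rw [fNat_zero (fun pe hpe => by have := hmax₁ pe hpe; omega),
            fNat_zero (fun pe hpe => by have := hmax₂ pe hpe; omega)]
        · have := hf p hp
          rwa [fNat_tail e₁ r₁ (Ne.symm hpeq), fNat_tail e₁ r₂ (Ne.symm hpeq)] at this
      rw [hr]

end TZ

namespace TZ
variable {A : Type*}

lemma fNat_le {l : List (ℕ×ℕ)} {n p : ℕ} (h : ∀ pe ∈ l, pe.2 ≤ n) : fNat l p ≤ n := by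
  unfold fNat
  rcases hfind : l.find? (fun pe => pe.1 == p) with _ | pe
  · simp [hfind]
  · rw [hfind]
    simpa using h pe (List.mem_of_find?_eq_some hfind)

lemma count_le {k : ℕ} (hk : 1 ≤ k) (s : List A) (n : ℕ) :
    ({x ∈ Sys (TanStep k) s | x.length = n} : Set (List A)).ncard ≤ (n+1) ^ s.length := by
  classical
  set L := s.length with hL
  set T : Set (List (ℕ×ℕ)) := {t | canon k L t ∧ L + k * esum t = n} with hT
  have hsub : ({x ∈ Sys (TanStep k) s | x.length = n} : Set (List A))
      ⊆ (fun t => apps k t s) '' T := by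
    rintro x ⟨hx, hlen⟩
    obtain ⟨t, hc, rfl⟩ := sys_canon hk hx
    exact ⟨t, ⟨hc, by rw [← hlen, apps_length hk t hc]⟩, rfl⟩
  -- esum bound on T
  have hesum : ∀ t ∈ T, esum t ≤ n := by
    rintro t ⟨-, hlen⟩
    have : esum t ≤ k * esum t := Nat.le_mul_of_pos_left _ (by omega)
    omega
  set G : List (ℕ×ℕ) → (Fin L → Fin (n+1)) :=
    fun t p => ⟨min (fNat (toPE k t) p) n, by omega⟩ with hG
  have hfval : ∀ t ∈ T, ∀ p : ℕ, fNat (toPE k t) p ≤ n := by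
    rintro t ht p
    refine fNat_le ?_
    intro pe hpe
    exact le_trans (toPE_snd t ht.1 pe hpe).2 (hesum t ht)
  have hGinj : Set.InjOn G T := by
    rintro t₁ ht₁ t₂ ht₂ heq
    refine toPE_inj t₁ t₂ ht₁.1 ht₂.1 ?_
    refine graph_inj L _ _ (toPE_pairwise t₁ ht₁.1) (toPE_pairwise t₂ ht₂.1)
      (fun pe hpe => ⟨(toPE_snd t₁ ht₁.1 pe hpe).1, toPE_fst hk t₁ ht₁.1 pe hpe⟩)
      (fun pe hpe => ⟨(toPE_snd t₂ ht₂.1 pe hpe).1, toPE_fst hk t₂ ht₂.1 pe hpe⟩) ?_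
    intro p hp
    have := congrFun heq ⟨p, hp⟩
    simp only [hG, Fin.mk.injEq] at this
    rw [min_eq_left (hfval t₁ ht₁ p), min_eq_left (hfval t₂ ht₂ p)] at this
    exact this
  have hTfin : T.Finite := Set.Finite.of_finite_image (Set.toFinite _) hGinj
  calc ({x ∈ Sys (TanStep k) s | x.length = n} : Set (List A)).ncard
      ≤ ((fun t => apps k t s) '' T).ncard := Set.ncard_le_ncard hsub (hTfin.image _)
    _ ≤ T.ncard := Set.ncard_image_le hTfin
    _ ≤ (Set.univ : Set (Fin L → Fin (n+1))).ncard :=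
        Set.ncard_le_ncard_of_injOn G (fun a _ => Set.mem_univ _) hGinj Set.finite_univ
    _ = (n+1) ^ L := by
        rw [Set.ncard_univ, Nat.card_eq_fintype_card, Fintype.card_fun]
        simp

end TZ

theorem stmt3 {A : Type*} [Fintype A] [DecidableEq A] (k : ℕ) (hk : 1 ≤ k)
    (s : List A) (hs : k ≤ s.length) :
    cap (Sys (TanStep k) s) = 0 := by
  set S := Sys (TanStep k) s with hS
  set L := s.length with hL
  set a : ℕ → ℝ := fun n =>
    Real.logb 2 ((({x ∈ S | x.length = n} : Set (List A)).ncard : ℝ)) / (n : ℝ) with ha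
  have hcap : cap S = Filter.limsup a Filter.atTop := rfl
  have hLpos : 1 ≤ L := le_trans hk hs
  have hln2 : Real.log 2 ≠ 0 := ne_of_gt (Real.log_pos (by norm_num))
  -- the counting bound
  have hN : ∀ n : ℕ, (({x ∈ S | x.length = n} : Set (List A)).ncard : ℝ) ≤ ((n:ℝ)+1)^L := by
    intro n
    have h := TZ.count_le hk s n
    calc (({x ∈ S | x.length = n} : Set (List A)).ncard : ℝ)
        ≤ (((n+1)^L : ℕ) : ℝ) := by exact_mod_cast h
      _ = ((n:ℝ)+1)^L := by push_cast; ring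
  -- nonnegativity
  have h0 : ∀ n : ℕ, (0:ℝ) ≤ a n := by
    intro n
    apply div_nonneg _ (Nat.cast_nonneg n)
    rcases Nat.eq_zero_or_pos (({x ∈ S | x.length = n} : Set (List A)).ncard) with h | h
    · rw [h]; simp
    · exact Real.logb_nonneg (by norm_num) (by exact_mod_cast h)
  -- upper bound
  have hub : ∀ n : ℕ, a n ≤ ((L : ℝ) * Real.logb 2 ((n:ℝ)+1)) / n := by
    intro n
    have hnum : Real.logb 2 ((({x ∈ S | x.length = n} : Set (List A)).ncard : ℝ))
        ≤ (L : ℝ) * Real.logb 2 ((n:ℝ)+1) := by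
      rcases Nat.eq_zero_or_pos (({x ∈ S | x.length = n} : Set (List A)).ncard) with h | h
      · rw [h]
        simp only [Nat.cast_zero, Real.logb_zero]
        have : (0:ℝ) ≤ Real.logb 2 ((n:ℝ)+1) := by
          apply Real.logb_nonneg (by norm_num)
          have : (0:ℝ) ≤ (n:ℝ) := Nat.cast_nonneg n
          linarith
        positivity
      · calc Real.logb 2 ((({x ∈ S | x.length = n} : Set (List A)).ncard : ℝ))
            ≤ Real.logb 2 (((n:ℝ)+1)^L) := by
              apply Real.logb_le_logb_of_le (by norm_num) (by exact_mod_cast h) (hN n)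
          _ = (L : ℝ) * Real.logb 2 ((n:ℝ)+1) := Real.logb_pow ..
    rcases Nat.eq_zero_or_pos n with rfl | hn
    · simp [ha]
    · have hnpos : (0:ℝ) < n := by exact_mod_cast hn
      exact div_le_div_of_nonneg_right hnum hnpos.le
  -- the dominating sequence tends to zero
  have h1 : Filter.Tendsto (fun x : ℝ => Real.log x / x) Filter.atTop (nhds 0) := by
    simpa using Real.isLittleO_log_id_atTop.tendsto_div_nhds_zero
  have h2 : Filter.Tendsto (fun n : ℕ => ((n:ℝ)+1)) Filter.atTop Filter.atTop :=
    tendsto_atTop_add_const_right _ 1 tendsto_natCast_atTop_atTop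
  have h3 : Filter.Tendsto (fun n : ℕ => Real.log ((n:ℝ)+1) / ((n:ℝ)+1))
      Filter.atTop (nhds 0) := h1.comp h2
  have h4 : Filter.Tendsto (fun n : ℕ => ((n:ℝ)+1)/(n:ℝ)) Filter.atTop (nhds 1) := by
    have hev : (fun n : ℕ => 1 + 1/(n:ℝ)) =ᶠ[Filter.atTop] (fun n : ℕ => ((n:ℝ)+1)/(n:ℝ)) := by
      filter_upwards [Filter.eventually_ge_atTop 1] with n hn
      have hne : (n:ℝ) ≠ 0 := by
        have : (0:ℝ) < n := by exact_mod_cast hn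
        exact ne_of_gt this
      field_simp
    have hlim : Filter.Tendsto (fun n : ℕ => 1 + 1/(n:ℝ)) Filter.atTop (nhds 1) := by
      have := tendsto_one_div_atTop_nhds_zero_nat.const_add (1:ℝ)
      simpa using this
    exact hlim.congr' hev
  have h5 : Filter.Tendsto
      (fun n : ℕ => ((L:ℝ) / Real.log 2) * (Real.log ((n:ℝ)+1)/((n:ℝ)+1) * (((n:ℝ)+1)/(n:ℝ))))
      Filter.atTop (nhds 0) := by
    have := (h3.mul h4).const_mul ((L:ℝ) / Real.log 2)
    simpa using this
  have htop : Filter.Tendsto (fun n : ℕ => ((L:ℝ) * Real.logb 2 ((n:ℝ)+1))/(n:ℝ))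
      Filter.atTop (nhds 0) := by
    apply h5.congr'
    filter_upwards [Filter.eventually_ge_atTop 1] with n hn
    have hne : (n:ℝ) ≠ 0 := by
      have : (0:ℝ) < n := by exact_mod_cast hn
      exact ne_of_gt this
    have hne1 : ((n:ℝ)+1) ≠ 0 := by positivity
    rw [Real.logb]
    field_simp
    try ring
  have hsq : Filter.Tendsto a Filter.atTop (nhds 0) :=
    tendsto_of_tendsto_of_tendsto_of_le_of_le' tendsto_const_nhds htop
      (Filter.Eventually.of_forall h0) (Filter.Eventually.of_forall hub)
  rw [hcap]
  exact hsq.limsup_eq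
end

section
/- Fix k ≥ 1 and an initial string s with |s| ≥ k defining b 'bins' (b equals one more than the number of indices i with φ(s'_i) ≠ φ(s'_{i+1}), where s'_i are the overlapping k-substrings of s and φ denotes cyclic-equivalence class). Then the number of distinct strings obtainable from s by exactly m tandem replications T^tan_{i,k} is at most C(b+m−1, b−1); in particular the number of strings of length n in S^tan_k grows at most polynomially in n. -/
open Filter

namespace TanProof

variable {A : Type*}

/-- insert a duplicate of the `k`-window at position `p` -/
def ins (k p : ℕ) (t : List A) : List A := t.take (p + k) ++ t.drop p

def MSet (k : ℕ) (t : List A) (m : ℕ) : Set (List A) :=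
  {y | ∃ f : ℕ → List A, f 0 = t ∧ f m = y ∧ ∀ i < m, TanStep k (f i) (f (i + 1))}

def repl : ℕ → List A → List A
  | 0, _ => []
  | a+1, v => v ++ repl a v

@[simp] lemma repl_zero (v : List A) : repl 0 v = [] := rfl
@[simp] lemma repl_succ (a : ℕ) (v : List A) : repl (a+1) v = v ++ repl a v := rfl

@[simp] lemma length_repl (a : ℕ) (v : List A) : (repl a v).length = a * v.length := by
  induction a with
  | zero => simp
  | succ a ih => simp [ih, Nat.succ_mul, Nat.add_comm]

lemma length_ins {k p : ℕ} {t : List A} (hp : p + k ≤ t.length) :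
    (ins k p t).length = t.length + k := by
  simp [ins]
  omega

lemma getElem?_ins {k p : ℕ} {t : List A} (hp : p + k ≤ t.length) (r : ℕ) :
    (ins k p t)[r]? = if r < p + k then t[r]? else t[r - k]? := by
  unfold ins
  rcases lt_or_ge r (p + k) with h | h
  · rw [List.getElem?_append_left (by simp; omega), List.getElem?_take]
    simp [h]
  · rw [List.getElem?_append_right (by simp; omega), List.getElem?_drop]
    have : p + (r - (t.take (p+k)).length) = r - k := by simp; omega
    rw [this, if_neg (by omega)]

lemma tanStep_iff {k : ℕ} {t y : List A} :
    TanStep k t y ↔ ∃ p, p + k ≤ t.length ∧ y = ins k p t := by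
  constructor
  · rintro ⟨u, v, w, hv, rfl, rfl⟩
    refine ⟨u.length, by simp; omega, ?_⟩
    unfold ins
    rw [List.append_assoc, List.take_append, List.drop_append]
    simp [List.take_append, hv, List.take_of_length_le hv.le]
  · rintro ⟨p, hp, rfl⟩
    refine ⟨t.take p, (t.drop p).take k, t.drop (p + k), by simp; omega, ?_, ?_⟩
    · rw [List.append_assoc]
      nth_rewrite 1 [← List.take_append_drop p t]
      congr 1
      nth_rewrite 1 [← List.take_append_drop k (t.drop p)]
      simp [List.drop_drop, Nat.add_comm]
    · unfold ins
      rw [List.take_add]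
      nth_rewrite 3 [← List.take_append_drop k (t.drop p)]
      simp [List.drop_drop, Nat.add_comm]

/-- periodicity with period `k` on positions `< n` -/
def Per (k : ℕ) (t : List A) (n : ℕ) : Prop :=
  ∀ q, q < n → q + k < t.length → t[q]? = t[q + k]?

lemma Per.mono {k : ℕ} {t : List A} {n n' : ℕ} (h : Per k t n) (hn : n' ≤ n) :
    Per k t n' := fun q hq hl => h q (lt_of_lt_of_le hq hn) hl

lemma ins_eq_ins {k p α : ℕ} {t : List A} (hα : α ≤ p) (hp : p + k ≤ t.length)
    (per : Per k t p) : ins k p t = ins k α t := by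
  apply List.ext_getElem?
  intro r
  rw [getElem?_ins hp, getElem?_ins (by omega)]
  rcases lt_or_ge r (α + k) with h | h
  · rw [if_pos (by omega), if_pos h]
  rcases lt_or_ge r (p + k) with h2 | h2
  · rw [if_pos h2, if_neg (by omega)]
    rcases lt_or_ge (r - k) t.length with h3 | h3
    · have h4 := per (r - k) (by omega) (by omega)
      rw [show r - k + k = r by omega] at h4
      exact h4.symm
    · rw [List.getElem?_eq_none (by omega), List.getElem?_eq_none h3]
  · rw [if_neg (by omega), if_neg (by omega)]

lemma ins_zero (k : ℕ) (t : List A) : ins k 0 t = t.take k ++ t := by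
  simp [ins]

lemma ins_append {k p : ℕ} {X z : List A} (h : X.length ≤ p) :
    ins k p (X ++ z) = X ++ ins k (p - X.length) z := by
  unfold ins
  rw [List.take_append, List.drop_append,
    List.take_of_length_le (by omega), List.drop_eq_nil_of_le (by omega)]
  have : p + k - X.length = p - X.length + k := by omega
  simp [this]

lemma MSet_zero (k : ℕ) (t : List A) : MSet k t 0 = {t} := by
  ext y
  constructor
  · rintro ⟨f, h0, hm, -⟩
    simp [← h0, ← hm]
  · rintro rfl
    exact ⟨fun _ => y, rfl, rfl, by omega⟩

lemma mem_MSet_succ {k m : ℕ} {t y : List A} :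
    y ∈ MSet k t (m + 1) ↔ ∃ x ∈ MSet k t m, TanStep k x y := by
  constructor
  · rintro ⟨f, h0, hm, hstep⟩
    exact ⟨f m, ⟨f, h0, rfl, fun i hi => hstep i (by omega)⟩, hm ▸ hstep m (by omega)⟩
  · rintro ⟨x, ⟨f, h0, hm, hstep⟩, hxy⟩
    refine ⟨fun i => if i ≤ m then f i else y, by simp [h0], by simp, ?_⟩
    intro i hi
    rcases lt_or_ge i m with h | h
    · simpa [Nat.le_of_lt h, h.le, Nat.succ_le_of_lt h] using hstep i h
    · have : i = m := by omega
      subst this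
      simpa [hm] using hxy

lemma length_of_mem_MSet {k m : ℕ} {t y : List A} (h : y ∈ MSet k t m) :
    y.length = t.length + k * m := by
  induction m generalizing y with
  | zero => rw [MSet_zero] at h; rw [Set.mem_singleton_iff.mp h]; simp
  | succ m ih =>
    rw [mem_MSet_succ] at h
    obtain ⟨x, hx, hstep⟩ := h
    obtain ⟨p, hp, rfl⟩ := tanStep_iff.mp hstep
    rw [length_ins hp, ih hx]
    ring

lemma prefix_of_mem_MSet {k m : ℕ} {t y : List A} (h : y ∈ MSet k t m) {q : ℕ} (hq : q < k) :
    y[q]? = t[q]? := by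
  induction m generalizing y with
  | zero => rw [MSet_zero] at h; rw [Set.mem_singleton_iff.mp h]
  | succ m ih =>
    rw [mem_MSet_succ] at h
    obtain ⟨x, hx, hstep⟩ := h
    obtain ⟨p, hp, rfl⟩ := tanStep_iff.mp hstep
    rw [getElem?_ins hp, if_pos (by omega)]
    exact ih hx

lemma finite_MSet [Finite A] (k : ℕ) (t : List A) (m : ℕ) : (MSet k t m).Finite := by
  apply (List.finite_length_eq A (t.length + k * m)).subset
  intro y hy
  exact length_of_mem_MSet hy

section Brk

variable [DecidableEq A]

def Brk (k : ℕ) (t : List A) : Finset ℕ :=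
  (Finset.range t.length).filter (fun q => q + k < t.length ∧ t[q]? ≠ t[q + k]?)

lemma mem_Brk {k : ℕ} {t : List A} {q : ℕ} :
    q ∈ Brk k t ↔ q + k < t.length ∧ t[q]? ≠ t[q + k]? := by
  simp only [Brk, Finset.mem_filter, Finset.mem_range]
  constructor
  · rintro ⟨-, h⟩; exact h
  · rintro ⟨h1, h2⟩; exact ⟨by omega, h1, h2⟩

lemma per_of_brk_empty {k : ℕ} {t : List A} (h : Brk k t = ∅) (n : ℕ) : Per k t n := by
  intro q hq hlen
  by_contra hne
  have : q ∈ Brk k t := mem_Brk.mpr ⟨hlen, hne⟩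
  simp [h] at this

end Brk

lemma per_cons {k n : ℕ} {v y : List A} (hv : v.length = k)
    (hhead : ∀ q, q < k → q < y.length → y[q]? = v[q]?)
    (hy : Per k y n) : Per k (v ++ y) (n + k) := by
  intro q hq hlen
  rw [List.length_append, hv] at hlen
  rcases lt_or_ge q k with h | h
  · rw [List.getElem?_append_left (by omega), List.getElem?_append_right (by omega)]
    rw [hv, show q + k - k = q by omega]
    exact (hhead q h (by omega)).symm
  · rw [List.getElem?_append_right (by omega), List.getElem?_append_right (by omega), hv]
    have h4 := hy (q - k) (by omega) (by rw [show q - k + k = q by omega]; omega)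
    rw [show q - k + k = q by omega] at h4
    rw [show q + k - k = q by omega]
    exact h4

lemma head_repl {a k : ℕ} {v w : List A} (hv : v.length = k)
    (hw : ∀ q, q < k → q < w.length → w[q]? = v[q]?) :
    ∀ q, q < k → q < (repl a v ++ w).length → (repl a v ++ w)[q]? = v[q]? := by
  induction a with
  | zero => simpa using hw
  | succ a ih =>
    intro q hq hlen
    rw [repl_succ, List.append_assoc, List.getElem?_append_left (by omega)]

lemma per_repl {a k n : ℕ} {v w : List A} (hv : v.length = k)
    (hw : ∀ q, q < k → q < w.length → w[q]? = v[q]?)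
    (hn : Per k w n) : Per k (repl a v ++ w) (k * a + n) := by
  induction a with
  | zero => simpa using hn
  | succ a ih =>
    have h := per_cons hv (head_repl hv hw) ih
    rw [← List.append_assoc, ← repl_succ] at h
    exact h.mono (by ring_nf; omega)

lemma take_eq_of_head {k : ℕ} {v y : List A} (hv : v.length = k) (hk : k ≤ y.length)
    (hhead : ∀ q, q < k → q < y.length → y[q]? = v[q]?) : y.take k = v := by
  apply List.ext_getElem?
  intro r
  rw [List.getElem?_take]
  rcases lt_or_ge r k with h | h
  · rw [if_pos h]
    exact hhead r h (by omega)
  · rw [if_neg (by omega), eq_comm]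
    exact List.getElem?_eq_none (by omega)


section Struct
variable [DecidableEq A]

lemma struct0 {k : ℕ} {t : List A} (hkt : k ≤ t.length) (hB : Brk k t = ∅)
    {m : ℕ} {y : List A} (hy : y ∈ MSet k t m) : y = repl m (t.take k) ++ t := by
  have hv : (t.take k).length = k := by simp [hkt]
  have hhead : ∀ q, q < k → q < t.length → t[q]? = (t.take k)[q]? := by
    intro q hq _
    rw [List.getElem?_take, if_pos hq]
  induction m generalizing y with
  | zero => rw [MSet_zero] at hy; rw [Set.mem_singleton_iff.mp hy]; simp
  | succ m ih =>
    rw [mem_MSet_succ] at hy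
    obtain ⟨y₁, hy₁, hstep⟩ := hy
    obtain ⟨p, hp, rfl⟩ := tanStep_iff.mp hstep
    have e1 := ih hy₁
    subst e1
    have hlen : (repl m (t.take k) ++ t).length = k * m + t.length := by
      simp [hv, Nat.mul_comm]
    have hper : Per k (repl m (t.take k) ++ t) (k * m + t.length) :=
      per_repl hv (fun q hq hql => hhead q hq hql) (per_of_brk_empty hB _)
    rw [ins_eq_ins (Nat.zero_le p) hp (hper.mono (by omega)), ins_zero]
    rw [take_eq_of_head hv (by omega) (head_repl hv (fun q hq hql => hhead q hq hql))]
    simp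

lemma struct1 {k : ℕ} (hk : 1 ≤ k) {t : List A} {d : ℕ}
    (hd : d ∈ Brk k t) (hmin : ∀ e ∈ Brk k t, d ≤ e) {m : ℕ} {y : List A}
    (hy : y ∈ MSet k t m) :
    ∃ a z, a ≤ m ∧ z ∈ MSet k (t.drop (d + 1)) (m - a) ∧
      y = repl a (t.take k) ++ (t.take (d + 1) ++ z) := by
  have hdk : d + k < t.length := (mem_Brk.mp hd).1
  have hkt : k ≤ t.length := by omega
  have hv : (t.take k).length = k := by simp [hkt]
  have hT : (t.take (d + 1)).length = d + 1 := by simp; omega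
  have ht' : (t.drop (d + 1)).length = t.length - (d + 1) := by simp
  induction m generalizing y with
  | zero =>
    rw [MSet_zero] at hy
    rw [Set.mem_singleton_iff.mp hy]
    refine ⟨0, t.drop (d + 1), le_refl 0, ?_, by simp⟩
    rw [MSet_zero]; rfl
  | succ m ih =>
    rw [mem_MSet_succ] at hy
    obtain ⟨y₁, hy₁, hstep⟩ := hy
    obtain ⟨p, hp, rfl⟩ := tanStep_iff.mp hstep
    obtain ⟨a, z, ha, hz, e1⟩ := ih hy₁
    subst e1
    have hzlen : z.length = t.length - (d + 1) + k * (m - a) := by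
      rw [length_of_mem_MSet hz, ht']
    -- `w` is the tail after the replicated part
    set w : List A := t.take (d + 1) ++ z with hw
    -- entries of `w` agree with `t` below `d + 1 + k`
    have hwt : ∀ r, r < d + 1 + k → w[r]? = t[r]? := by
      intro r hr
      rcases lt_or_ge r (d + 1) with h | h
      · rw [List.getElem?_append_left (by omega), List.getElem?_take, if_pos h]
      · rw [List.getElem?_append_right (by omega), hT]
        rw [prefix_of_mem_MSet hz (q := r - (d + 1)) (by omega), List.getElem?_drop]
        congr 1
        omega
    have hwhead : ∀ q, q < k → q < w.length → w[q]? = (t.take k)[q]? := by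
      intro q hq _
      rw [hwt q (by omega), List.getElem?_take, if_pos hq]
    have hwper : Per k w d := by
      intro q hq hql
      rw [hwt q (by omega), hwt (q + k) (by omega)]
      by_contra hne
      have : q ∈ Brk k t := mem_Brk.mpr ⟨by omega, hne⟩
      have := hmin q this
      omega
    have hy₁len : (repl a (t.take k) ++ w).length = k * a + (d + 1) + z.length := by
      rw [List.length_append, length_repl, hv, hw, List.length_append, hT]
      ring
    rcases lt_or_ge p (k * a + (d + 1)) with hp1 | hp1
    · -- duplication inside the first run
      have hper : Per k (repl a (t.take k) ++ w) (k * a + d) := per_repl hv hwhead hwper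
      rw [ins_eq_ins (Nat.zero_le p) hp (hper.mono (by omega)), ins_zero]
      rw [take_eq_of_head hv (by omega) (head_repl hv hwhead)]
      exact ⟨a + 1, z, by omega, by rwa [show m + 1 - (a + 1) = m - a by omega], by simp [hw]⟩
    · -- duplication beyond the first run
      have hXlen : (repl a (t.take k) ++ t.take (d + 1)).length = k * a + (d + 1) := by
        simp [hv, hT, Nat.mul_comm]
      rw [← List.append_assoc, ins_append (by rw [hXlen]; omega), hXlen]
      refine ⟨a, ins k (p - (k * a + (d + 1))) z, by omega, ?_, by simp⟩
      have hm : m + 1 - a = (m - a) + 1 := by omega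
      rw [hm, mem_MSet_succ]
      refine ⟨z, hz, tanStep_iff.mpr ⟨p - (k * a + (d + 1)), by omega, rfl⟩⟩

end Struct

section Count
variable [DecidableEq A]

lemma card_Brk_drop {k d : ℕ} {t : List A} (hd : d ∈ Brk k t)
    (hmin : ∀ e ∈ Brk k t, d ≤ e) :
    (Brk k (t.drop (d + 1))).card + 1 = (Brk k t).card := by
  have hdk : d + k < t.length := (mem_Brk.mp hd).1
  have himg : (Brk k t).erase d = (Brk k (t.drop (d + 1))).image (· + (d + 1)) := by
    ext e
    simp only [Finset.mem_erase, Finset.mem_image, mem_Brk, List.getElem?_drop,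
      List.length_drop]
    constructor
    · rintro ⟨hne, hlen, hne2⟩
      have hde : d < e := lt_of_le_of_ne (hmin e (mem_Brk.mpr ⟨hlen, hne2⟩)) (Ne.symm hne)
      refine ⟨e - (d + 1), ⟨by omega, ?_⟩, by omega⟩
      rw [show d + 1 + (e - (d + 1)) = e by omega, show d + 1 + (e - (d + 1) + k) = e + k by omega]
      exact hne2
    · rintro ⟨q, ⟨hlen, hne2⟩, rfl⟩
      refine ⟨by omega, by omega, ?_⟩
      rw [show q + (d + 1) + k = d + 1 + (q + k) by omega,
        show q + (d + 1) = d + 1 + q by omega]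
      exact hne2
  have h1 : ((Brk k t).erase d).card = (Brk k t).card - 1 := Finset.card_erase_of_mem hd
  have h2 : ((Brk k (t.drop (d + 1))).image (· + (d + 1))).card
      = (Brk k (t.drop (d + 1))).card :=
    Finset.card_image_of_injective _ (fun x y h => by simpa using h)
  have h3 : 1 ≤ (Brk k t).card := Finset.card_pos.mpr ⟨d, hd⟩
  rw [himg] at h1
  omega

lemma hockey (c m : ℕ) :
    ∑ i ∈ Finset.range (m + 1), (i + c).choose c = (m + c + 1).choose (c + 1) := by
  induction m with
  | zero => simp
  | succ m ih =>
    rw [Finset.sum_range_succ, ih, show m + 1 + c + 1 = (m + c + 1) + 1 by ring,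
      Nat.choose_succ_succ' (m + c + 1) c, show m + 1 + c = m + c + 1 by ring]
    omega

lemma choose_le_pow_aux : ∀ c m : ℕ, (m + c).choose c ≤ (m + 1) ^ c := by
  intro c
  induction c with
  | zero => simp
  | succ c ih =>
    intro m
    have h1 : (m + (c + 1)).choose (c + 1) = ∑ i ∈ Finset.range (m + 1), (i + c).choose c := by
      rw [hockey, show m + c + 1 = m + (c + 1) by ring]
    rw [h1]
    calc ∑ i ∈ Finset.range (m + 1), (i + c).choose c
        ≤ ∑ _i ∈ Finset.range (m + 1), (m + 1) ^ c := by
          apply Finset.sum_le_sum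
          intro i hi
          exact le_trans (ih i) (Nat.pow_le_pow_left (by simp at hi; omega) c)
      _ = (m + 1) ^ (c + 1) := by
          rw [Finset.sum_const, Finset.card_range, smul_eq_mul, pow_succ, Nat.mul_comm]

lemma choose_mono_c {c c' m : ℕ} (h : c ≤ c') : (m + c).choose c ≤ (m + c').choose c' := by
  have e1 : (m + c).choose c = (m + c).choose m := by
    rw [Nat.add_comm m c]; exact Nat.choose_symm_add
  have e2 : (m + c').choose c' = (m + c').choose m := by
    rw [Nat.add_comm m c']; exact Nat.choose_symm_add
  rw [e1, e2]
  exact Nat.choose_le_choose m (by omega)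

omit [DecidableEq A] in
lemma ncard_biUnion_le {F : ℕ → Set (List A)} (n : ℕ) :
    (⋃ a ∈ Finset.range n, F a).ncard ≤ ∑ a ∈ Finset.range n, (F a).ncard := by
  induction n with
  | zero => simp
  | succ n ih =>
    rw [Finset.range_add_one]
    rw [Finset.set_biUnion_insert, Finset.sum_insert (Finset.notMem_range_self)]
    refine le_trans (Set.ncard_union_le (F n) (⋃ a ∈ Finset.range n, F a)) ?_
    omega

lemma count_le [Finite A] {k : ℕ} (hk : 1 ≤ k) :
    ∀ (c : ℕ) (t : List A), k ≤ t.length → (Brk k t).card = c →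
      ∀ m, (MSet k t m).ncard ≤ (m + c).choose c := by
  intro c
  induction c with
  | zero =>
    intro t hkt hc m
    have hB : Brk k t = ∅ := Finset.card_eq_zero.mp hc
    have hsub : MSet k t m ⊆ {repl m (t.take k) ++ t} := fun y hy => struct0 hkt hB hy
    calc (MSet k t m).ncard ≤ ({repl m (t.take k) ++ t} : Set (List A)).ncard :=
          Set.ncard_le_ncard hsub (Set.finite_singleton _)
      _ = 1 := Set.ncard_singleton _
      _ = (m + 0).choose 0 := by simp
  | succ c ih =>
    intro t hkt hc m
    have hne : (Brk k t).Nonempty := Finset.card_pos.mp (by omega)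
    set d := (Brk k t).min' hne with hdd
    have hd : d ∈ Brk k t := (Brk k t).min'_mem hne
    have hmin : ∀ e ∈ Brk k t, d ≤ e := fun e he => (Brk k t).min'_le e he
    have hdk : d + k < t.length := (mem_Brk.mp hd).1
    have hkt' : k ≤ (t.drop (d + 1)).length := by simp; omega
    have hc' : (Brk k (t.drop (d + 1))).card = c := by
      have := card_Brk_drop hd hmin
      omega
    have hsub : MSet k t m ⊆
        ⋃ a ∈ Finset.range (m + 1),
          (fun z => repl a (t.take k) ++ (t.take (d + 1) ++ z)) '' MSet k (t.drop (d + 1)) (m - a) := by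
      intro y hy
      obtain ⟨a, z, ha, hz, e1⟩ := struct1 hk hd hmin hy
      exact Set.mem_biUnion (Finset.mem_range.mpr (by omega)) ⟨z, hz, e1.symm⟩
    have hfin : ∀ a : ℕ,
        ((fun z => repl a (t.take k) ++ (t.take (d + 1) ++ z)) ''
          MSet k (t.drop (d + 1)) (m - a)).Finite :=
      fun a => (finite_MSet k _ _).image _
    calc (MSet k t m).ncard
        ≤ (⋃ a ∈ Finset.range (m + 1),
            (fun z => repl a (t.take k) ++ (t.take (d + 1) ++ z)) ''
              MSet k (t.drop (d + 1)) (m - a)).ncard :=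
          Set.ncard_le_ncard hsub
            ((Finset.range (m + 1)).finite_toSet.biUnion (fun a _ => hfin a))
      _ ≤ ∑ a ∈ Finset.range (m + 1),
            ((fun z => repl a (t.take k) ++ (t.take (d + 1) ++ z)) ''
              MSet k (t.drop (d + 1)) (m - a)).ncard := ncard_biUnion_le _
      _ ≤ ∑ a ∈ Finset.range (m + 1), ((m - a) + c).choose c := by
          apply Finset.sum_le_sum
          intro a _
          exact le_trans (Set.ncard_image_le (finite_MSet k _ _))
            (ih (t.drop (d + 1)) hkt' hc' (m - a))
      _ = ∑ i ∈ Finset.range (m + 1), (i + c).choose c := by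
          rw [← Finset.sum_range_reflect]
          apply Finset.sum_congr rfl
          intro a ha
          have ha' : a < m + 1 := Finset.mem_range.mp ha
          have e3 : m + 1 - 1 - a = m - a := by omega
          have e4 : m - (m - a) = a := by omega
          rw [e3, e4]
      _ = (m + (c + 1)).choose (c + 1) := by rw [hockey, show m + c + 1 = m + (c + 1) by omega]

end Count

lemma eq_of_rotate {k : ℕ} (hk : 1 ≤ k) {s : List A} {q : ℕ} (hq : q + k < s.length)
    (hrot : ∃ j : ℕ, ((s.drop (q + 1)).take k) = ((s.drop q).take k).rotate j) :
    s[q]? = s[q + k]? := by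
  obtain ⟨j, hj⟩ := hrot
  have hq1 : q < s.length := by omega
  have hq2 : q + k < s.length := hq
  set u : List A := (s.drop (q + 1)).take (k - 1) with hu
  have hw : (s.drop q).take k = s[q] :: u := by
    rw [List.drop_eq_getElem_cons hq1, show k = (k - 1) + 1 by omega, List.take_succ_cons]
  have hgu : (s.drop (q + 1))[k - 1]? = some s[q + k] := by
    rw [List.getElem?_drop, show q + 1 + (k - 1) = q + k by omega,
      List.getElem?_eq_getElem hq2]
  have hw' : (s.drop (q + 1)).take k = u ++ [s[q + k]] := by
    conv_lhs => rw [show k = (k - 1) + 1 by omega]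
    rw [List.take_succ, hgu]
    rfl
  have hperm : List.Perm (u ++ [s[q + k]]) (s[q] :: u) := by
    rw [← hw, ← hw', hj]
    exact List.rotate_perm _ _
  have hm : (s[q + k] ::ₘ (u : Multiset A)) = s[q] ::ₘ (u : Multiset A) := by
    have h2 : ((u ++ [s[q + k]] : List A) : Multiset A) = ((s[q] :: u : List A) : Multiset A) :=
      Multiset.coe_eq_coe.mpr hperm
    rw [← Multiset.coe_add, add_comm, Multiset.coe_singleton, Multiset.singleton_add,
      Multiset.cons_coe] at h2
    exact h2
  have := (Multiset.cons_inj_left (u : Multiset A)).mp hm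
  rw [List.getElem?_eq_getElem hq1, List.getElem?_eq_getElem hq2, this]

lemma mem_MSet_of_mem_Sys {k : ℕ} {s x : List A} (h : x ∈ Sys (TanStep k) s) :
    ∃ m, x ∈ MSet k s m := by
  induction h with
  | refl => exact ⟨0, by rw [MSet_zero]; rfl⟩
  | tail h1 h2 ih =>
    obtain ⟨m, hm⟩ := ih
    exact ⟨m + 1, mem_MSet_succ.mpr ⟨_, hm, h2⟩⟩

end TanProof

theorem stmt5 {A : Type*} [Fintype A] [DecidableEq A] (k : ℕ) (hk : 1 ≤ k)
    (s : List A) (hs : k ≤ s.length)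
    (b : ℕ)
    (hb : b = 1 + ({i : ℕ | i + 1 ≤ s.length - k ∧
        ¬ ∃ j : ℕ, ((s.drop (i + 1)).take k) = ((s.drop i).take k).rotate j} :
          Set ℕ).ncard) :
    (∀ m : ℕ,
      ({y : List A | ∃ f : ℕ → List A, f 0 = s ∧ f m = y ∧
          ∀ i < m, TanStep k (f i) (f (i + 1))} : Set (List A)).ncard ≤
        Nat.choose (b + m - 1) (b - 1)) ∧
    ∃ c d : ℕ, ∀ n : ℕ,
      ({x ∈ Sys (TanStep k) s | x.length = n} : Set (List A)).ncard ≤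
        c * (n + 1) ^ d := by
  open TanProof in
  have hfA : Finite A := Finite.of_fintype A
  set c₀ := (TanProof.Brk k s).card with hc₀
  set BS : Set ℕ := {i : ℕ | i + 1 ≤ s.length - k ∧
      ¬ ∃ j : ℕ, ((s.drop (i + 1)).take k) = ((s.drop i).take k).rotate j} with hBS
  have hsubB : ↑(TanProof.Brk k s) ⊆ BS := by
    intro q hq
    have hq' := TanProof.mem_Brk.mp hq
    constructor
    · omega
    · intro hrot
      exact hq'.2 (TanProof.eq_of_rotate hk hq'.1 hrot)
  have hfinB : BS.Finite := by
    apply (Finset.range s.length).finite_toSet.subset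
    intro i hi
    simp only [Finset.coe_range, Set.mem_Iio]
    have := hi.1
    omega
  have hcb : c₀ ≤ b - 1 := by
    have h1 := Set.ncard_le_ncard hsubB hfinB
    rw [Set.ncard_coe_finset] at h1
    omega
  have hb1 : 1 ≤ b := by omega
  constructor
  · intro m
    calc ({y : List A | ∃ f : ℕ → List A, f 0 = s ∧ f m = y ∧
          ∀ i < m, TanStep k (f i) (f (i + 1))} : Set (List A)).ncard
        ≤ (m + c₀).choose c₀ := TanProof.count_le hk c₀ s hs rfl m
      _ ≤ (m + (b - 1)).choose (b - 1) := TanProof.choose_mono_c hcb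
      _ = (b + m - 1).choose (b - 1) := by rw [show m + (b - 1) = b + m - 1 by omega]
  · refine ⟨1, c₀, fun n => ?_⟩
    by_cases hex : ∃ m, s.length + k * m = n
    · obtain ⟨m, hm⟩ := hex
      have hsub2 : {x ∈ Sys (TanStep k) s | x.length = n} ⊆ TanProof.MSet k s m := by
        rintro x ⟨hx1, hx2⟩
        obtain ⟨m', hm'⟩ := TanProof.mem_MSet_of_mem_Sys hx1
        have hl : s.length + k * m' = n := by
          rw [← TanProof.length_of_mem_MSet hm', hx2]
        have : m' = m := by
          have hk' : 1 ≤ k := hk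
          nlinarith
        rwa [← this]
      calc ({x ∈ Sys (TanStep k) s | x.length = n} : Set (List A)).ncard
          ≤ (TanProof.MSet k s m).ncard :=
            Set.ncard_le_ncard hsub2 (TanProof.finite_MSet k s m)
        _ ≤ (m + c₀).choose c₀ := TanProof.count_le hk c₀ s hs rfl m
        _ ≤ (m + 1) ^ c₀ := TanProof.choose_le_pow_aux c₀ m
        _ ≤ (n + 1) ^ c₀ := Nat.pow_le_pow_left (by nlinarith) c₀
        _ = 1 * (n + 1) ^ c₀ := (one_mul _).symm
    · have hempty : {x ∈ Sys (TanStep k) s | x.length = n} = ∅ := by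
        ext x
        simp only [Set.mem_setOf_eq, Set.mem_empty_iff_false, iff_false, not_and]
        intro hx1 hx2
        obtain ⟨m', hm'⟩ := TanProof.mem_MSet_of_mem_Sys hx1
        exact hex ⟨m', by rw [← TanProof.length_of_mem_MSet hm', hx2]⟩
      simp [hempty]
end

section
/- Let Σ = {0,1} and s ∈ Σ* contain both symbols 0 and 1. Then for the system S^tan_{≥1} = (Σ, s, T^tan_{≥1}), cap(S^tan_{≥1}) = 1. -/
open Filter

def TanGeStep {A : Type*} (k : ℕ) (x y : List A) : Prop :=
  ∃ u v w : List A, k ≤ v.length ∧ x = u ++ v ++ w ∧ y = u ++ v ++ v ++ w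

/-- alternating list of length n starting with a -/
def alt : ℕ → Bool → List Bool
  | 0, _ => []
  | n+1, a => a :: alt n (!a)

lemma alt_succ (n : ℕ) (a : Bool) : alt (n+1) a = a :: alt n (!a) := rfl

lemma alt_add_two (n : ℕ) (a : Bool) : alt (n+2) a = a :: (!a) :: alt n a := by
  simp [alt, Bool.not_not]

lemma alt_length (n : ℕ) (a : Bool) : (alt n a).length = n := by
  induction n generalizing a with
  | zero => rfl
  | succ n ih => simp [alt, ih]

lemma reach_alt_even (k : ℕ) (a : Bool) :
    Relation.ReflTransGen (TanGeStep 1) [a, !a] (alt (2*k+2) a) := by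
  induction k with
  | zero =>
    have : alt 2 a = [a, !a] := by simp [alt, Bool.not_not]
    rw [this]
  | succ k ih =>
    refine ih.tail ?_
    refine ⟨[], [a, !a], alt (2*k) a, by simp, ?_, ?_⟩
    · rw [alt_add_two]; rfl
    · have : 2 * (k+1) + 2 = (2*k+2) + 2 := by ring
      rw [this, alt_add_two, alt_add_two]; rfl

lemma chain_or_dup : ∀ w : List Bool,
    (∃ u a v, w = u ++ a :: a :: v) ∨ w.Chain' (· ≠ ·) := by
  intro w
  induction w with
  | nil => exact Or.inr List.isChain_nil
  | cons a t ih =>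
    match t, ih with
    | [], _ => exact Or.inr (List.isChain_singleton _)
    | b :: t', ih =>
      by_cases hab : a = b
      · exact Or.inl ⟨[], a, t', by simp [hab]⟩
      · rcases ih with ⟨u, c, v, h⟩ | hch
        · exact Or.inl ⟨a :: u, c, v, by simp [h]⟩
        · exact Or.inr (List.IsChain.cons_cons hab hch)

lemma chain_alt : ∀ (w : List Bool) (a : Bool),
    (a :: w).Chain' (· ≠ ·) → a :: w = alt (w.length + 1) a := by
  intro w
  induction w with
  | nil => intro a _; rfl
  | cons b t ih =>
    intro a h
    replace h := List.isChain_cons_cons.mp h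
    obtain ⟨hab, h2⟩ := h
    have hb : b = !a := by
      cases a <;> cases b <;> simp_all
    have := ih b h2
    rw [alt_succ]
    simp only [List.length_cons]
    rw [← hb, this]

lemma alt_getLast : ∀ (k : ℕ) (a : Bool),
    (alt (2*k+1) a).getLast? = some a ∧ (alt (2*k+2) a).getLast? = some (!a) := by
  intro k
  induction k with
  | zero =>
    intro a
    constructor
    · simp [alt]
    · have : alt 2 a = [a, !a] := by simp [alt, Bool.not_not]
      rw [this]; simp
  | succ k ih =>
    intro a
    have e1 : 2 * (k+1) + 1 = (2*k+1) + 2 := by ring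
    have e2 : 2 * (k+1) + 2 = (2*k+2) + 2 := by ring
    have h1 : alt (2*k+1) a = a :: alt (2*k) (!a) := alt_succ _ _
    have h2 : alt (2*k+2) a = a :: alt (2*k+1) (!a) := alt_succ _ _
    constructor
    · rw [e1, alt_add_two, h1, List.getLast?_cons_cons, ← h1]
      exact (ih a).1
    · rw [e2, alt_add_two, h2, List.getLast?_cons_cons, ← h2]
      exact (ih a).2

lemma reach_of_head_last (x : Bool) : ∀ (n : ℕ) (w : List Bool), w.length = n →
    w.head? = some x → w.getLast? = some (!x) →
    Relation.ReflTransGen (TanGeStep 1) [x, !x] w := by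
  intro n
  induction n using Nat.strong_induction_on with
  | _ n ih =>
    intro w hlen hh hl
    rcases chain_or_dup w with ⟨u, a, v, rfl⟩ | hch
    · -- deduplicate
      have hstep : TanGeStep 1 (u ++ a :: v) (u ++ a :: a :: v) :=
        ⟨u, [a], v, by simp, by simp, by simp⟩
      have hh' : (u ++ a :: v).head? = some x := by
        rw [List.head?_append] at hh ⊢
        cases u <;> simp_all
      have hl' : (u ++ a :: v).getLast? = some (!x) := by
        rcases v with _ | ⟨b, v'⟩
        · have : u ++ a :: a :: ([] : List Bool) = (u ++ [a]) ++ [a] := by simp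
          rw [this, List.getLast?_concat] at hl
          rw [show u ++ a :: ([] : List Bool) = u ++ [a] from rfl, List.getLast?_concat]
          exact hl
        · have e1 : u ++ a :: a :: b :: v' = (u ++ [a, a]) ++ b :: v' := by simp
          have e2 : u ++ a :: b :: v' = (u ++ [a]) ++ b :: v' := by simp
          rw [e1, List.getLast?_append] at hl
          rw [e2, List.getLast?_append]
          simpa using hl
      have hlt : (u ++ a :: v).length < n := by
        rw [← hlen]; simp
      exact (ih _ hlt _ rfl hh' hl').tail hstep
    · -- alternating
      rcases w with _ | ⟨a, t⟩
      · simp at hh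
      · have ha : a = x := by simpa using hh
        subst ha
        have hw := chain_alt t a hch
        rcases Nat.even_or_odd (t.length + 1) with he | ho
        · obtain ⟨k, hk⟩ := he
          have hk' : k ≥ 1 := by omega
          have e : t.length + 1 = 2 * (k - 1) + 2 := by omega
          rw [hw, e]
          have := (alt_getLast (k-1) a).2
          rw [hw, e] at hl
          have hxa : (!a) = !a := rfl
          -- from hl and this : some values; consistent
          exact reach_alt_even (k-1) a
        · obtain ⟨k, hk⟩ := ho
          have := (alt_getLast k a).1
          rw [hw, hk] at hl
          rw [this] at hl
          simp at hl

lemma reach_context {p q : List Bool} {x y : List Bool}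
    (h : Relation.ReflTransGen (TanGeStep 1) x y) :
    Relation.ReflTransGen (TanGeStep 1) (p ++ x ++ q) (p ++ y ++ q) := by
  refine Relation.ReflTransGen.lift (fun l => p ++ l ++ q) ?_ _ _ h
  rintro a b ⟨u, v, w, hv, rfl, rfl⟩
  exact ⟨p ++ u, v, w ++ q, hv, by simp, by simp⟩

lemma exists_adj : ∀ s : List Bool,
    (∃ p x q, s = p ++ x :: (!x) :: q) ∨ (∃ a, ∀ b ∈ s, b = a) := by
  intro s
  induction s with
  | nil => exact Or.inr ⟨true, by simp⟩
  | cons a t ih =>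
    match t, ih with
    | [], _ => exact Or.inr ⟨a, by simp⟩
    | b :: t', ih =>
      by_cases hab : a = b
      · rcases ih with ⟨p, x, q, h⟩ | ⟨c, hc⟩
        · exact Or.inl ⟨a :: p, x, q, by simp [h]⟩
        · refine Or.inr ⟨c, ?_⟩
          intro d hd
          rcases List.mem_cons.mp hd with rfl | hd
          · rw [hab]; exact hc b (by simp)
          · exact hc d hd
      · have hb : b = !a := by cases a <;> cases b <;> simp_all
        exact Or.inl ⟨[], a, t', by simp [hb]⟩

theorem stmt7 (s : List Bool) (h0 : false ∈ s) (h1 : true ∈ s) :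
    cap (Sys (TanGeStep 1) s) = 1 := by
  -- decompose s
  obtain ⟨p, x, q, hs⟩ : ∃ p x q, s = p ++ x :: (!x) :: q := by
    rcases exists_adj s with h | ⟨a, ha⟩
    · exact h
    · have := ha false h0
      have := ha true h1
      simp_all
  set c := s.length with hc
  set T : ℕ → Set (List Bool) :=
    fun n => {l ∈ Sys (TanGeStep 1) s | l.length = n} with hT
  -- finiteness and upper bound
  have hfin : ∀ n, (T n).Finite ∧ (T n).ncard ≤ 2 ^ n := by
    intro n
    have hsub : T n ⊆ Set.range (List.ofFn : (Fin n → Bool) → List Bool) := by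
      rintro l ⟨-, hlen⟩
      subst hlen
      exact ⟨l.get, List.ofFn_get l⟩
    have hrfin : (Set.range (List.ofFn : (Fin n → Bool) → List Bool)).Finite :=
      Set.finite_range _
    refine ⟨hrfin.subset hsub, ?_⟩
    calc (T n).ncard ≤ (Set.range (List.ofFn : (Fin n → Bool) → List Bool)).ncard :=
          Set.ncard_le_ncard hsub hrfin
      _ = 2 ^ n := by
          rw [← Set.image_univ, Set.ncard_image_of_injective _ List.ofFn_injective,
            Set.ncard_univ]
          simp [Nat.card_eq_fintype_card]
  -- lower bound
  have hlow : ∀ m : ℕ, 2 ^ m ≤ (T (m + c)).ncard := by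
    intro m
    set φ : (Fin m → Bool) → List Bool :=
      fun f => (p ++ [x]) ++ List.ofFn f ++ ((!x) :: q) with hφ
    have hinj : Function.Injective φ := by
      intro f g hfg
      simp only [hφ, List.append_assoc] at hfg
      exact List.ofFn_injective
        (List.append_cancel_right (List.append_cancel_left (List.append_cancel_left hfg)))
    have hmem : ∀ f, φ f ∈ T (m + c) := by
      intro f
      constructor
      · show Relation.ReflTransGen (TanGeStep 1) s (φ f)
        rw [hs]
        have hreach : Relation.ReflTransGen (TanGeStep 1) [x, !x]
            (x :: (List.ofFn f ++ [!x])) := by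
          refine reach_of_head_last x _ _ rfl (by simp) ?_
          have : x :: (List.ofFn f ++ [!x]) = (x :: List.ofFn f) ++ [!x] := by simp
          rw [this, List.getLast?_concat]
        have := reach_context (p := p) (q := q) hreach
        simpa [hφ] using this
      · simp only [hφ]
        simp [hs, hc]
        omega
    have hsub : Set.range φ ⊆ T (m + c) := by
      rintro l ⟨f, rfl⟩; exact hmem f
    calc (2:ℕ) ^ m = (Set.range φ).ncard := by
          rw [← Set.image_univ, Set.ncard_image_of_injective _ hinj, Set.ncard_univ]
          simp [Nat.card_eq_fintype_card]
      _ ≤ (T (m + c)).ncard := Set.ncard_le_ncard hsub (hfin _).1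
  -- the sequence
  set a : ℕ → ℝ := fun n => Real.logb 2 ((T n).ncard) / n with ha
  have key : Tendsto a atTop (nhds 1) := by
    have hub : ∀ᶠ n in atTop, a n ≤ 1 := by
      filter_upwards [eventually_ge_atTop (c + 1)] with n hn
      have h1 : ((T n).ncard : ℝ) ≤ 2 ^ n := by
        exact_mod_cast (hfin n).2
      have hpos : (0:ℝ) < (T n).ncard := by
        have : 2 ^ (n - c) ≤ (T n).ncard := by
          have := hlow (n - c)
          rwa [Nat.sub_add_cancel (by omega)] at this
        have : (1:ℕ) ≤ (T n).ncard := le_trans (Nat.one_le_two_pow) this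
        exact_mod_cast this
      have : Real.logb 2 ((T n).ncard) ≤ Real.logb 2 (2 ^ n) :=
        Real.logb_le_logb_of_le (by norm_num) hpos h1
      rw [Real.logb_pow, Real.logb_self_eq_one (by norm_num)] at this
      have hn0 : (0:ℝ) < n := by exact_mod_cast (by omega : 0 < n)
      rw [ha]
      rw [div_le_one hn0]
      simpa using this
    have hlb : ∀ᶠ n in atTop, 1 - (c:ℝ)/n ≤ a n := by
      filter_upwards [eventually_ge_atTop (c + 1)] with n hn
      have h2 : (2:ℝ) ^ (n - c) ≤ (T n).ncard := by
        have := hlow (n - c)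
        rw [Nat.sub_add_cancel (by omega)] at this
        exact_mod_cast this
      have hpos2 : (0:ℝ) < 2 ^ (n - c) := by positivity
      have : Real.logb 2 ((2:ℝ) ^ (n - c)) ≤ Real.logb 2 ((T n).ncard) :=
        Real.logb_le_logb_of_le (by norm_num) hpos2 h2
      rw [Real.logb_pow, Real.logb_self_eq_one (by norm_num)] at this
      have hn0 : (0:ℝ) < n := by exact_mod_cast (by omega : 0 < n)
      have hnc : ((n - c : ℕ) : ℝ) = (n:ℝ) - c := by
        rw [Nat.cast_sub (by omega)]
      rw [hnc] at this
      show 1 - (c:ℝ)/n ≤ Real.logb 2 ((T n).ncard) / n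
      rw [le_div_iff₀ hn0]
      have hmul : (1 - (c:ℝ)/n) * n = (n:ℝ) - c := by field_simp
      rw [hmul]
      simpa using this
    have hl : Tendsto (fun n : ℕ => 1 - (c:ℝ)/n) atTop (nhds 1) := by
      have := tendsto_const_div_atTop_nhds_zero_nat (c:ℝ)
      have := (tendsto_const_nhds (x := (1:ℝ)) (f := atTop)).sub this
      simpa using this
    exact tendsto_of_tendsto_of_tendsto_of_le_of_le' hl tendsto_const_nhds hlb hub
  have : cap (Sys (TanGeStep 1) s) = limsup a atTop := rfl
  rw [this, key.limsup_eq]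
end

section
/- Let k ≥ 1 and s ∈ Σ* with |s| ≥ k and δ(s) ≥ 2. For S^tan_{≥k} = (Σ, s, T^tan_{≥k}), cap(S^tan_{≥k}) ≥ log₂ r > 0, where r is the largest real root of f(x) = x^{k+1} − x − 1. -/
open Filter

section Aux

variable {A : Type*}

lemma aux_descent [DecidableEq A] :
    ∀ (l : List A), 2 ≤ l.toFinset.card → ∃ p a b q, l = p ++ a :: b :: q ∧ a ≠ b := by
  intro l
  induction l with
  | nil => intro h; simp at h
  | cons x t ih =>
    intro h
    match t, ih, h with
    | [], _, h => simp at h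
    | y :: t2, ih, h =>
      by_cases hxy : x = y
      · subst hxy
        have h2 : 2 ≤ (x :: t2).toFinset.card := by simpa using h
        obtain ⟨p, a, b, q, heq, hne⟩ := ih h2
        exact ⟨x :: p, a, b, q, by rw [heq]; rfl, hne⟩
      · exact ⟨[], x, y, t2, rfl, hxy⟩

/-- weight of a boolean list: false ↦ k, true ↦ k+1 -/
def wtSum (k : ℕ) (L : List Bool) : ℕ := (L.map (fun b => cond b (k + 1) k)).sum

def WSet (k M : ℕ) : Set (List Bool) := {L | wtSum k L = M}

lemma wtSum_cons (k : ℕ) (b : Bool) (L : List Bool) :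
    wtSum k (b :: L) = (cond b (k + 1) k) + wtSum k L := rfl

lemma length_le_wtSum (k : ℕ) (hk : 1 ≤ k) (L : List Bool) : L.length ≤ wtSum k L := by
  induction L with
  | nil => simp [wtSum]
  | cons b L ih =>
    rw [wtSum_cons]
    simp only [List.length_cons]
    cases b <;> simp only [Bool.cond_true, Bool.cond_false] <;> omega

lemma WSet_finite (k M : ℕ) (hk : 1 ≤ k) : (WSet k M).Finite :=
  (List.finite_length_le Bool M).subset
    (fun L hL => le_trans (length_le_wtSum k hk L) (le_of_eq hL))

lemma wtSum_replicate (k n : ℕ) (b : Bool) :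
    wtSum k (List.replicate n b) = n * (cond b (k + 1) k) := by
  simp [wtSum, List.map_replicate, List.sum_replicate, smul_eq_mul]

lemma WSet_nonempty (k M : ℕ) (hk : 1 ≤ k) (hM : k * k ≤ M) : (WSet k M).Nonempty := by
  refine ⟨List.replicate (M % k) true ++ List.replicate (M / k - M % k) false, ?_⟩
  have hk0 : 0 < k := hk
  have hmod : M % k < k := Nat.mod_lt _ hk0
  have hq : k ≤ M / k := (Nat.le_div_iff_mul_le hk0).mpr (by nlinarith)
  have hsq : M % k ≤ M / k := le_trans (le_of_lt hmod) hq
  have hdm : k * (M / k) + M % k = M := Nat.div_add_mod M k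
  show wtSum k _ = M
  rw [wtSum]
  rw [List.map_append, List.sum_append]
  rw [← wtSum, ← wtSum, wtSum_replicate, wtSum_replicate]
  simp only [Bool.cond_true, Bool.cond_false]
  obtain ⟨c, hc⟩ := Nat.le.dest hsq
  have hcc : M / k - M % k = c := by omega
  rw [hcc]
  have hgoal : M % k * (k + 1) + c * k = k * (M % k + c) + M % k := by ring
  rw [hgoal, hc, hdm]

lemma WSet_rec (k M : ℕ) (hk : 1 ≤ k) (hM : k + 1 ≤ M) :
    (WSet k (M - k)).ncard + (WSet k (M - k - 1)).ncard ≤ (WSet k M).ncard := by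
  have hfin1 := WSet_finite k (M - k) hk
  have hfin2 := WSet_finite k (M - k - 1) hk
  have hfinM := WSet_finite k M hk
  set X : Set (List Bool) := (List.cons false) '' WSet k (M - k) with hX
  set Y : Set (List Bool) := (List.cons true) '' WSet k (M - k - 1) with hY
  have hXsub : X ⊆ WSet k M := by
    rintro _ ⟨L, hL, rfl⟩
    show wtSum k (false :: L) = M
    rw [wtSum_cons]; simp only [Bool.cond_false]
    have : wtSum k L = M - k := hL
    omega
  have hYsub : Y ⊆ WSet k M := by
    rintro _ ⟨L, hL, rfl⟩
    show wtSum k (true :: L) = M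
    rw [wtSum_cons]; simp only [Bool.cond_true]
    have : wtSum k L = M - k - 1 := hL
    omega
  have hdisj : Disjoint X Y := by
    rw [Set.disjoint_left]
    rintro _ ⟨L, _, rfl⟩ ⟨L', _, hLL⟩
    exact Bool.noConfusion (List.head_eq_of_cons_eq hLL.symm)
  have hXcard : X.ncard = (WSet k (M - k)).ncard :=
    Set.ncard_image_of_injective _ List.cons_injective
  have hYcard : Y.ncard = (WSet k (M - k - 1)).ncard :=
    Set.ncard_image_of_injective _ List.cons_injective
  calc (WSet k (M - k)).ncard + (WSet k (M - k - 1)).ncard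
      = (X ∪ Y).ncard := by
        rw [Set.ncard_union_eq hdisj (hfin1.image _) (hfin2.image _), hXcard, hYcard]
    _ ≤ (WSet k M).ncard :=
        Set.ncard_le_ncard (Set.union_subset hXsub hYsub) hfinM

lemma WSet_pow (k : ℕ) (hk : 1 ≤ k) (r : ℝ) (hr : 1 ≤ r) (hroot : r ^ (k + 1) = r + 1) :
    ∀ M, k * k ≤ M → r ^ M ≤ ((WSet k M).ncard : ℝ) * r ^ (k * k + k) := by
  intro M
  induction M using Nat.strong_induction_on with
  | _ M ih =>
    intro hM
    by_cases hMs : M ≤ k * k + k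
    · have h1 : 0 < (WSet k M).ncard :=
        (Set.ncard_pos (WSet_finite k M hk)).mpr (WSet_nonempty k M hk hM)
      have h1' : (1 : ℝ) ≤ ((WSet k M).ncard : ℝ) := by exact_mod_cast h1
      calc r ^ M ≤ r ^ (k * k + k) := pow_le_pow_right₀ hr hMs
        _ ≤ ((WSet k M).ncard : ℝ) * r ^ (k * k + k) :=
            le_mul_of_one_le_left (pow_nonneg (by linarith) _) h1'
    · push_neg at hMs
      have hrec := WSet_rec k M hk (by omega)
      have ih1 := ih (M - k) (by omega) (by omega)
      have ih2 := ih (M - k - 1) (by omega) (by omega)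
      have hpow : r ^ M = r ^ (M - k) + r ^ (M - k - 1) := by
        have h1 : r ^ (M - k) = r ^ (M - k - 1) * r := by
          rw [← pow_succ]; congr 1; omega
        have h2 : r ^ M = r ^ (M - k - 1) * r ^ (k + 1) := by
          rw [← pow_add]; congr 1; omega
        rw [h2, hroot, h1]; ring
      rw [hpow]
      calc r ^ (M - k) + r ^ (M - k - 1)
          ≤ (((WSet k (M - k)).ncard : ℝ) + ((WSet k (M - k - 1)).ncard : ℝ)) * r ^ (k * k + k) := by
            rw [add_mul]; exact add_le_add ih1 ih2
        _ ≤ ((WSet k M).ncard : ℝ) * r ^ (k * k + k) := by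
            apply mul_le_mul_of_nonneg_right _ (pow_nonneg (by linarith) _)
            exact_mod_cast hrec

end Aux

section Reach
variable {A : Type*}

lemma join_ends (a : A) (c₂ : List A) :
    ∀ W : List (List A), (∀ B ∈ W, B = c₂ ∨ B = a :: c₂) →
      ∃ K, ((a :: c₂) :: W).flatten = K ++ c₂ := by
  intro W
  induction W using List.reverseRecOn with
  | nil => exact fun _ => ⟨[a], by simp⟩
  | append_singleton W B ih =>
    intro hW
    have hB := hW B (by simp)
    have hW' : ∀ B ∈ W, B = c₂ ∨ B = a :: c₂ := fun B hB => hW B (by simp [hB])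
    rcases hB with hBc | hBd
    · exact ⟨((a :: c₂) :: W).flatten, by simp [hBc]⟩
    · exact ⟨((a :: c₂) :: W).flatten ++ [a], by simp [hBd]⟩

lemma reach_blocks (k : ℕ) (s p y c₂ : List A) (a : A)
    (hs : k ≤ s.length) (hc₂len : c₂.length = k)
    (hytake : y.take (k + 1) = a :: c₂)
    (hss : s ++ s = p ++ y) :
    ∀ W : List (List A),
      (∀ B ∈ W, B = c₂ ∨ B = a :: c₂) →
      Relation.ReflTransGen (TanGeStep k) s (p ++ ((a :: c₂) :: W).flatten ++ y) := by
  have hdlen : (a :: c₂).length = k + 1 := by rw [List.length_cons, hc₂len]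
  have hysplit : y = (a :: c₂) ++ y.drop (k + 1) := by
    conv_lhs => rw [← List.take_append_drop (k + 1) y]
    rw [hytake]
  have base : Relation.ReflTransGen (TanGeStep k) s (p ++ ((a :: c₂) ++ y)) := by
    have r1 : Relation.ReflTransGen (TanGeStep k) s (s ++ s) :=
      Relation.ReflTransGen.single ⟨[], s, [], hs, by simp, by simp⟩
    rw [hss] at r1
    refine r1.tail ⟨p, a :: c₂, y.drop (k + 1), by rw [hdlen]; omega, ?_, ?_⟩
    · rw [List.append_assoc, ← hysplit]
    · conv_lhs => rw [hysplit]
      simp [List.append_assoc]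
  intro W
  induction W using List.reverseRecOn with
  | nil =>
    intro _
    simpa [List.append_assoc] using base
  | append_singleton W B ih =>
    intro hW
    have hW' : ∀ B ∈ W, B = c₂ ∨ B = a :: c₂ := fun B hB => hW B (by simp [hB])
    have hreach := ih hW'
    have hB := hW B (by simp)
    refine hreach.tail ?_
    rcases hB with hBc | hBd
    · obtain ⟨K, hK⟩ := join_ends a c₂ W hW'
      refine ⟨p ++ K, c₂, y, by rw [hc₂len], ?_, ?_⟩
      · rw [hK]; simp [List.append_assoc]
      · have hjoin : ((a :: c₂) :: (W ++ [B])).flatten = ((a :: c₂) :: W).flatten ++ c₂ := by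
          simp [hBc]
        rw [hjoin, hK]; simp [List.append_assoc]
    · refine ⟨p ++ ((a :: c₂) :: W).flatten, a :: c₂, y.drop (k + 1),
        by rw [hdlen]; omega, ?_, ?_⟩
      · conv_lhs => rw [hysplit]
        simp [List.append_assoc]
      · have hjoin : ((a :: c₂) :: (W ++ [B])).flatten = ((a :: c₂) :: W).flatten ++ (a :: c₂) := by
          simp [hBd]
        rw [hjoin]
        conv_lhs => rw [hysplit]
        simp [List.append_assoc]

lemma code_injective (c₂ : List A) (a b : A) (t0 : List A) (hc2 : c₂ = b :: t0) (hab : a ≠ b) :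
    ∀ L₁ L₂ : List Bool,
      (L₁.map (fun t => cond t (a :: c₂) c₂)).flatten = (L₂.map (fun t => cond t (a :: c₂) c₂)).flatten →
      L₁ = L₂ := by
  intro L₁
  induction L₁ with
  | nil =>
    intro L₂ h
    cases L₂ with
    | nil => rfl
    | cons t T => exfalso; cases t <;> simp [hc2] at h
  | cons t₁ T₁ ih =>
    intro L₂ h
    cases L₂ with
    | nil => exfalso; cases t₁ <;> simp [hc2] at h
    | cons t₂ T₂ =>
      have ht : t₁ = t₂ := by
        cases t₁ <;> cases t₂ <;> first
          | rfl
          | (exfalso; rw [hc2] at h; simp only [List.map_cons, List.flatten_cons,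
              Bool.cond_true, Bool.cond_false, List.cons_append, List.cons.injEq] at h;
             first | exact hab h.1.symm | exact hab h.1)
      subst ht
      simp only [List.map_cons, List.flatten_cons] at h
      rw [ih T₂ (List.append_cancel_left h)]

lemma Phi_injective (p y c₂ : List A) (a b : A) (t0 : List A)
    (hc2 : c₂ = b :: t0) (hab : a ≠ b) :
    Function.Injective
      (fun L : List Bool =>
        p ++ ((a :: c₂) :: L.map (fun t => cond t (a :: c₂) c₂)).flatten ++ y) := by
  intro L₁ L₂ h
  simp only [List.flatten_cons, List.append_assoc] at h
  have h1 := List.append_cancel_left h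
  have h2 := List.append_cancel_left h1
  have h3 := List.append_cancel_right h2
  exact code_injective c₂ a b t0 hc2 hab L₁ L₂ h3

end Reach

lemma count_le {A : Type*} [Fintype A] (k : ℕ) (s p y c₂ : List A) (a b : A) (t0 : List A)
    (hs : k ≤ s.length) (hc₂len : c₂.length = k)
    (hytake : y.take (k + 1) = a :: c₂) (hss : s ++ s = p ++ y)
    (hc2 : c₂ = b :: t0) (hab : a ≠ b) (M : ℕ) :
    (WSet k M).ncard ≤
      ({x ∈ Sys (TanGeStep k) s | x.length = p.length + (k + 1) + M + y.length} :
        Set (List A)).ncard := by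
  classical
  set Φ : List Bool → List A :=
    fun L => p ++ ((a :: c₂) :: L.map (fun t => cond t (a :: c₂) c₂)).flatten ++ y with hΦ
  have hΦinj : Function.Injective Φ := Phi_injective p y c₂ a b t0 hc2 hab
  have hjolen : ∀ L : List Bool,
      ((L.map (fun t => cond t (a :: c₂) c₂)).flatten).length = wtSum k L := by
    intro L
    induction L with
    | nil => simp [wtSum]
    | cons t T ih =>
      cases t <;> simp [wtSum_cons, ih, hc₂len] <;> omega
  have hsub : Φ '' WSet k M ⊆
      {x ∈ Sys (TanGeStep k) s | x.length = p.length + (k + 1) + M + y.length} := by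
    rintro _ ⟨L, hL, rfl⟩
    have hLM : wtSum k L = M := hL
    refine ⟨?_, ?_⟩
    · refine reach_blocks k s p y c₂ a hs hc₂len hytake hss _ ?_
      intro B hB
      simp only [List.mem_map] at hB
      obtain ⟨t, _, rfl⟩ := hB
      cases t
      · exact Or.inl rfl
      · exact Or.inr rfl
    · show (Φ L).length = _
      rw [hΦ]
      simp only [List.length_append, List.flatten_cons, List.length_cons,
        hc₂len, hjolen L, hLM]
      omega
  have hfin : ({x ∈ Sys (TanGeStep k) s | x.length = p.length + (k + 1) + M + y.length} :
      Set (List A)).Finite :=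
    (List.finite_length_eq A _).subset (fun x hx => hx.2)
  calc (WSet k M).ncard = (Φ '' WSet k M).ncard :=
        (Set.ncard_image_of_injective _ hΦinj).symm
    _ ≤ _ := Set.ncard_le_ncard hsub hfin

theorem stmt8 {A : Type*} [Fintype A] [DecidableEq A] (k : ℕ) (hk : 1 ≤ k)
    (s : List A) (hs : k ≤ s.length) (hd : 2 ≤ s.toFinset.card) (r : ℝ)
    (hroot : r ^ (k + 1) - r - 1 = 0)
    (hmax : ∀ t : ℝ, t ^ (k + 1) - t - 1 = 0 → t ≤ r) :
    Real.logb 2 r ≤ cap (Sys (TanGeStep k) s) ∧ 0 < Real.logb 2 r := by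
  have hb2 : (1 : ℝ) < 2 := one_lt_two
  have hr1 : 1 < r := by
    have hcont : ContinuousOn (fun x : ℝ => x ^ (k + 1) - x - 1) (Set.Icc 1 2) :=
      (((continuous_pow (k + 1)).sub continuous_id).sub continuous_const).continuousOn
    have hmem : (0 : ℝ) ∈ Set.Icc ((1 : ℝ) ^ (k + 1) - 1 - 1) ((2 : ℝ) ^ (k + 1) - 2 - 1) := by
      have h4 : (4 : ℝ) ≤ 2 ^ (k + 1) := by
        calc (4 : ℝ) = 2 ^ 2 := by norm_num
          _ ≤ 2 ^ (k + 1) := pow_le_pow_right₀ (by norm_num) (by omega)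
      constructor
      · rw [one_pow]; norm_num
      · linarith
    obtain ⟨t, htmem, htval⟩ := intermediate_value_Icc (by norm_num : (1 : ℝ) ≤ 2) hcont hmem
    have ht1 : 1 < t := by
      rcases lt_or_eq_of_le htmem.1 with h | h
      · exact h
      · exfalso
        rw [← h] at htval
        norm_num at htval
    exact lt_of_lt_of_le ht1 (hmax t htval)
  have hlogpos : 0 < Real.logb 2 r := Real.logb_pos hb2 hr1
  refine ⟨?_, hlogpos⟩
  have hroot' : r ^ (k + 1) = r + 1 := by linarith
  have hrpos : (0 : ℝ) < r := lt_trans zero_lt_one hr1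
  obtain ⟨p, a, b, q, hspl, hab⟩ := aux_descent s hd
  set y : List A := a :: b :: (q ++ s) with hy
  set c₂ : List A := (b :: (q ++ s)).take k with hc₂def
  have hc₂len : c₂.length = k := by
    rw [hc₂def, List.length_take, List.length_cons, List.length_append]
    omega
  obtain ⟨t0, hc2⟩ : ∃ t0, c₂ = b :: t0 := by
    rw [hc₂def]
    cases k with
    | zero => omega
    | succ k'' => exact ⟨(q ++ s).take k'', by rw [List.take_succ_cons]⟩
  have hytake : y.take (k + 1) = a :: c₂ := by
    rw [hy, hc₂def, List.take_succ_cons]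
  have hss : s ++ s = p ++ y := by rw [hy, hspl]; simp
  set S : Set (List A) := Sys (TanGeStep k) s with hS
  set f : ℕ → ℝ := fun n =>
    Real.logb 2 (({x ∈ S | x.length = n} : Set (List A)).ncard) / n with hf
  have hcard1 : (1 : ℝ) ≤ (Fintype.card A : ℝ) := by
    have : 0 < Fintype.card A := Fintype.card_pos_iff.mpr ⟨a⟩
    exact_mod_cast this
  have hNle : ∀ n : ℕ, ({x ∈ S | x.length = n} : Set (List A)).ncard ≤ Fintype.card A ^ n := by
    intro n
    have h2 : ({l : List A | l.length = n}).ncard = Fintype.card A ^ n := by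
      rw [← Nat.card_coe_set_eq]
      have e : ↥{l : List A | l.length = n} ≃ List.Vector A n :=
        { toFun := fun x => ⟨x.1, x.2⟩
          invFun := fun v => ⟨v.1, v.2⟩
          left_inv := fun _ => rfl
          right_inv := fun _ => rfl }
      rw [Nat.card_congr e, Nat.card_eq_fintype_card, card_vector]
    calc ({x ∈ S | x.length = n} : Set (List A)).ncard
        ≤ ({l : List A | l.length = n}).ncard :=
          Set.ncard_le_ncard (fun x hx => hx.2) (List.finite_length_eq A n)
      _ = Fintype.card A ^ n := h2
  have hfub : ∀ n, f n ≤ Real.logb 2 (Fintype.card A) := by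
    intro n
    rcases Nat.eq_zero_or_pos n with rfl | hn
    · simp only [hf, Nat.cast_zero, div_zero]
      exact Real.logb_nonneg hb2 hcard1
    · have hn0 : (0 : ℝ) < n := by exact_mod_cast hn
      have hNle' : (({x ∈ S | x.length = n} : Set (List A)).ncard : ℝ)
          ≤ (Fintype.card A : ℝ) ^ n := by exact_mod_cast hNle n
      have hlogN : Real.logb 2 (({x ∈ S | x.length = n} : Set (List A)).ncard)
          ≤ n * Real.logb 2 (Fintype.card A) := by
        rcases Nat.eq_zero_or_pos (({x ∈ S | x.length = n} : Set (List A)).ncard) with h0 | hp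
        · rw [h0]
          simp only [Nat.cast_zero, Real.logb_zero]
          exact mul_nonneg (le_of_lt hn0) (Real.logb_nonneg hb2 hcard1)
        · calc Real.logb 2 (({x ∈ S | x.length = n} : Set (List A)).ncard)
              ≤ Real.logb 2 ((Fintype.card A : ℝ) ^ n) :=
                Real.logb_le_logb_of_le hb2 (by exact_mod_cast hp) hNle'
            _ = n * Real.logb 2 (Fintype.card A) := by
                rw [Real.logb_pow]
      calc f n ≤ (n * Real.logb 2 (Fintype.card A)) / n := by
            simp only [hf]
            exact (div_le_div_iff_of_pos_right hn0).mpr hlogN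
        _ = Real.logb 2 (Fintype.card A) :=
            mul_div_cancel_left₀ _ (ne_of_gt hn0)
  set Ksq : ℕ := k * k with hKsq
  set D0 : ℕ := p.length + (k + 1) + y.length with hD0
  set D : ℝ := (D0 : ℝ) + (Ksq : ℝ) + (k : ℝ) with hD
  set g : ℕ → ℝ := fun n => (1 - D / n) * Real.logb 2 r with hg
  have htends : Tendsto g atTop (nhds (Real.logb 2 r)) := by
    have h0 : Tendsto (fun n : ℕ => D / (n : ℝ)) atTop (nhds 0) :=
      tendsto_const_div_atTop_nhds_zero_nat D
    have h1 : Tendsto (fun n : ℕ => 1 - D / (n : ℝ)) atTop (nhds (1 - 0)) :=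
      tendsto_const_nhds.sub h0
    have h2 := h1.mul_const (Real.logb 2 r)
    simp only [hg]
    simpa using h2
  have hev : g ≤ᶠ[atTop] f := by
    filter_upwards [eventually_ge_atTop (D0 + Ksq + 1)] with n hn
    have hn0 : 0 < n := by omega
    have hn0' : (0 : ℝ) < n := by exact_mod_cast hn0
    set M : ℕ := n - D0 with hM
    have hMk : Ksq ≤ M := by omega
    have hMk' : k * k ≤ M := by rw [← hKsq]; exact hMk
    have hnM : p.length + (k + 1) + M + y.length = n := by omega
    have hcount := count_le k s p y c₂ a b t0 hs hc₂len hytake hss hc2 hab M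
    rw [hnM, ← hS] at hcount
    have hWpos : 0 < (WSet k M).ncard :=
      (Set.ncard_pos (WSet_finite k M hk)).mpr (WSet_nonempty k M hk hMk')
    have hpow := WSet_pow k hk r (le_of_lt hr1) hroot' M hMk'
    have hWr : (0 : ℝ) < ((WSet k M).ncard : ℝ) := by exact_mod_cast hWpos
    have l1 : Real.logb 2 (r ^ M) ≤ Real.logb 2 (((WSet k M).ncard : ℝ) * r ^ (k * k + k)) :=
      Real.logb_le_logb_of_le hb2 (pow_pos hrpos M) hpow
    rw [Real.logb_pow, Real.logb_mul (ne_of_gt hWr) (ne_of_gt (pow_pos hrpos (k * k + k))),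
      Real.logb_pow] at l1
    have l2 : Real.logb 2 ((WSet k M).ncard) ≤
        Real.logb 2 (({x ∈ S | x.length = n} : Set (List A)).ncard) :=
      Real.logb_le_logb_of_le hb2 hWr (by exact_mod_cast hcount)
    have l3 : ((M : ℝ) - ((Ksq : ℝ) + (k : ℝ))) * Real.logb 2 r ≤
        Real.logb 2 (({x ∈ S | x.length = n} : Set (List A)).ncard) := by
      have hcast : ((k * k + k : ℕ) : ℝ) = (Ksq : ℝ) + (k : ℝ) := by
        rw [← hKsq]; push_cast; ring
      rw [hcast] at l1
      rw [sub_mul]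
      linarith
    have hMcast : (M : ℝ) = (n : ℝ) - (D0 : ℝ) := by
      rw [hM, Nat.cast_sub (by omega : D0 ≤ n)]
    have hgeq : g n = (((M : ℝ) - ((Ksq : ℝ) + (k : ℝ))) * Real.logb 2 r) / n := by
      have h1 : (1 : ℝ) - D / n = ((n : ℝ) - D) / n := by
        rw [sub_div, div_self (ne_of_gt hn0')]
      have h2 : (M : ℝ) - ((Ksq : ℝ) + (k : ℝ)) = (n : ℝ) - D := by
        rw [hMcast, hD]; ring
      simp only [hg]
      rw [h1, h2, div_mul_eq_mul_div]
    simp only [hf]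
    rw [hgeq]
    exact (div_le_div_iff_of_pos_right hn0').mpr l3
  have hbdd : IsBoundedUnder (· ≤ ·) atTop f :=
    isBoundedUnder_of ⟨Real.logb 2 (Fintype.card A), hfub⟩
  calc Real.logb 2 r = limsup g atTop := htends.limsup_eq.symm
    _ ≤ limsup f atTop := limsup_le_limsup hev htends.isCoboundedUnder_le hbdd
    _ = cap S := rfl
end

section
/- The capacity of the regular language S = ((0^k 1)^+ (0^{k-1} 1)^+)^+ over {0,1} equals log₂ r, where r > 1 is the largest real root of x^{k+1} − x − 1 (equivalently, the largest real solution of x^{−(k+1)} + x^{−k} = 1). -/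
open Filter

def cat (X Y : Set (List Bool)) : Set (List Bool) :=
  {x | ∃ a ∈ X, ∃ b ∈ Y, x = a ++ b}

def pos (X : Set (List Bool)) : Set (List Bool) :=
  {x | ∃ l : List (List Bool), l ≠ [] ∧ (∀ w ∈ l, w ∈ X) ∧ x = l.flatten}


lemma r_gt_one (k : ℕ) (hk : 1 ≤ k) (r : ℝ)
    (hmax : ∀ t : ℝ, t ^ (k + 1) - t - 1 = 0 → t ≤ r) : 1 < r := by
  have hcont : ContinuousOn (fun t : ℝ => t ^ (k+1) - t - 1) (Set.Icc 1 2) := by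
    fun_prop
  have h1 : (fun t : ℝ => t ^ (k+1) - t - 1) 1 ≤ 0 := by norm_num
  have h2 : (0:ℝ) ≤ (fun t : ℝ => t ^ (k+1) - t - 1) 2 := by
    simp only
    have : (4:ℝ) ≤ 2 ^ (k+1) := by
      calc (4:ℝ) = 2 ^ 2 := by norm_num
      _ ≤ 2 ^ (k+1) := by
        apply pow_le_pow_right₀ (by norm_num)
        omega
    linarith
  obtain ⟨t, ht, hroot⟩ := intermediate_value_Icc (by norm_num : (1:ℝ) ≤ 2) hcont
    (Set.mem_Icc.mpr ⟨h1, h2⟩)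
  have := hmax t hroot
  -- t ∈ [1,2], t root. If t = 1 then -1 = 0 contradiction, so t > 1
  rcases eq_or_lt_of_le ht.1 with h | h
  · exfalso
    rw [← h] at hroot
    norm_num at hroot
  · linarith


def cnt (j : ℕ) : ℕ → ℕ
  | 0 => 1
  | (n+1) => (if j + 2 ≤ n + 1 then cnt j (n - (j+1)) else 0)
      + (if j + 1 ≤ n + 1 then cnt j (n - j) else 0)

lemma cnt_succ (j n : ℕ) : cnt j (n+1) = (if j + 2 ≤ n + 1 then cnt j (n - (j+1)) else 0)
      + (if j + 1 ≤ n + 1 then cnt j (n - j) else 0) := by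
  rw [cnt]

lemma cnt_rec (j n : ℕ) (h : j + 2 ≤ n) :
    cnt j n = cnt j (n - (j+2)) + cnt j (n - (j+1)) := by
  obtain ⟨m, rfl⟩ : ∃ m, n = m + 1 := ⟨n - 1, by omega⟩
  rw [cnt_succ, if_pos h, if_pos (by omega)]
  congr 1 <;> congr 1 <;> omega

lemma pow_step (j n : ℕ) (r : ℝ) (hrec : r ^ (j+2) = r + 1) (h : j + 2 ≤ n) :
    r ^ n = r ^ (n - (j+2)) + r ^ (n - (j+1)) := by
  have e1 : r ^ n = r ^ (n - (j+2)) * r ^ (j+2) := by rw [← pow_add]; congr 1; omega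
  have e2 : r ^ (n - (j+2)) * r = r ^ (n - (j+1)) := by
    rw [← pow_succ]; congr 1; omega
  rw [e1, hrec]
  nlinarith [e2]

lemma cnt_le (j : ℕ) (r : ℝ) (hr : 1 ≤ r) (hrec : r ^ (j+2) = r + 1) :
    ∀ n, (cnt j n : ℝ) ≤ r ^ n := by
  intro n
  induction n using Nat.strong_induction_on with
  | _ n ih =>
    match n with
    | 0 => simp [cnt]
    | (m+1) =>
      rcases le_or_gt (j+2) (m+1) with h | h
      · rw [cnt_rec j (m+1) h, pow_step j (m+1) r hrec h]
        have h1 : (cnt j (m + 1 - (j+2)) : ℝ) ≤ r ^ (m + 1 - (j+2)) := ih _ (by omega)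
        have h2 : (cnt j (m + 1 - (j+1)) : ℝ) ≤ r ^ (m + 1 - (j+1)) := ih _ (by omega)
        push_cast
        push_cast at h1 h2
        linarith
      · rw [cnt_succ, if_neg (by omega)]
        rcases le_or_gt (j+1) (m+1) with h2 | h2
        · rw [if_pos h2]
          have e : m - j = 0 := by omega
          rw [e]
          have e2 : cnt j 0 = 1 := by rw [cnt]
          rw [e2]
          push_cast
          simpa using one_le_pow₀ hr
        · rw [if_neg (by omega)]
          push_cast
          positivity

lemma cnt_add_step1 (j n : ℕ) : cnt j n ≤ cnt j (n + (j+1)) := by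
  have h : cnt j (n + (j+1)) = (if j + 2 ≤ n + j + 1 then cnt j (n + j - (j+1)) else 0)
      + (if j + 1 ≤ n + j + 1 then cnt j (n + j - j) else 0) := by
    have : n + (j+1) = (n + j) + 1 := by omega
    rw [this, cnt_succ]
  rw [h, if_pos (show j + 1 ≤ n + j + 1 by omega)]
  have e : n + j - j = n := by omega
  rw [e]
  exact Nat.le_add_left _ _

lemma cnt_add_step2 (j n : ℕ) : cnt j n ≤ cnt j (n + (j+2)) := by
  have h : cnt j (n + (j+2)) = (if j + 2 ≤ n + j + 2 then cnt j (n + j + 1 - (j+1)) else 0)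
      + (if j + 1 ≤ n + j + 2 then cnt j (n + j + 1 - j) else 0) := by
    have : n + (j+2) = (n + j + 1) + 1 := by omega
    rw [this, cnt_succ]
  rw [h, if_pos (show j + 2 ≤ n + j + 2 by omega)]
  have e : n + j + 1 - (j+1) = n := by omega
  rw [e]
  exact Nat.le_add_right _ _

lemma cnt_pos_rep (j x y : ℕ) : 1 ≤ cnt j (x * (j+1) + y * (j+2)) := by
  induction x with
  | zero =>
    induction y with
    | zero => simp [cnt]
    | succ m ih =>
      have e : 0 * (j+1) + (m+1) * (j+2) = (0 * (j+1) + m * (j+2)) + (j+2) := by ring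
      rw [e]
      exact le_trans ih (cnt_add_step2 _ _)
  | succ m ih =>
    have e : (m+1) * (j+1) + y * (j+2) = (m * (j+1) + y * (j+2)) + (j+1) := by ring
    rw [e]
    exact le_trans ih (cnt_add_step1 _ _)

lemma cnt_pos (j n : ℕ) (hn : (j+1) * j ≤ n) : 1 ≤ cnt j n := by
  obtain ⟨x, y, rfl⟩ : ∃ x y, n = x * (j+1) + y * (j+2) := by
    set q := n / (j+1) with hq
    set s := n % (j+1) with hs
    refine ⟨q - s, s, ?_⟩
    have hA : n = q * (j+1) + s := by rw [mul_comm]; exact (Nat.div_add_mod n (j+1)).symm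
    have hslt : s < j + 1 := Nat.mod_lt _ (by omega)
    have hjq : j ≤ q := by
      rw [hq, Nat.le_div_iff_mul_le (by omega : 0 < j + 1)]
      calc j * (j+1) = (j+1) * j := by ring
      _ ≤ n := hn
    have h3 : s ≤ q := by omega
    have hsub : (q - s) * (j+1) = q * (j+1) - s * (j+1) := Nat.sub_mul _ _ _
    have hmul : s * (j+1) ≤ q * (j+1) := Nat.mul_le_mul_right _ h3
    have hring : s * (j+2) = s * (j+1) + s := by ring
    rw [hsub, hring]
    omega
  exact cnt_pos_rep j _ _

lemma cnt_ge (j : ℕ) (r : ℝ) (hr : 1 ≤ r) (hrec : r ^ (j+2) = r + 1) :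
    ∀ n, (j+1) * j ≤ n → r ^ n ≤ r ^ ((j+1)*j + j + 1) * cnt j n := by
  intro n
  induction n using Nat.strong_induction_on with
  | _ n ih =>
    intro hn
    rcases le_or_gt n ((j+1)*j + j + 1) with h | h
    · have h1 : (1:ℝ) ≤ (cnt j n : ℝ) := by exact_mod_cast cnt_pos j n hn
      calc r ^ n ≤ r ^ ((j+1)*j + j + 1) := pow_le_pow_right₀ hr h
      _ = r ^ ((j+1)*j + j + 1) * 1 := by ring
      _ ≤ _ := by
          apply mul_le_mul_of_nonneg_left h1
          positivity
    · have hrec2 : cnt j n = cnt j (n - (j+2)) + cnt j (n - (j+1)) := cnt_rec j n (by omega)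
      have ih1 := ih (n - (j+2)) (by omega) (by omega)
      have ih2 := ih (n - (j+1)) (by omega) (by omega)
      rw [pow_step j n r hrec (by omega), hrec2]
      push_cast
      linarith


def wa (j : ℕ) : List Bool := List.replicate (j+1) false ++ [true]
def wb (j : ℕ) : List Bool := List.replicate j false ++ [true]

lemma wa_length (j : ℕ) : (wa j).length = j + 2 := by simp [wa]
lemma wb_length (j : ℕ) : (wb j).length = j + 1 := by simp [wb]
lemma wa_ne_nil (j : ℕ) : wa j ≠ [] := by simp [wa]
lemma wb_ne_nil (j : ℕ) : wb j ≠ [] := by simp [wb]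
lemma wa_ne_wb (j : ℕ) : wa j ≠ wb j := by
  intro h
  have := congrArg List.length h
  rw [wa_length, wb_length] at this
  omega

lemma clash (j : ℕ) (u v : List Bool) : wa j ++ u ≠ wb j ++ v := by
  intro h
  have hL : (wa j ++ u)[j]? = some false := by
    rw [wa, List.getElem?_append_left (by simp),
      List.getElem?_append_left (by simp),
      List.getElem?_replicate_of_lt (by omega)]
  have hR : (wb j ++ v)[j]? = some true := by
    rw [wb, List.getElem?_append_left (by simp),
      List.getElem?_append_right (by simp)]
    simp
  rw [h, hR] at hL
  simp at hL

lemma flatten_inj (j : ℕ) : ∀ l1 l2 : List (List Bool),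
    (∀ w ∈ l1, w = wa j ∨ w = wb j) → (∀ w ∈ l2, w = wa j ∨ w = wb j) →
    l1.flatten = l2.flatten → l1 = l2 := by
  intro l1
  induction l1 with
  | nil =>
    intro l2 _ h2 he
    cases l2 with
    | nil => rfl
    | cons w t =>
      exfalso
      rcases h2 w (by simp) with rfl | rfl <;>
        simp [wa, wb] at he
  | cons w1 t1 ih =>
    intro l2 h1 h2 he
    cases l2 with
    | nil =>
      exfalso
      rcases h1 w1 (by simp) with rfl | rfl <;>
        simp [wa, wb] at he
    | cons w2 t2 =>
      simp only [List.flatten_cons] at he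
      have hw : w1 = w2 := by
        rcases h1 w1 (by simp) with rfl | rfl <;> rcases h2 w2 (by simp) with rfl | rfl
        · rfl
        · exact absurd he (clash j _ _)
        · exact absurd he.symm (clash j _ _)
        · rfl
      subst hw
      have ht : t1.flatten = t2.flatten := by
        have := List.append_cancel_left he
        exact this
      have := ih t2 (fun w hw => h1 w (by simp [hw])) (fun w hw => h2 w (by simp [hw])) ht
      rw [this]

def Good (j : ℕ) (l : List (List Bool)) : Prop :=
  l ≠ [] ∧ (∀ w ∈ l, w = wa j ∨ w = wb j) ∧ l.head? = some (wa j) ∧ l.getLast? = some (wb j)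

def Cj (j : ℕ) : Set (List Bool) := cat (pos {wa j}) (pos {wb j})
def Sj (j : ℕ) : Set (List Bool) := pos (Cj j)

lemma mem_pos_self {X : Set (List Bool)} {w : List Bool} (h : w ∈ X) : w ∈ pos X :=
  ⟨[w], by simp, by simpa, by simp⟩

lemma pos_append {X : Set (List Bool)} {x y : List Bool}
    (hx : x ∈ pos X) (hy : y ∈ pos X) : x ++ y ∈ pos X := by
  obtain ⟨l1, h1, m1, rfl⟩ := hx
  obtain ⟨l2, h2, m2, rfl⟩ := hy
  exact ⟨l1 ++ l2, by simp [h1], by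
    intro w hw
    rcases List.mem_append.mp hw with h | h
    exacts [m1 w h, m2 w h], by simp⟩

lemma cons_pos {X : Set (List Bool)} {w y : List Bool} (h : w ∈ X) (hy : y ∈ pos X) :
    w ++ y ∈ pos X := pos_append (mem_pos_self h) hy

lemma pos_snoc {X : Set (List Bool)} {w y : List Bool} (hy : y ∈ pos X) (h : w ∈ X) :
    y ++ w ∈ pos X := pos_append hy (mem_pos_self h)

lemma C_snoc_b {j : ℕ} {c : List Bool} (hc : c ∈ Cj j) : c ++ wb j ∈ Cj j := by
  obtain ⟨x, hx, y, hy, rfl⟩ := hc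
  exact ⟨x, hx, y ++ wb j, pos_snoc hy rfl, by simp⟩

lemma C_mem (j : ℕ) : wa j ++ wb j ∈ Cj j :=
  ⟨wa j, mem_pos_self rfl, wb j, mem_pos_self rfl, rfl⟩

lemma C_sub_S {j : ℕ} : Cj j ⊆ Sj j := fun _ h => mem_pos_self h

lemma key_R (j : ℕ) : ∀ l : List (List Bool),
    (∀ w ∈ l, w = wa j ∨ w = wb j) → l.getLast? = some (wb j) →
    (∀ c ∈ Cj j, c ++ l.flatten ∈ Sj j) ∧ (∀ x ∈ pos {wa j}, x ++ l.flatten ∈ Sj j) := by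
  intro l
  induction l with
  | nil => intro _ hlast; simp at hlast
  | cons w l' ih =>
    intro helem hlast
    have helem' : ∀ w ∈ l', w = wa j ∨ w = wb j := fun w hw => helem w (by simp [hw])
    rcases helem w (by simp) with rfl | rfl
    · -- w = wa j
      have hl' : l' ≠ [] := by
        rintro rfl
        simp [List.getLast?] at hlast
        exact wa_ne_wb j hlast
      obtain ⟨y, t, rfl⟩ : ∃ y t, l' = y :: t := by
        cases l' with
        | nil => exact absurd rfl hl'
        | cons y t => exact ⟨y, t, rfl⟩
      have hlast' : (y :: t).getLast? = some (wb j) := by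
        rwa [List.getLast?_cons_cons] at hlast
      have IH := ih helem' hlast'
      constructor
      · intro c hc
        have hs : wa j ++ (y :: t).flatten ∈ Sj j := IH.2 (wa j) (mem_pos_self rfl)
        have := cons_pos hc hs
        simpa [List.flatten_cons, List.append_assoc, Sj] using this
      · intro x hx
        have hx' : x ++ wa j ∈ pos {wa j} := pos_snoc hx rfl
        have := IH.2 _ hx'
        simpa [List.flatten_cons, List.append_assoc] using this
    · -- w = wb j
      by_cases hl' : l' = []
      · subst hl'
        constructor
        · intro c hc
          have := C_sub_S (C_snoc_b hc)
          simpa using this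
        · intro x hx
          have : x ++ wb j ∈ Cj j := ⟨x, hx, wb j, mem_pos_self rfl, rfl⟩
          have := C_sub_S this
          simpa using this
      · obtain ⟨y, t, rfl⟩ : ∃ y t, l' = y :: t := by
          cases l' with
          | nil => exact absurd rfl hl'
          | cons y t => exact ⟨y, t, rfl⟩
        have hlast' : (y :: t).getLast? = some (wb j) := by
          rwa [List.getLast?_cons_cons] at hlast
        have IH := ih helem' hlast'
        constructor
        · intro c hc
          have := IH.1 _ (C_snoc_b hc)
          simpa [List.flatten_cons, List.append_assoc] using this
        · intro x hx
          have hxb : x ++ wb j ∈ Cj j := ⟨x, hx, wb j, mem_pos_self rfl, rfl⟩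
          have := IH.1 _ hxb
          simpa [List.flatten_cons, List.append_assoc] using this

lemma good_mem_S {j : ℕ} {l : List (List Bool)} (hg : Good j l) : l.flatten ∈ Sj j := by
  obtain ⟨hne, helem, hhead, hlast⟩ := hg
  obtain ⟨w, l', rfl⟩ : ∃ w l', l = w :: l' := by
    cases l with
    | nil => exact absurd rfl hne
    | cons w l' => exact ⟨w, l', rfl⟩
  have hw : w = wa j := by simpa using hhead
  subst hw
  have hl' : l' ≠ [] := by
    rintro rfl
    simp [List.getLast?] at hlast
    exact wa_ne_wb j hlast
  obtain ⟨y, t, rfl⟩ : ∃ y t, l' = y :: t := by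
    cases l' with
    | nil => exact absurd rfl hl'
    | cons y t => exact ⟨y, t, rfl⟩
  have hlast' : (y :: t).getLast? = some (wb j) := by
    rwa [List.getLast?_cons_cons] at hlast
  have := (key_R j (y :: t) (fun w hw => helem w (by simp [hw])) hlast').2
    (wa j) (mem_pos_self rfl)
  simpa [List.flatten_cons] using this

lemma block_good {j : ℕ} {c : List Bool} (hc : c ∈ Cj j) :
    ∃ m, Good j m ∧ c = m.flatten := by
  obtain ⟨x, hx, y, hy, rfl⟩ := hc
  obtain ⟨la, hla, ma, rfl⟩ := hx
  obtain ⟨lb, hlb, mb, rfl⟩ := hy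
  have ha : ∀ w ∈ la, w = wa j := fun w hw => ma w hw
  have hb : ∀ w ∈ lb, w = wb j := fun w hw => mb w hw
  refine ⟨la ++ lb, ⟨by simp [hla], ?_, ?_, ?_⟩, by simp⟩
  · intro w hw
    rcases List.mem_append.mp hw with h | h
    exacts [Or.inl (ha w h), Or.inr (hb w h)]
  · rw [List.head?_append_of_ne_nil _ hla]
    obtain ⟨w, t, rfl⟩ : ∃ w t, la = w :: t := by
      cases la with
      | nil => exact absurd rfl hla
      | cons w t => exact ⟨w, t, rfl⟩
    simp [ha w (by simp)]
  · rcases List.eq_nil_or_concat lb with rfl | ⟨t, x, rfl⟩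
    · exact absurd rfl hlb
    · rw [List.getLast?_append]
      simp [hb x (by simp)]

lemma blocks_good {j : ℕ} : ∀ bl : List (List Bool), bl ≠ [] → (∀ b ∈ bl, b ∈ Cj j) →
    ∃ l, Good j l ∧ bl.flatten = l.flatten := by
  intro bl
  induction bl with
  | nil => intro h; exact absurd rfl h
  | cons c bl' ih =>
    intro _ hmem
    have hc : c ∈ Cj j := hmem c (by simp)
    obtain ⟨m, hm, hcm⟩ := block_good hc
    by_cases hbl' : bl' = []
    · subst hbl'
      exact ⟨m, hm, by simpa using hcm⟩
    · obtain ⟨m', hm', hm'e⟩ := ih hbl' (fun w hw => hmem w (by simp [hw]))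
      have hmne := hm.1
      refine ⟨m ++ m', ⟨by simp [hm.1], ?_, ?_, ?_⟩, ?_⟩
      · intro w hw
        rcases List.mem_append.mp hw with h | h
        exacts [hm.2.1 w h, hm'.2.1 w h]
      · rw [List.head?_append_of_ne_nil _ hm.1]
        exact hm.2.2.1
      · rcases List.eq_nil_or_concat m' with rfl | ⟨t, z, rfl⟩
        · exact absurd rfl hm'.1
        · have := hm'.2.2.2
          simp only [List.concat_eq_append, ← List.append_assoc,
            List.getLast?_append] at this ⊢
          exact this
      · simp [List.flatten_cons, hcm, hm'e]

lemma mem_S_good {j : ℕ} {x : List Bool} (hx : x ∈ Sj j) :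
    ∃ l, Good j l ∧ x = l.flatten := by
  obtain ⟨bl, hbl, hmem, rfl⟩ := hx
  obtain ⟨l, hg, he⟩ := blocks_good bl hbl hmem
  exact ⟨l, hg, he⟩

lemma S_eq (j : ℕ) : Sj j = {x | ∃ l, Good j l ∧ x = l.flatten} := by
  ext x
  constructor
  · exact mem_S_good
  · rintro ⟨l, hg, rfl⟩
    exact good_mem_S hg

def Mset (j n : ℕ) : Set (List (List Bool)) :=
  {l | (∀ w ∈ l, w = wa j ∨ w = wb j) ∧ l.flatten.length = n}

lemma Mset_zero (j : ℕ) : Mset j 0 = {([] : List (List Bool))} := by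
  ext l
  constructor
  · rintro ⟨helem, hlen⟩
    cases l with
    | nil => rfl
    | cons w t =>
      exfalso
      simp only [List.flatten_cons, List.length_append] at hlen
      rcases helem w (by simp) with rfl | rfl
      · rw [wa_length] at hlen; omega
      · rw [wb_length] at hlen; omega
  · rintro rfl
    exact ⟨by simp, by simp⟩

lemma Mset_succ (j n : ℕ) (hn : 1 ≤ n) : Mset j n =
    (if j+2 ≤ n then (fun t => wa j :: t) '' Mset j (n - (j+2)) else ∅) ∪
    (if j+1 ≤ n then (fun t => wb j :: t) '' Mset j (n - (j+1)) else ∅) := by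
  ext l
  constructor
  · rintro ⟨helem, hlen⟩
    cases l with
    | nil => simp at hlen; omega
    | cons w t =>
      simp only [List.flatten_cons, List.length_append] at hlen
      have helem' : ∀ w ∈ t, w = wa j ∨ w = wb j := fun w hw => helem w (by simp [hw])
      rcases helem w (by simp) with rfl | rfl
      · rw [wa_length] at hlen
        left
        rw [if_pos (by omega)]
        exact ⟨t, ⟨helem', by omega⟩, rfl⟩
      · rw [wb_length] at hlen
        right
        rw [if_pos (by omega)]
        exact ⟨t, ⟨helem', by omega⟩, rfl⟩
  · intro h
    rcases h with h | h
    · rcases le_or_gt (j+2) n with hc | hc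
      · rw [if_pos hc] at h
        obtain ⟨t, ⟨helem, hlen⟩, rfl⟩ := h
        refine ⟨?_, ?_⟩
        · intro w hw
          rcases List.mem_cons.mp hw with rfl | hw
          exacts [Or.inl rfl, helem w hw]
        · simp only [List.flatten_cons, List.length_append, wa_length]
          omega
      · rw [if_neg (by omega)] at h
        exact absurd h (Set.notMem_empty _)
    · rcases le_or_gt (j+1) n with hc | hc
      · rw [if_pos hc] at h
        obtain ⟨t, ⟨helem, hlen⟩, rfl⟩ := h
        refine ⟨?_, ?_⟩
        · intro w hw
          rcases List.mem_cons.mp hw with rfl | hw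
          exacts [Or.inr rfl, helem w hw]
        · simp only [List.flatten_cons, List.length_append, wb_length]
          omega
      · rw [if_neg (by omega)] at h
        exact absurd h (Set.notMem_empty _)

lemma cons_inj (w : List Bool) : Function.Injective (fun t : List (List Bool) => w :: t) := by
  intro x y h
  simpa using h

lemma Mset_card (j : ℕ) : ∀ n, (Mset j n).Finite ∧ (Mset j n).ncard = cnt j n := by
  intro n
  induction n using Nat.strong_induction_on with
  | _ n ih =>
    match n with
    | 0 =>
      rw [Mset_zero]
      exact ⟨Set.finite_singleton _, by simp [cnt]⟩
    | (m+1) =>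
      rw [Mset_succ j (m+1) (by omega)]
      have hA : (if j+2 ≤ m+1 then (fun t => wa j :: t) '' Mset j (m+1 - (j+2)) else ∅).Finite
          ∧ (if j+2 ≤ m+1 then (fun t => wa j :: t) '' Mset j (m+1 - (j+2)) else ∅).ncard
            = (if j + 2 ≤ m + 1 then cnt j (m - (j+1)) else 0) := by
        split_ifs with h
        · obtain ⟨hf, hc⟩ := ih (m+1-(j+2)) (by omega)
          refine ⟨hf.image _, ?_⟩
          rw [Set.ncard_image_of_injective _ (cons_inj _), hc]
          congr 1
          omega
        · simp
      have hB : (if j+1 ≤ m+1 then (fun t => wb j :: t) '' Mset j (m+1 - (j+1)) else ∅).Finite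
          ∧ (if j+1 ≤ m+1 then (fun t => wb j :: t) '' Mset j (m+1 - (j+1)) else ∅).ncard
            = (if j + 1 ≤ m + 1 then cnt j (m - j) else 0) := by
        split_ifs with h
        · obtain ⟨hf, hc⟩ := ih (m+1-(j+1)) (by omega)
          refine ⟨hf.image _, ?_⟩
          rw [Set.ncard_image_of_injective _ (cons_inj _), hc]
          congr 1
          omega
        · simp
      have hdisj : Disjoint
          (if j+2 ≤ m+1 then (fun t => wa j :: t) '' Mset j (m+1 - (j+2)) else ∅)
          (if j+1 ≤ m+1 then (fun t => wb j :: t) '' Mset j (m+1 - (j+1)) else ∅) := by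
        split_ifs with h1 h2 h2
        · rw [Set.disjoint_left]
          rintro l ⟨t, _, rfl⟩ ⟨t', _, he⟩
          simp only [List.cons.injEq] at he
          exact wa_ne_wb j he.1.symm
        all_goals simp
      constructor
      · exact (hA.1).union (hB.1)
      · rw [Set.ncard_union_eq hdisj hA.1 hB.1, hA.2, hB.2]
        rw [cnt]

def Lset (j n : ℕ) : Set (List (List Bool)) := {l | Good j l ∧ l.flatten.length = n}

lemma Lset_eq (j n : ℕ) (h : 2*j+3 ≤ n) :
    Lset j n = (fun t => wa j :: (t ++ [wb j])) '' Mset j (n - (2*j+3)) := by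
  ext l
  constructor
  · rintro ⟨⟨hne, helem, hhead, hlast⟩, hlen⟩
    obtain ⟨w, l', rfl⟩ : ∃ w l', l = w :: l' := by
      cases l with
      | nil => exact absurd rfl hne
      | cons w l' => exact ⟨w, l', rfl⟩
    have hw : w = wa j := by simpa using hhead
    subst hw
    have hl' : l' ≠ [] := by
      rintro rfl
      simp [List.getLast?] at hlast
      exact wa_ne_wb j hlast
    rcases List.eq_nil_or_concat l' with rfl | ⟨t, z, rfl⟩
    · exact absurd rfl hl'
    have hz : z = wb j := by
      simp only [List.concat_eq_append, ← List.cons_append, List.getLast?_append] at hlast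
      simpa using hlast
    subst hz
    refine ⟨t, ⟨?_, ?_⟩, by simp⟩
    · intro w hw
      exact helem w (by simp [List.concat_eq_append]; tauto)
    · simp only [List.concat_eq_append, List.flatten_cons, List.flatten_append,
        List.flatten_nil, List.append_nil, List.length_append, wa_length, wb_length] at hlen
      omega
  · rintro ⟨t, ⟨helem, hlen⟩, rfl⟩
    refine ⟨⟨by simp, ?_, by simp, ?_⟩, ?_⟩
    · intro w hw
      rcases List.mem_cons.mp hw with rfl | hw
      · exact Or.inl rfl
      rcases List.mem_append.mp hw with hw | hw
      · exact helem w hw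
      · simp at hw; exact Or.inr hw
    · show (wa j :: (t ++ [wb j])).getLast? = some (wb j)
      rw [← List.cons_append, List.getLast?_append]
      simp
    · show (wa j :: (t ++ [wb j])).flatten.length = n
      simp only [List.flatten_cons, List.flatten_append, List.flatten_nil,
        List.append_nil, List.length_append, wa_length, wb_length]
      omega

lemma snoc_cons_inj (j : ℕ) :
    Function.Injective (fun t : List (List Bool) => wa j :: (t ++ [wb j])) := by
  intro x y h
  simp only [List.cons.injEq] at h
  exact List.append_cancel_right h.2

lemma Lset_card (j n : ℕ) (h : 2*j+3 ≤ n) :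
    (Lset j n).Finite ∧ (Lset j n).ncard = cnt j (n - (2*j+3)) := by
  rw [Lset_eq j n h]
  obtain ⟨hf, hc⟩ := Mset_card j (n - (2*j+3))
  exact ⟨hf.image _, by rw [Set.ncard_image_of_injective _ (snoc_cons_inj j), hc]⟩

lemma S_inter_eq (j n : ℕ) :
    {x ∈ Sj j | x.length = n} = List.flatten '' Lset j n := by
  ext x
  constructor
  · rintro ⟨hx, hlen⟩
    obtain ⟨l, hg, rfl⟩ := mem_S_good hx
    exact ⟨l, ⟨hg, hlen⟩, rfl⟩
  · rintro ⟨l, ⟨hg, hlen⟩, rfl⟩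
    exact ⟨good_mem_S hg, hlen⟩

lemma S_count (j n : ℕ) (h : 2*j+3 ≤ n) :
    ({x ∈ Sj j | x.length = n} : Set (List Bool)).ncard = cnt j (n - (2*j+3)) := by
  rw [S_inter_eq]
  rw [Set.ncard_image_of_injOn, (Lset_card j n h).2]
  intro l1 h1 l2 h2 he
  exact flatten_inj j l1 l2 h1.1.2.1 h2.1.2.1 he

open Filter

-- final analytic lemma: the tendsto computation
lemma aux_tendsto (c2 D : ℕ) (L : ℝ) :
    Tendsto (fun n : ℕ => (((n:ℝ) - c2) * L - D * L) / n) atTop (nhds L) := by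
  have h0 : Tendsto (fun n : ℕ => L - ((c2 * L + D * L)) / n) atTop (nhds L) := by
    have := tendsto_const_div_atTop_nhds_zero_nat ((c2 : ℝ) * L + D * L)
    have h := Filter.Tendsto.const_sub L this
    simpa using h
  apply h0.congr'
  filter_upwards [eventually_ge_atTop 1] with n hn
  have hn' : (n : ℝ) ≠ 0 := by positivity
  field_simp
  ring

lemma aux_tendsto2 (c2 : ℕ) (L : ℝ) :
    Tendsto (fun n : ℕ => (((n:ℝ) - c2) * L) / n) atTop (nhds L) := by
  have := aux_tendsto c2 0 L
  simpa using this

theorem stmt9 (k : ℕ) (hk : 1 ≤ k) (r : ℝ)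
    (hroot : r ^ (k + 1) - r - 1 = 0)
    (hmax : ∀ t : ℝ, t ^ (k + 1) - t - 1 = 0 → t ≤ r) :
    1 < r ∧
      cap (pos (cat (pos {List.replicate k false ++ [true]})
                    (pos {List.replicate (k - 1) false ++ [true]}))) =
        Real.logb 2 r := by
  obtain ⟨j, rfl⟩ : ∃ j, k = j + 1 := ⟨k - 1, by omega⟩
  have hr1 : 1 < r := r_gt_one (j+1) (by omega) r hmax
  refine ⟨hr1, ?_⟩
  have hrec : r ^ (j+2) = r + 1 := by
    have h : r ^ (j + 1 + 1) - r - 1 = 0 := hroot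
    have e : j + 1 + 1 = j + 2 := by omega
    rw [e] at h
    linarith
  have hset : pos (cat (pos {List.replicate (j+1) false ++ [true]})
      (pos {List.replicate (j+1-1) false ++ [true]})) = Sj j := by
    norm_num [Sj, Cj, wa, wb]
  rw [hset]
  unfold cap
  apply Filter.Tendsto.limsup_eq
  have hL : 0 < Real.logb 2 r := Real.logb_pos (by norm_num) hr1
  set L := Real.logb 2 r with hLdef
  set D := (j+1)*j + j + 1 with hD
  set c2 := 2*j+3 with hc2
  apply tendsto_of_tendsto_of_tendsto_of_le_of_le' (aux_tendsto c2 D L) (aux_tendsto2 c2 L)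
  · filter_upwards [eventually_ge_atTop (c2 + (j+1)*j + 1)] with n hn
    have hcount : ({x ∈ Sj j | x.length = n} : Set (List Bool)).ncard
        = cnt j (n - c2) := S_count j n (by omega)
    rw [hcount]
    set m := n - c2 with hm
    have hm1 : (j+1)*j ≤ m := by omega
    have hposc : 1 ≤ cnt j m := cnt_pos j m hm1
    have hposR : (1:ℝ) ≤ (cnt j m : ℝ) := by exact_mod_cast hposc
    have hge : r ^ m ≤ r ^ D * cnt j m := cnt_ge j r (le_of_lt hr1) hrec m hm1
    have h1 : Real.logb 2 (r^m) ≤ Real.logb 2 ((r:ℝ)^D * (cnt j m : ℝ)) :=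
      Real.logb_le_logb_of_le (by norm_num) (by positivity) hge
    rw [Real.logb_mul (by positivity) (by positivity), Real.logb_pow, Real.logb_pow] at h1
    have hcast : (m:ℝ) = (n:ℝ) - c2 := by
      rw [hm, Nat.cast_sub (by omega)]
    have hn0 : (0:ℝ) < n := by
      have : 1 ≤ n := by omega
      exact_mod_cast Nat.lt_of_lt_of_le Nat.zero_lt_one this
    rw [div_le_div_iff_of_pos_right hn0]
    rw [← hcast]
    calc (m:ℝ) * L - D * L ≤ Real.logb 2 (cnt j m) := by linarith
    _ = _ := rfl
  · filter_upwards [eventually_ge_atTop (c2 + (j+1)*j + 1)] with n hn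
    have hcount : ({x ∈ Sj j | x.length = n} : Set (List Bool)).ncard
        = cnt j (n - c2) := S_count j n (by omega)
    rw [hcount]
    set m := n - c2 with hm
    have hposc : 1 ≤ cnt j m := cnt_pos j m (by omega)
    have hle : (cnt j m : ℝ) ≤ r ^ m := cnt_le j r (le_of_lt hr1) hrec m
    have h1 : Real.logb 2 (cnt j m : ℝ) ≤ Real.logb 2 (r^m) :=
      Real.logb_le_logb_of_le (by norm_num) (by exact_mod_cast hposc) hle
    rw [Real.logb_pow] at h1
    have hcast : (m:ℝ) = (n:ℝ) - c2 := by
      rw [hm, Nat.cast_sub (by omega)]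
    have hn0 : (0:ℝ) < n := by
      have : 1 ≤ n := by omega
      exact_mod_cast Nat.lt_of_lt_of_le Nat.zero_lt_one this
    rw [div_le_div_iff_of_pos_right hn0, ← hcast]
    exact h1
end

section
/- Let s ∈ Σ^k with s ≠ reverse(s). Then for the reversed-tandem-replication system S^rt_k(s), cap(S^rt_k(s)) ≥ 1/k. -/
open Filter

def RtStep {A : Type*} (k : ℕ) (x y : List A) : Prop :=
  ∃ u v w : List A, v.length = k ∧ x = u ++ v ++ w ∧ y = u ++ v ++ v.reverse ++ w

/-- Abstract insertion step on boolean strings: insert `!c` after a bit `c`. -/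
def InsStep (b b' : List Bool) : Prop :=
  ∃ p q : List Bool, ∃ c : Bool, b = p ++ c :: q ∧ b' = p ++ c :: (!c) :: q

lemma ins_reach (rest : List Bool) :
    ∀ p : List Bool, ∀ c : Bool,
      Relation.ReflTransGen InsStep (p ++ [c]) (p ++ c :: (!c) :: rest) := by
  induction rest with
  | nil =>
    intro p c
    exact Relation.ReflTransGen.single ⟨p, [], c, rfl, rfl⟩
  | cons d rest ih =>
    intro p c
    by_cases hdc : d = c
    · subst hdc
      have h1 : InsStep (p ++ [d]) ((p ++ [d]) ++ [!d]) :=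
        ⟨p, [], d, rfl, by simp⟩
      have h2 := ih (p ++ [d]) (!d)
      have := (Relation.ReflTransGen.single h1).trans h2
      simpa using this
    · have hd : d = !c := by
        cases d <;> cases c <;> simp_all
      subst hd
      have h1 := ih p c
      have h2 : InsStep (p ++ c :: (!c) :: rest) (p ++ c :: (!c) :: (!c) :: rest) :=
        ⟨p, (!c) :: rest, c, rfl, rfl⟩
      exact h1.tail h2

/-- Encode a boolean string as a word: `true ↦ s.reverse`, `false ↦ s`. -/
def Wenc {A : Type*} (s : List A) (b : List Bool) : List A :=
  (b.map (fun bit => if bit then s.reverse else s)).flatten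

lemma Wenc_nil {A : Type*} (s : List A) : Wenc s [] = [] := rfl

lemma Wenc_cons {A : Type*} (s : List A) (c : Bool) (b : List Bool) :
    Wenc s (c :: b) = (if c then s.reverse else s) ++ Wenc s b := by
  simp [Wenc]

lemma Wenc_append {A : Type*} (s : List A) (b b' : List Bool) :
    Wenc s (b ++ b') = Wenc s b ++ Wenc s b' := by
  simp [Wenc]

lemma Wenc_length {A : Type*} (s : List A) (b : List Bool) :
    (Wenc s b).length = s.length * b.length := by
  induction b with
  | nil => simp [Wenc]
  | cons c b ih =>
    rw [Wenc_cons]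
    cases c <;> simp [ih] <;> ring

lemma Wenc_step {A : Type*} {k : ℕ} {s : List A} (hs : s.length = k)
    {b b' : List Bool} (h : InsStep b b') : RtStep k (Wenc s b) (Wenc s b') := by
  obtain ⟨p, q, c, hb, hb'⟩ := h
  refine ⟨Wenc s p, (if c then s.reverse else s), Wenc s q, ?_, ?_, ?_⟩
  · cases c <;> simp [hs]
  · rw [hb, Wenc_append, Wenc_cons, List.append_assoc]
  · rw [hb', Wenc_append, Wenc_cons, Wenc_cons]
    cases c <;> simp
lemma Wenc_inj {A : Type*} {s : List A} (hne : s ≠ s.reverse) :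
    Function.Injective (Wenc s) := by
  have hslen : s ≠ [] := by
    intro h; exact hne (by simp [h])
  intro b b' h
  induction b generalizing b' with
  | nil =>
    cases b' with
    | nil => rfl
    | cons c b' =>
      exfalso
      rw [Wenc_nil, Wenc_cons] at h
      have h0 : (if c then s.reverse else s) = [] := (List.append_eq_nil_iff.mp h.symm).1
      refine hslen ?_
      cases c <;> simpa using h0
  | cons c b ih =>
    cases b' with
    | nil =>
      exfalso
      rw [Wenc_nil, Wenc_cons] at h
      have h0 : (if c then s.reverse else s) = [] := (List.append_eq_nil_iff.mp h).1
      refine hslen ?_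
      cases c <;> simpa using h0
    | cons c' b' =>
      rw [Wenc_cons, Wenc_cons] at h
      have hlen : (if c then s.reverse else s).length
          = (if c' then s.reverse else s).length := by
        cases c <;> cases c' <;> simp
      obtain ⟨h1, h2⟩ := List.append_inj h hlen
      have hcc : c = c' := by
        by_contra hcc'
        apply hne
        cases c <;> cases c' <;> simp_all
      rw [hcc, ih h2]

/-- The key counting lemma: at length `k*(t+2)` the system contains at least `2^t` words. -/
lemma count_lower {A : Type*} [Fintype A] [DecidableEq A] {k : ℕ}
    {s : List A} (hs : s.length = k) (hrev : s ≠ s.reverse) (t : ℕ) :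
    (2 : ℕ) ^ t ≤
      ({x ∈ Sys (RtStep k) s | x.length = k * (t + 2)} : Set (List A)).ncard := by
  classical
  set S : Set (List A) := {x ∈ Sys (RtStep k) s | x.length = k * (t + 2)} with hS
  -- the injection from vectors
  let g : List.Vector Bool t → List A := fun v => Wenc s (false :: true :: v.toList)
  have hginj : Function.Injective g := by
    intro v v' h
    have := Wenc_inj hrev h
    simp only [List.cons.injEq, true_and] at this
    exact List.Vector.toList_injective this
  have hmem : ∀ v : List.Vector Bool t, g v ∈ S := by
    intro v
    constructor
    · -- reachability
      have h1 : Relation.ReflTransGen InsStep [false] (false :: true :: v.toList) := by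
        have := ins_reach v.toList [] false
        simpa using this
      have h2 : Relation.ReflTransGen (RtStep k) (Wenc s [false])
          (Wenc s (false :: true :: v.toList)) :=
        Relation.ReflTransGen.lift (Wenc s) (fun a b h => Wenc_step hs h) _ _ h1
      have h3 : Wenc s [false] = s := by simp [Wenc]
      rw [h3] at h2
      exact h2
    · -- length
      show (g v).length = k * (t + 2)
      rw [show g v = Wenc s (false :: true :: v.toList) from rfl, Wenc_length, hs]
      simp only [List.length_cons, List.Vector.toList_length]
  have hfin : S.Finite := by
    apply Set.Finite.subset (List.finite_length_eq A (k * (t + 2)))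
    intro x hx
    exact hx.2
  let F : Finset (List A) := Finset.univ.image g
  have hcardF : F.card = 2 ^ t := by
    rw [Finset.card_image_of_injective _ hginj, Finset.card_univ, card_vector,
      Fintype.card_bool]
  have hsub : (F : Set (List A)) ⊆ S := by
    intro x hx
    simp only [F, Finset.coe_image, Set.mem_image] at hx
    obtain ⟨v, _, rfl⟩ := hx
    exact hmem v
  calc (2 : ℕ) ^ t = (F : Set (List A)).ncard := by
        rw [Set.ncard_coe_finset, hcardF]
    _ ≤ S.ncard := Set.ncard_le_ncard hsub hfin

/-- Upper bound on the number of words of any length. -/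
lemma count_upper {A : Type*} [Fintype A] [DecidableEq A] (S : Set (List A)) (n : ℕ) :
    ({x ∈ S | x.length = n} : Set (List A)).ncard ≤ Fintype.card A ^ n := by
  classical
  have hsub : ({x ∈ S | x.length = n} : Set (List A)) ⊆ {l : List A | l.length = n} :=
    fun x hx => hx.2
  have hfin : ({l : List A | l.length = n} : Set (List A)).Finite := List.finite_length_eq A n
  refine le_trans (Set.ncard_le_ncard hsub hfin) ?_
  have hset : ({l : List A | l.length = n} : Set (List A)) =
      ↑((Finset.univ : Finset (List.Vector A n)).image List.Vector.toList) := by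
    ext l
    simp only [Set.mem_setOf_eq, Finset.coe_image, Set.mem_image, Finset.mem_coe,
      Finset.mem_univ, Finset.coe_univ, Set.image_univ, Set.mem_range]
    constructor
    · intro h; exact ⟨⟨l, h⟩, rfl⟩
    · rintro ⟨v, rfl⟩; exact v.toList_length
  rw [hset, Set.ncard_coe_finset,
    Finset.card_image_of_injective _ List.Vector.toList_injective,
    Finset.card_univ, card_vector]

theorem stmt10 {A : Type*} [Fintype A] [DecidableEq A] (k : ℕ)
    (s : List A) (hs : s.length = k) (hrev : s ≠ s.reverse) :
    (1 : ℝ) / k ≤ cap (Sys (RtStep k) s) := by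
  classical
  have hsne : s ≠ [] := fun h => hrev (by simp [h])
  have hk : 1 ≤ k := by
    rw [← hs]
    exact List.length_pos_iff.mpr hsne
  have hkR : (1 : ℝ) ≤ (k : ℝ) := by exact_mod_cast hk
  have hkpos : (0 : ℝ) < k := lt_of_lt_of_le zero_lt_one hkR
  set f : ℕ → ℝ := fun n =>
    Real.logb 2 (({x ∈ Sys (RtStep k) s | x.length = n} : Set (List A)).ncard) / n with hf
  -- f is bounded above
  haveI hAne : Nonempty A := by
    cases s with
    | nil => exact absurd rfl hsne
    | cons a _ => exact ⟨a⟩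
  have hAcard : 1 ≤ Fintype.card A := Fintype.card_pos
  have hbdd : IsBoundedUnder (· ≤ ·) atTop f := by
    refine isBoundedUnder_of ⟨max 0 (Real.logb 2 (Fintype.card A)), fun n => ?_⟩
    simp only [hf]
    rcases Nat.eq_zero_or_pos n with hn | hn
    · subst hn; simp
    by_cases hz :
        (({x ∈ Sys (RtStep k) s | x.length = n} : Set (List A)).ncard : ℝ) = 0
    · rw [hz]; simp
    have hz1 : (1 : ℝ) ≤
        (({x ∈ Sys (RtStep k) s | x.length = n} : Set (List A)).ncard : ℝ) := by
      have : 1 ≤ ({x ∈ Sys (RtStep k) s | x.length = n} : Set (List A)).ncard :=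
        Nat.one_le_iff_ne_zero.mpr (fun h0 => hz (by rw [h0]; simp))
      exact_mod_cast this
    have hub := count_upper (Sys (RtStep k) s) (A := A) n
    have hubR : (({x ∈ Sys (RtStep k) s | x.length = n} : Set (List A)).ncard : ℝ)
        ≤ ((Fintype.card A : ℝ)) ^ n := by exact_mod_cast hub
    have hlog : Real.logb 2
          (({x ∈ Sys (RtStep k) s | x.length = n} : Set (List A)).ncard)
        ≤ n * Real.logb 2 (Fintype.card A) := by
      calc Real.logb 2 (({x ∈ Sys (RtStep k) s | x.length = n} : Set (List A)).ncard)
          ≤ Real.logb 2 ((Fintype.card A : ℝ) ^ n) :=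
            Real.logb_le_logb_of_le one_lt_two (by linarith) hubR
        _ = n * Real.logb 2 (Fintype.card A) := Real.logb_pow 2 _ n
    have hnpos : (0 : ℝ) < n := by exact_mod_cast hn
    have : Real.logb 2
          (({x ∈ Sys (RtStep k) s | x.length = n} : Set (List A)).ncard) / n
        ≤ Real.logb 2 (Fintype.card A) := by
      rw [div_le_iff₀ hnpos]
      linarith [hlog]
    exact le_max_of_le_right this
  -- the main inequality via frequently
  rw [show cap (Sys (RtStep k) s) = limsup f atTop from rfl]
  refine le_of_forall_lt fun c hc => ?_
  obtain ⟨c', hcc', hc'⟩ := exists_between hc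
  have hcle : c' ≤ limsup f atTop := by
    refine le_limsup_of_frequently_le ?_ hbdd
    rw [frequently_atTop]
    intro N
    -- choose t large
    have hck : c' * k < 1 := by
      rcases le_or_gt c' 0 with h | h
      · nlinarith
      · calc c' * k < (1 / k) * k := by
              exact mul_lt_mul_of_pos_right hc' hkpos
          _ = 1 := by field_simp
    obtain ⟨T, hT⟩ := exists_nat_ge (2 * c' * k / (1 - c' * k))
    set t := max N T with ht
    refine ⟨k * (t + 2), ?_, ?_⟩
    · calc N ≤ t := le_max_left _ _
        _ ≤ k * (t + 2) := by nlinarith [hk]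
    · -- c' ≤ f (k*(t+2))
      set n := k * (t + 2) with hn
      have hcount := count_lower hs hrev t
      have hcountR : ((2 : ℝ)) ^ t ≤
          (({x ∈ Sys (RtStep k) s | x.length = n} : Set (List A)).ncard : ℝ) := by
        exact_mod_cast hcount
      have hlog : (t : ℝ) ≤ Real.logb 2
          (({x ∈ Sys (RtStep k) s | x.length = n} : Set (List A)).ncard) := by
        calc (t : ℝ) = Real.logb 2 ((2 : ℝ) ^ t) := by
              rw [Real.logb_pow, Real.logb_self_eq_one one_lt_two]
              ring
          _ ≤ _ := Real.logb_le_logb_of_le one_lt_two (by positivity) hcountR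
      have hnR : (n : ℝ) = (k : ℝ) * ((t : ℝ) + 2) := by
        rw [hn]; push_cast; ring
      have hnpos : (0 : ℝ) < n := by
        rw [hnR]; positivity
      have h1 : (t : ℝ) / n ≤ f n := by
        exact div_le_div_of_nonneg_right hlog hnpos.le
      have h2 : c' ≤ (t : ℝ) / n := by
        rcases le_or_gt c' 0 with h | h
        · exact le_trans h (by positivity)
        · rw [le_div_iff₀ hnpos, hnR]
          have htT : (T : ℝ) ≤ (t : ℝ) := by exact_mod_cast le_max_right N T
          have hT' : 2 * c' * k / (1 - c' * k) ≤ (t : ℝ) := le_trans hT htT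
          have hpos : (0 : ℝ) < 1 - c' * k := by linarith
          rw [div_le_iff₀ hpos] at hT'
          nlinarith
      linarith
  linarith
end

section
/- The language S = s·rev(s)·{s, rev(s)}* (all concatenations of blocks s and rev(s) beginning with s rev(s)) is contained in the reversed-tandem-replication system S^rt_k(s), where s ∈ Σ^k; moreover if s ≠ rev(s) this language has exactly 2^{m−2} words of length mk for each m ≥ 2. -/
open Filter

section Aux

variable {A : Type*} [DecidableEq A]

omit [DecidableEq A] in
lemma flatten_map_inj {k : ℕ} (g : Bool → List A)
    (hlen : ∀ b, (g b).length = k) (hg : g true ≠ g false) :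
    ∀ l1 l2 : List Bool, l1.length = l2.length →
      (l1.map g).flatten = (l2.map g).flatten → l1 = l2 := by
  intro l1
  induction l1 with
  | nil => intro l2 h _; exact (List.length_eq_zero_iff.mp h.symm).symm
  | cons a t ih =>
    intro l2 h hf
    cases l2 with
    | nil => simp at h
    | cons b t2 =>
      simp only [List.map_cons, List.flatten_cons] at hf
      have hab : g a = g b ∧ (t.map g).flatten = (t2.map g).flatten :=
        List.append_inj hf (by rw [hlen, hlen])
      have : a = b := by
        cases a <;> cases b <;> simp_all
      subst this
      simp only [List.length_cons, Nat.succ_inj] at h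
      rw [ih t2 h hab.2]

end Aux

theorem stmt11 {A : Type*} [Fintype A] [DecidableEq A] (k : ℕ)
    (s : List A) (hs : s.length = k) :
    ({x : List A | ∃ l : List (List A),
        (∀ b ∈ l, b = s ∨ b = s.reverse) ∧ x = s ++ s.reverse ++ l.flatten} : Set (List A))
      ⊆ Sys (RtStep k) s ∧
    (s ≠ s.reverse → ∀ m : ℕ, 2 ≤ m →
      ({x : List A | (∃ l : List (List A),
          (∀ b ∈ l, b = s ∨ b = s.reverse) ∧ x = s ++ s.reverse ++ l.flatten) ∧
          x.length = m * k} : Set (List A)).ncard = 2 ^ (m - 2)) := by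
  constructor
  · -- inclusion
    rintro x ⟨l, hl, rfl⟩
    induction l with
    | nil =>
      exact Relation.ReflTransGen.single ⟨[], s, [], hs, by simp, by simp⟩
    | cons b t ih =>
      have ht : Relation.ReflTransGen (RtStep k) s (s ++ s.reverse ++ t.flatten) :=
        ih (fun c hc => hl c (List.mem_cons_of_mem _ hc))
      refine ht.tail ?_
      rcases hl b List.mem_cons_self with rfl | rfl
      · exact ⟨b, b.reverse, t.flatten, by simp [hs], by simp, by simp⟩
      · exact ⟨[], s, s.reverse ++ t.flatten, hs, by simp, by simp⟩
  · -- counting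
    intro hsr m hm
    have hk : 0 < k := by
      rcases Nat.eq_zero_or_pos k with h0 | h0
      · exfalso
        apply hsr
        have : s = [] := List.length_eq_zero_iff.mp (hs.trans h0)
        simp [this]
      · exact h0
    set g : Bool → List A := fun b => if b then s else s.reverse with hg
    have hglen : ∀ b, (g b).length = k := by
      intro b; cases b <;> simp [hg, hs]
    have hgne : g true ≠ g false := by simpa [hg] using hsr
    set F : List.Vector Bool (m - 2) → List A :=
      fun v => s ++ s.reverse ++ (v.toList.map g).flatten with hF
    have hFlen : ∀ v, (F v).length = m * k := by
      intro v
      have : ((v.toList.map g).flatten).length = (m - 2) * k := by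
        rw [List.length_flatten]
        rw [List.map_map]
        have : (List.map (List.length ∘ g) v.toList) = List.map (fun _ => k) v.toList := by
          apply List.map_congr_left
          intro b _; exact hglen b
        rw [this, List.map_const', List.sum_replicate, smul_eq_mul, v.toList_length]
      simp only [hF, List.length_append, this, hs, List.length_reverse]
      have : 2 + (m - 2) = m := by omega
      nlinarith [this]
    have hset : ({x : List A | (∃ l : List (List A),
          (∀ b ∈ l, b = s ∨ b = s.reverse) ∧ x = s ++ s.reverse ++ l.flatten) ∧
          x.length = m * k} : Set (List A)) = Set.range F := by
      ext x
      constructor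
      · rintro ⟨⟨l, hl, rfl⟩, hlen⟩
        have hflat : l.flatten.length = l.length * k := by
          rw [List.length_flatten]
          have : l.map List.length = l.map (fun _ => k) := by
            apply List.map_congr_left
            intro b hb
            rcases hl b hb with rfl | rfl <;> simp [hs]
          rw [this, List.map_const', List.sum_replicate, smul_eq_mul]
        have hll : l.length = m - 2 := by
          simp only [List.length_append, hflat, hs, List.length_reverse] at hlen
          have h2 : (2 + l.length) * k = m * k := by
            calc (2 + l.length) * k = k + k + l.length * k := by ring
              _ = m * k := hlen
          have := Nat.eq_of_mul_eq_mul_right hk h2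
          omega
        refine ⟨⟨l.map (fun b => decide (b = s)), by simp [hll]⟩, ?_⟩
        simp only [hF, List.Vector.toList_mk]
        congr 1
        rw [List.map_map]
        have : List.map (g ∘ fun b => decide (b = s)) l = List.map id l := by
          apply List.map_congr_left
          intro b hb
          simp only [Function.comp, id]
          rcases hl b hb with rfl | rfl
          · simp [hg]
          · have hne : s.reverse ≠ s := fun h => hsr h.symm
            simp [hg, hne]
        rw [this, List.map_id]
      · rintro ⟨v, rfl⟩
        exact ⟨⟨v.toList.map g, by
          intro b hb
          rcases List.mem_map.mp hb with ⟨c, _, rfl⟩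
          cases c <;> simp [hg], rfl⟩, hFlen v⟩
    have hFinj : Function.Injective F := by
      intro v1 v2 h
      apply List.Vector.toList_injective
      apply flatten_map_inj g hglen hgne _ _ (by simp)
      simpa [hF] using h
    rw [hset, ← Nat.card_coe_set_eq, Nat.card_range_of_injective hFinj,
      Nat.card_eq_fintype_card, card_vector, Fintype.card_bool]
end

section
/- Let s ∈ Σ^k with s = rev(s), and let N(n) = |S^rt_k(s) ∩ Σⁿ|. Then for all positive integers p, q: N(pqk) ≥ N(pk)^q. -/
open Filter

section Aux

variable {A : Type*}

lemma reach_append_self' {k : ℕ} {s : List A} (hs : s.length = k) (hrev : s = s.reverse)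
    {x : List A} (hx : x ∈ Sys (RtStep k) s) : x ++ s ∈ Sys (RtStep k) s := by
  induction hx with
  | refl =>
    exact Relation.ReflTransGen.single
      ⟨[], s, [], hs, by simp, by simp [← hrev]⟩
  | tail _ hbc ih =>
    obtain ⟨u, v, w, hv, h1, h2⟩ := hbc
    exact ih.tail ⟨u, v, w ++ s, hv, by simp [h1], by simp [h2]⟩

lemma reach_concat {k : ℕ} {s : List A} (hs : s.length = k) (hrev : s = s.reverse)
    {x y : List A} (hx : x ∈ Sys (RtStep k) s) (hy : y ∈ Sys (RtStep k) s) :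
    x ++ y ∈ Sys (RtStep k) s := by
  induction hy with
  | refl => exact reach_append_self' hs hrev hx
  | tail _ hbc ih =>
    obtain ⟨u, v, w, hv, h1, h2⟩ := hbc
    exact ih.tail ⟨x ++ u, v, w, hv, by simp [h1], by simp [h2]⟩

lemma finite_length_eq [Fintype A] (n : ℕ) : {l : List A | l.length = n}.Finite := by
  apply (Set.finite_range (List.ofFn : (Fin n → A) → List A)).subset
  rintro l (hl : l.length = n)
  exact ⟨fun i => l[(i : ℕ)]'(by omega), by apply List.ext_getElem <;> simp [hl]⟩

end Aux

lemma ncard_concat_le {A : Type*} [Fintype A] {k : ℕ} {s : List A}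
    (hs : s.length = k) (hrev : s = s.reverse) (a b : ℕ) :
    ({x ∈ Sys (RtStep k) s | x.length = a} : Set (List A)).ncard *
      ({x ∈ Sys (RtStep k) s | x.length = b} : Set (List A)).ncard ≤
      ({x ∈ Sys (RtStep k) s | x.length = a + b} : Set (List A)).ncard := by
  set Sa := ({x ∈ Sys (RtStep k) s | x.length = a} : Set (List A)) with hSa
  set Sb := ({x ∈ Sys (RtStep k) s | x.length = b} : Set (List A)) with hSb
  set Sab := ({x ∈ Sys (RtStep k) s | x.length = a + b} : Set (List A)) with hSab
  haveI : Finite ↥Sab :=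
    ((finite_length_eq (a + b)).subset (fun x hx => hx.2)).to_subtype
  have hf : ∀ z : ↥Sa × ↥Sb, z.1.1 ++ z.2.1 ∈ Sab := by
    rintro ⟨⟨x, hx1, hx2⟩, ⟨y, hy1, hy2⟩⟩
    exact ⟨reach_concat hs hrev hx1 hy1, by simp [hx2, hy2]⟩
  have hinj : Function.Injective (fun z : ↥Sa × ↥Sb => (⟨z.1.1 ++ z.2.1, hf z⟩ : ↥Sab)) := by
    rintro ⟨⟨x1, hx1⟩, ⟨y1, hy1⟩⟩ ⟨⟨x2, hx2⟩, ⟨y2, hy2⟩⟩ h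
    simp only [Subtype.mk.injEq] at h
    obtain ⟨h1, h2⟩ := List.append_inj h (by rw [hx1.2, hx2.2])
    simp [Prod.ext_iff, Subtype.ext_iff, h1, h2]
  calc Sa.ncard * Sb.ncard = Nat.card (↥Sa × ↥Sb) := by
        rw [Nat.card_prod, Nat.card_coe_set_eq, Nat.card_coe_set_eq]
    _ ≤ Nat.card ↥Sab := Nat.card_le_card_of_injective _ hinj
    _ = Sab.ncard := Nat.card_coe_set_eq Sab

theorem stmt16 {A : Type*} [Fintype A] [DecidableEq A] (k : ℕ)
    (s : List A) (hs : s.length = k) (hrev : s = s.reverse)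
    (p q : ℕ) (hp : 1 ≤ p) (hq : 1 ≤ q) :
    ({x ∈ Sys (RtStep k) s | x.length = p * k} : Set (List A)).ncard ^ q ≤
      ({x ∈ Sys (RtStep k) s | x.length = p * q * k} : Set (List A)).ncard := by
  induction q, hq using Nat.le_induction with
  | base => simp [mul_one]
  | succ n hn ih =>
    have key := ncard_concat_le hs hrev (p * n * k) (p * k)
    have heq : p * n * k + p * k = p * (n + 1) * k := by ring
    rw [heq] at key
    calc ({x ∈ Sys (RtStep k) s | x.length = p * k} : Set (List A)).ncard ^ (n + 1)
        = ({x ∈ Sys (RtStep k) s | x.length = p * k} : Set (List A)).ncard ^ n *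
          ({x ∈ Sys (RtStep k) s | x.length = p * k} : Set (List A)).ncard := pow_succ _ _
      _ ≤ ({x ∈ Sys (RtStep k) s | x.length = p * n * k} : Set (List A)).ncard *
          ({x ∈ Sys (RtStep k) s | x.length = p * k} : Set (List A)).ncard :=
            Nat.mul_le_mul_right _ ih
      _ ≤ _ := key
end
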